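/- arXiv:0911.2484 — 5 statements merged into one kernel-verified Lean document; each statement's English description precedes it below -/
import Mathlib

section
/- For any integer n > 1 and any vector of probabilities π = (π_2, …, π_{n−1}) with π_i ∈ [0,1], consider the nearest-neighbour Markov chain on {1,…,n} with reflecting barriers and transition probabilities π. Then E[T_{1,n}] + E[T_{n,1}] ≥ 2(n−1)², where E[T_{i,j}] denotes the expected hitting time of state j starting from state i (this expectation may be +∞). -/
open MeasureTheory ENNReal Finset

noncomputable section

/-- `μ` is the law of the time-homogeneous Markov chain on the state space `S` with
one-step transition probabilities `p` and initial state `s`, described through the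
probabilities of all cylinder events. -/
def IsMarkovChain {S : Type*} [MeasurableSpace S] [DecidableEq S] (p : S → S → ℝ≥0∞) (s : S)
    (μ : MeasureTheory.Measure (ℕ → S)) : Prop :=
  MeasureTheory.IsProbabilityMeasure μ ∧
    ∀ (T : ℕ) (path : ℕ → S),
      μ {ω | ∀ t ≤ T, ω t = path t} =
        (if path 0 = s then 1 else 0) * ∏ t ∈ Finset.range T, p (path t) (path (t + 1))

/-- The first *positive* hitting time `min {t > 0 : ω t = j}` of the state `j`
along the trajectory `ω`, viewed in `ℝ≥0∞` (it is `∞` if `j` is never hit). -/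
def hitTime {S : Type*} (j : S) (ω : ℕ → S) : ℝ≥0∞ :=
  sInf ((fun t : ℕ => (t : ℝ≥0∞)) '' {t | 0 < t ∧ ω t = j})

/-- The expected hitting time `E[T_{·,j}]` of state `j` under the trajectory law `μ`
(possibly `+∞`). -/
def expHit {S : Type*} [MeasurableSpace S] (μ : MeasureTheory.Measure (ℕ → S)) (j : S) :
    ℝ≥0∞ :=
  ∫⁻ ω, hitTime j ω ∂μ

/-- Transition probabilities of the nearest-neighbour Markov chain on `{a, …, b} ⊆ ℤ`
with reflecting barriers at `a` and `b`: from `a` go to `a+1`, from `b` go to `b-1`,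
and from an interior state `i` go to `i+1` with probability `π i` and to `i-1` with
probability `1 - π i`. -/
def nnTrans (a b : ℤ) (π : ℤ → ℝ≥0∞) : ℤ → ℤ → ℝ≥0∞ := fun i j =>
  if i = a then (if j = a + 1 then 1 else 0)
  else if i = b then (if j = b - 1 then 1 else 0)
  else if a < i ∧ i < b then
    (if j = i + 1 then π i else if j = i - 1 then 1 - π i else 0)
  else 0

def G (q : ℤ → ℤ → ℝ≥0∞) (j : ℤ) (h : ℤ → ℝ≥0∞) : ℕ → ℤ → ℝ≥0∞ :=
  fun t s => ∑' g : Fin (t+1) → ℤ,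
    if g 0 = s ∧ ∀ u, u ≠ 0 → g u ≠ j then
      (∏ u : Fin t, q (g u.castSucc) (g u.succ)) * h (g (Fin.last t))
    else 0

lemma G_zero (q : ℤ → ℤ → ℝ≥0∞) (j : ℤ) (h : ℤ → ℝ≥0∞) (s : ℤ) :
    G q j h 0 s = h s := by
  rw [G, ← Equiv.tsum_eq (Equiv.funUnique (Fin 1) ℤ).symm]
  have : ∀ z : ℤ, (if z = s then h z else 0) =
      (if ((Equiv.funUnique (Fin 1) ℤ).symm z) 0 = s ∧
          (∀ u : Fin 1, u ≠ 0 → ((Equiv.funUnique (Fin 1) ℤ).symm z) u ≠ j) then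
        (∏ u : Fin 0, q (((Equiv.funUnique (Fin 1) ℤ).symm z) u.castSucc)
          (((Equiv.funUnique (Fin 1) ℤ).symm z) u.succ)) *
          h (((Equiv.funUnique (Fin 1) ℤ).symm z) (Fin.last 0))
      else 0) := by
    intro z
    simp [Equiv.funUnique, Fin.eq_zero]
  rw [← tsum_congr this, tsum_eq_single s (by intro z hz; simp [hz])]
  simp

lemma G_rec (q : ℤ → ℤ → ℝ≥0∞) (j : ℤ) (h : ℤ → ℝ≥0∞) (t : ℕ) (s : ℤ) :
    G q j h (t+1) s = ∑' y : ℤ, (if y = j then 0 else q s y * G q j h t y) := by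
  have main : G q j h (t+1) s =
      ∑' g : Fin (t+1) → ℤ, (if ∀ u, g u ≠ j then
        q s (g 0) * ((∏ u : Fin t, q (g u.castSucc) (g u.succ)) * h (g (Fin.last t)))
      else 0) := by
    rw [G, ← Equiv.tsum_eq (Fin.consEquiv (fun _ : Fin (t+2) => ℤ)),
      Summable.tsum_prod' ENNReal.summable (fun _ => ENNReal.summable)]
    have key : ∀ (z : ℤ) (g : Fin (t+1) → ℤ),
        (if (Fin.cons z g : Fin (t+2) → ℤ) 0 = s ∧
            (∀ u : Fin (t+2), u ≠ 0 → (Fin.cons z g : Fin (t+2) → ℤ) u ≠ j) then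
          (∏ u : Fin (t+1), q ((Fin.cons z g : Fin (t+2) → ℤ) u.castSucc)
            ((Fin.cons z g : Fin (t+2) → ℤ) u.succ)) *
            h ((Fin.cons z g : Fin (t+2) → ℤ) (Fin.last (t+1)))
        else 0) =
        (if z = s then 1 else 0) *
          (if (∀ u : Fin (t+1), g u ≠ j) then
            q z (g 0) * ((∏ u : Fin t, q (g u.castSucc) (g u.succ)) * h (g (Fin.last t)))
          else 0) := by
      intro z g
      have havd : (∀ u : Fin (t+2), u ≠ 0 → (Fin.cons z g : Fin (t+2) → ℤ) u ≠ j) ↔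
          (∀ u : Fin (t+1), g u ≠ j) := by
        constructor
        · intro H u
          have := H u.succ (Fin.succ_ne_zero u)
          simpa using this
        · intro H u hu
          obtain ⟨v, rfl⟩ := Fin.eq_succ_of_ne_zero hu
          simpa using H v
      have hprod : (∏ u : Fin (t+1), q ((Fin.cons z g : Fin (t+2) → ℤ) u.castSucc)
            ((Fin.cons z g : Fin (t+2) → ℤ) u.succ)) =
          q z (g 0) * ∏ u : Fin t, q (g u.castSucc) (g u.succ) := by
        rw [Fin.prod_univ_succ]
        refine congrArg₂ (· * ·) (by simp) (Finset.prod_congr rfl fun u _ => ?_)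
        rw [← Fin.succ_castSucc, Fin.cons_succ, Fin.cons_succ]
      have hlast : (Fin.cons z g : Fin (t+2) → ℤ) (Fin.last (t+1)) = g (Fin.last t) := by
        rw [← Fin.succ_last, Fin.cons_succ]
      have hc0 : (Fin.cons z g : Fin (t+2) → ℤ) 0 = z := rfl
      rw [hc0, hprod, hlast]
      simp only [havd]
      by_cases hz : z = s <;> by_cases hav : (∀ u : Fin (t+1), g u ≠ j) <;>
        simp [hz, hav, mul_assoc]
    have : ∀ z : ℤ, (∑' g : Fin (t+1) → ℤ,
        (if ((Fin.consEquiv (fun _ : Fin (t+2) => ℤ)) (z, g)) 0 = s ∧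
            (∀ u : Fin (t+2), u ≠ 0 → ((Fin.consEquiv (fun _ : Fin (t+2) => ℤ)) (z, g)) u ≠ j) then
          (∏ u : Fin (t+1), q (((Fin.consEquiv (fun _ : Fin (t+2) => ℤ)) (z, g)) u.castSucc)
            (((Fin.consEquiv (fun _ : Fin (t+2) => ℤ)) (z, g)) u.succ)) *
            h (((Fin.consEquiv (fun _ : Fin (t+2) => ℤ)) (z, g)) (Fin.last (t+1)))
        else 0)) =
        (if z = s then 1 else 0) * ∑' g : Fin (t+1) → ℤ,
          (if (∀ u : Fin (t+1), g u ≠ j) then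
            q z (g 0) * ((∏ u : Fin t, q (g u.castSucc) (g u.succ)) * h (g (Fin.last t)))
          else 0) := by
      intro z
      rw [← ENNReal.tsum_mul_left]
      exact tsum_congr fun g => key z g
    rw [tsum_congr this, tsum_eq_single s (by intro z hz; simp [hz])]
    simp
  rw [main]
  -- now rework the RHS
  have hrhs : ∀ y : ℤ, (if y = j then 0 else q s y * G q j h t y) =
      ∑' g : Fin (t+1) → ℤ, (if y = j then 0 else
        if g 0 = y ∧ ∀ u, u ≠ 0 → g u ≠ j then
          q s y * ((∏ u : Fin t, q (g u.castSucc) (g u.succ)) * h (g (Fin.last t)))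
        else 0) := by
    intro y
    by_cases hy : y = j
    · simp [hy]
    · simp only [hy, if_false, G, ← ENNReal.tsum_mul_left]
      exact tsum_congr fun g => by by_cases hc : g 0 = y ∧ ∀ u, u ≠ 0 → g u ≠ j <;>
        simp [hc, mul_assoc]
  rw [tsum_congr hrhs, ENNReal.tsum_comm]
  refine tsum_congr fun g => ?_
  rw [tsum_eq_single (g 0) (by
    intro y hy
    by_cases h1 : y = j
    · simp [h1]
    · simp only [h1, if_false]
      rw [if_neg]
      rintro ⟨h2, -⟩
      exact hy h2.symm)]
  by_cases hj0 : g 0 = j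
  · have : ¬ (∀ u : Fin (t+1), g u ≠ j) := fun H => H 0 hj0
    simp [hj0, this]
  · have hiff : (∀ u : Fin (t+1), g u ≠ j) ↔ (∀ u : Fin (t+1), u ≠ 0 → g u ≠ j) := by
      constructor
      · intro H u _; exact H u
      · intro H u
        by_cases hu : u = 0
        · subst hu; exact hj0
        · exact H u hu
    by_cases hav : ∀ u : Fin (t+1), u ≠ 0 → g u ≠ j
    · simp [hj0, hav, hiff]
    · simp [hj0, hav, hiff]

/-- The event of avoiding state `j` at all positive times up to `t`. -/
def Avoid (j : ℤ) (t : ℕ) : Set (ℕ → ℤ) := {ω | ∀ u : ℕ, 0 < u → u ≤ t → ω u ≠ j}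

lemma measurable_avoid (j : ℤ) (t : ℕ) : MeasurableSet (Avoid j t) := by
  have : Avoid j t = ⋂ (u : ℕ), ⋂ (_ : 0 < u), ⋂ (_ : u ≤ t),
      (fun ω : ℕ → ℤ => ω u) ⁻¹' ({j}ᶜ) := by
    ext ω; simp [Avoid]
  rw [this]
  exact MeasurableSet.iInter fun u => MeasurableSet.iInter fun _ =>
    MeasurableSet.iInter fun _ =>
      (measurable_pi_apply u) (measurableSet_singleton j).compl

lemma mu_avoid {q : ℤ → ℤ → ℝ≥0∞} {s : ℤ} {μ : Measure (ℕ → ℤ)}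
    (hμ : IsMarkovChain q s μ) (j : ℤ) (t : ℕ) :
    μ (Avoid j t) = G q j 1 t s := by
  classical
  set B : (Fin (t+1) → ℤ) → Set (ℕ → ℤ) := fun g =>
    if (∀ u : Fin (t+1), u ≠ 0 → g u ≠ j) then {ω | ∀ u : Fin (t+1), ω u = g u} else ∅
    with hB
  have hcylmeas : ∀ g : Fin (t+1) → ℤ, MeasurableSet {ω : ℕ → ℤ | ∀ u : Fin (t+1), ω u = g u} := by
    intro g
    have : {ω : ℕ → ℤ | ∀ u : Fin (t+1), ω u = g u} =
        ⋂ u : Fin (t+1), (fun ω : ℕ → ℤ => ω (u : ℕ)) ⁻¹' {g u} := by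
      ext ω; simp
    rw [this]
    exact MeasurableSet.iInter fun u =>
      (measurable_pi_apply _) (measurableSet_singleton _)
  have hmeas : ∀ g : Fin (t+1) → ℤ, MeasurableSet (B g) := by
    intro g
    rw [hB]
    dsimp only
    split
    · exact hcylmeas g
    · exact MeasurableSet.empty
  have hdisj : Pairwise (Function.onFun Disjoint B) := by
    intro g g' hgg'
    rw [Function.onFun, Set.disjoint_left]
    intro ω hω hω'
    rw [hB] at hω hω'
    dsimp only at hω hω'
    split at hω
    · split at hω'
      · exact hgg' (funext fun u => (hω u).symm.trans (hω' u))
      · exact hω'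
    · exact hω
  have hAeq : Avoid j t = ⋃ g, B g := by
    ext ω
    constructor
    · intro hω
      refine Set.mem_iUnion.2 ⟨fun u => ω u, ?_⟩
      rw [hB]
      dsimp only
      rw [if_pos (fun (u : Fin (t+1)) hu => hω u (Nat.pos_of_ne_zero (fun h => hu (Fin.ext h)))
        (Nat.lt_succ_iff.mp u.isLt))]
      exact fun u => rfl
    · intro hω
      obtain ⟨g, hg⟩ := Set.mem_iUnion.1 hω
      rw [hB] at hg
      dsimp only at hg
      split at hg
      · rename_i hcond
        intro u hu0 hut
        have h1 : ω u = g ⟨u, by omega⟩ := by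
          have := hg ⟨u, by omega⟩
          simpa using this
        rw [h1]
        exact hcond ⟨u, by omega⟩ (by simp [Fin.ext_iff]; omega)
      · exact absurd hg (Set.notMem_empty ω)
  have hcyl : ∀ g : Fin (t+1) → ℤ,
      μ {ω : ℕ → ℤ | ∀ u : Fin (t+1), ω u = g u} =
        (if g 0 = s then 1 else 0) * ∏ u : Fin t, q (g u.castSucc) (g u.succ) := by
    intro g
    have hlt : ∀ v : ℕ, min v t < t + 1 := fun v => by omega
    set path : ℕ → ℤ := fun v => g ⟨min v t, hlt v⟩ with hpath
    have hset : {ω : ℕ → ℤ | ∀ u : Fin (t+1), ω u = g u} =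
        {ω : ℕ → ℤ | ∀ u ≤ t, ω u = path u} := by
      ext ω
      constructor
      · intro hω u hu
        have h := hω ⟨u, by omega⟩
        have e : (⟨min u t, hlt u⟩ : Fin (t+1)) = ⟨u, by omega⟩ :=
          Fin.ext (by simp [Nat.min_eq_left hu])
        rw [hpath]
        dsimp only
        rw [e]
        exact h
      · intro hω u
        have h := hω (u:ℕ) (Nat.lt_succ_iff.mp u.isLt)
        rw [hpath] at h
        dsimp only at h
        have e : (⟨min (u:ℕ) t, hlt u⟩ : Fin (t+1)) = u :=
          Fin.ext (by simp [Nat.min_eq_left (Nat.lt_succ_iff.mp u.isLt)])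
        rw [e] at h
        exact h
    rw [hset, hμ.2 t path]
    have e0 : path 0 = g 0 := congrArg g (Fin.ext (by simp))
    have eprod : ∏ u ∈ Finset.range t, q (path u) (path (u+1)) =
        ∏ u : Fin t, q (g u.castSucc) (g u.succ) := by
      rw [← Fin.prod_univ_eq_prod_range (fun v => q (path v) (path (v+1))) t]
      refine Finset.prod_congr rfl fun u _ => ?_
      have e1 : path (u : ℕ) = g u.castSucc :=
        congrArg g (Fin.ext (by simp [Nat.min_eq_left (le_of_lt u.isLt)]))
      have e2 : path ((u : ℕ)+1) = g u.succ :=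
        congrArg g (Fin.ext (by simp [Nat.min_eq_left (Nat.succ_le_of_lt u.isLt)]))
      rw [e1, e2]
    rw [e0, eprod]
  rw [hAeq, measure_iUnion hdisj hmeas, G]
  apply tsum_congr
  intro g
  rw [hB]
  dsimp only
  split
  · rename_i hcond
    by_cases h0 : g 0 = s
    · rw [hcyl g, if_pos h0, if_pos ⟨h0, hcond⟩, one_mul, Pi.one_apply, mul_one]
    · rw [hcyl g, if_neg h0, if_neg (fun hcc => h0 hcc.1), zero_mul]
  · rename_i hcond
    rw [if_neg (fun hcc => hcond hcc.2)]
    exact measure_empty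

lemma tsum_G_le_expHit {q : ℤ → ℤ → ℝ≥0∞} {s : ℤ} {μ : Measure (ℕ → ℤ)}
    (hμ : IsMarkovChain q s μ) (j : ℤ) :
    ∑' t : ℕ, G q j 1 t s ≤ expHit μ j := by
  classical
  have hpt : ∀ ω : ℕ → ℤ, (∑' t : ℕ, (Avoid j t).indicator (1 : (ℕ → ℤ) → ℝ≥0∞) ω)
      ≤ hitTime j ω := by
    intro ω
    by_cases hne : ∃ u : ℕ, 0 < u ∧ ω u = j
    · set t₀ := Nat.find hne with ht₀
      have ht₀mem : 0 < t₀ ∧ ω t₀ = j := Nat.find_spec hne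
      have hmem : ∀ t : ℕ, ω ∈ Avoid j t ↔ t < t₀ := by
        intro t
        constructor
        · intro h
          by_contra hlt
          exact h t₀ ht₀mem.1 (by omega) ht₀mem.2
        · intro h u hu0 hut
          intro hj
          have := Nat.find_min' hne ⟨hu0, hj⟩
          omega
      have : (∑' t : ℕ, (Avoid j t).indicator (1 : (ℕ → ℤ) → ℝ≥0∞) ω) = t₀ := by
        rw [tsum_eq_sum (s := Finset.range t₀) (by
          intro t ht
          rw [Set.indicator_apply, if_neg]
          rw [hmem]
          simpa using ht)]
        rw [Finset.sum_congr rfl (fun t ht => by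
          rw [Set.indicator_apply, if_pos]
          rw [hmem]
          simpa using ht)]
        simp
      rw [this]
      rw [hitTime]
      apply le_sInf
      rintro b ⟨u, ⟨hu0, huj⟩, rfl⟩
      exact_mod_cast Nat.cast_le.2 (Nat.find_min' hne ⟨hu0, huj⟩)
    · have : hitTime j ω = ∞ := by
        rw [hitTime]
        rw [show ((fun t : ℕ => (t : ℝ≥0∞)) '' {t | 0 < t ∧ ω t = j}) = ∅ from ?_, sInf_empty]
        rw [Set.image_eq_empty]
        ext u; simp only [Set.mem_setOf_eq, Set.mem_empty_iff_false, iff_false]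
        rintro ⟨h1, h2⟩; exact hne ⟨u, h1, h2⟩
      rw [this]
      exact le_top
  calc ∑' t : ℕ, G q j 1 t s
      = ∑' t : ℕ, μ (Avoid j t) := by
        exact tsum_congr fun t => (mu_avoid hμ j t).symm
    _ = ∑' t : ℕ, ∫⁻ ω, (Avoid j t).indicator (1 : (ℕ → ℤ) → ℝ≥0∞) ω ∂μ :=
        tsum_congr fun t => (lintegral_indicator_one (measurable_avoid j t)).symm
    _ = ∫⁻ ω, ∑' t : ℕ, (Avoid j t).indicator (1 : (ℕ → ℤ) → ℝ≥0∞) ω ∂μ := by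
        rw [lintegral_tsum]
        intro t
        exact ((measurable_const).indicator (measurable_avoid j t)).aemeasurable
    _ ≤ ∫⁻ ω, hitTime j ω ∂μ := lintegral_mono hpt
    _ = expHit μ j := rfl


lemma G_one_eq_one {q : ℤ → ℤ → ℝ≥0∞} {j : ℤ} {C : Set ℤ}
    (hC : ∀ x ∈ C, ∀ y, q x y ≠ 0 → y ∈ C) (hj : j ∉ C)
    (hsum : ∀ x ∈ C, ∑' y, q x y = 1) :
    ∀ t : ℕ, ∀ s ∈ C, G q j 1 t s = 1 := by
  intro t
  induction t with
  | zero => intro s _; rw [G_zero]; rfl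
  | succ t ih =>
    intro s hs
    rw [G_rec]
    have : ∀ y : ℤ, (if y = j then 0 else q s y * G q j 1 t y) = q s y := by
      intro y
      by_cases hy : y = j
      · subst hy
        have : q s y = 0 := by
          by_contra hq
          exact hj (hC s hs y hq)
        simp [this]
      · rw [if_neg hy]
        by_cases hq : q s y = 0
        · rw [hq, zero_mul]
        · rw [ih y (hC s hs y hq), mul_one]
    rw [tsum_congr this, hsum s hs]

lemma expHit_eq_top_deg {q : ℤ → ℤ → ℝ≥0∞} {s j : ℤ} {μ : Measure (ℕ → ℤ)}
    (hμ : IsMarkovChain q s μ) {C : Set ℤ}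
    (hC : ∀ x ∈ C, ∀ y, q x y ≠ 0 → y ∈ C) (hs : s ∈ C) (hj : j ∉ C)
    (hsum : ∀ x ∈ C, ∑' y, q x y = 1) :
    expHit μ j = ⊤ := by
  have h1 : ∑' t : ℕ, G q j 1 t s = ⊤ := by
    rw [tsum_congr (fun t => G_one_eq_one hC hj hsum t s hs)]
    exact ENNReal.tsum_const_eq_top_of_ne_zero one_ne_zero
  have := tsum_G_le_expHit hμ j
  rw [h1, top_le_iff] at this
  exact this

lemma le_G_add {q : ℤ → ℤ → ℝ≥0∞} {j : ℤ} {C : Set ℤ}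
    (hC : ∀ x ∈ C, ∀ y, q x y ≠ 0 → y ∈ C) {φ : ℤ → ℝ≥0∞} (hφj : φ j = 0)
    (hφ : ∀ x ∈ C, x ≠ j → φ x ≤ 1 + ∑' y, q x y * φ y) :
    ∀ t : ℕ, ∀ s ∈ C, φ s ≤ G q j φ t s + ∑ u ∈ Finset.range t, G q j 1 u s := by
  intro t
  induction t with
  | zero => intro s _; rw [G_zero]; simp
  | succ t ih =>
    intro s hs
    by_cases hsj : s = j
    · rw [hsj, hφj]; exact zero_le
    calc φ s ≤ 1 + ∑' y, q s y * φ y := hφ s hs hsj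
      _ ≤ 1 + ∑' y : ℤ, (if y = j then 0 else
            q s y * (G q j φ t y + ∑ u ∈ Finset.range t, G q j 1 u y)) := by
          refine add_le_add_right (Summable.tsum_le_tsum (fun y => ?_) ENNReal.summable ENNReal.summable) 1
          by_cases hy : y = j
          · rw [hy, hφj, mul_zero, if_pos rfl]
          · rw [if_neg hy]
            by_cases hq : q s y = 0
            · rw [hq, zero_mul, zero_mul]
            · exact mul_le_mul_right (ih y (hC s hs y hq)) _
      _ = 1 + (G q j φ (t+1) s + ∑ u ∈ Finset.range t, G q j 1 (u+1) s) := by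
          congr 1
          have hsplit : ∀ y : ℤ, (if y = j then 0 else
              q s y * (G q j φ t y + ∑ u ∈ Finset.range t, G q j 1 u y)) =
              (if y = j then 0 else q s y * G q j φ t y) +
              ∑ u ∈ Finset.range t, (if y = j then 0 else q s y * G q j 1 u y) := by
            intro y
            by_cases hy : y = j
            · simp [hy]
            · rw [if_neg hy, mul_add, Finset.mul_sum]
              congr 1
              · rw [if_neg hy]
              · exact Finset.sum_congr rfl fun u _ => by rw [if_neg hy]
          rw [tsum_congr hsplit, ENNReal.tsum_add, ← G_rec]
          congr 1
          rw [Summable.tsum_finsetSum (fun u _ => ENNReal.summable)]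
          exact Finset.sum_congr rfl fun u _ => (G_rec q j 1 u s).symm
      _ = G q j φ (t+1) s + ∑ u ∈ Finset.range (t+1), G q j 1 u s := by
          rw [Finset.sum_range_succ']
          rw [G_zero]
          simp only [Pi.one_apply]
          ring
  
lemma G_le_K {q : ℤ → ℤ → ℝ≥0∞} {j : ℤ} {C : Set ℤ}
    (hC : ∀ x ∈ C, ∀ y, q x y ≠ 0 → y ∈ C) {φ : ℤ → ℝ≥0∞} {K : ℝ≥0∞}
    (hK : ∀ x ∈ C, φ x ≤ K) :
    ∀ t : ℕ, ∀ s ∈ C, G q j φ t s ≤ K * G q j 1 t s := by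
  intro t
  induction t with
  | zero =>
    intro s hs
    rw [G_zero, G_zero]
    simpa using hK s hs
  | succ t ih =>
    intro s hs
    rw [G_rec, G_rec, ← ENNReal.tsum_mul_left]
    refine Summable.tsum_le_tsum (fun y => ?_) ENNReal.summable ENNReal.summable
    by_cases hy : y = j
    · simp [hy]
    · rw [if_neg hy, if_neg hy]
      by_cases hq : q s y = 0
      · simp [hq]
      · calc q s y * G q j φ t y ≤ q s y * (K * G q j 1 t y) :=
              mul_le_mul_right (ih y (hC s hs y hq)) _
          _ = K * (q s y * G q j 1 t y) := by ring

lemma sup_le_expHit {q : ℤ → ℤ → ℝ≥0∞} {s j : ℤ} {μ : Measure (ℕ → ℤ)}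
    (hμ : IsMarkovChain q s μ) {C : Set ℤ}
    (hC : ∀ x ∈ C, ∀ y, q x y ≠ 0 → y ∈ C) (hs : s ∈ C)
    {φ : ℤ → ℝ≥0∞} {K : ℝ≥0∞} (hφj : φ j = 0)
    (hφ : ∀ x ∈ C, x ≠ j → φ x ≤ 1 + ∑' y, q x y * φ y)
    (hK : ∀ x ∈ C, φ x ≤ K) (hKtop : K ≠ ⊤) :
    φ s ≤ expHit μ j := by
  refine le_trans ?_ (tsum_G_le_expHit hμ j)
  set E := ∑' t : ℕ, G q j 1 t s with hE
  by_cases hEtop : E = ⊤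
  · rw [hEtop]; exact le_top
  apply ENNReal.le_of_forall_pos_le_add
  intro ε hε _
  -- find t with K * G q j 1 t s ≤ ε
  have hfin : {t : ℕ | (ε / (K + 1) : ℝ≥0∞) ≤ G q j 1 t s}.Finite :=
    ENNReal.finite_const_le_of_tsum_ne_top hEtop
      (by
        apply ENNReal.div_ne_zero.2
        constructor
        · exact_mod_cast hε.ne'
        · exact ENNReal.add_ne_top.2 ⟨hKtop, one_ne_top⟩)
  obtain ⟨t, ht⟩ := (hfin.infinite_compl).nonempty
  have hGt : G q j 1 t s < ε / (K + 1) := lt_of_not_ge ht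
  have h1 : φ s ≤ K * G q j 1 t s + E := by
    refine (le_G_add hC hφj hφ t s hs).trans (add_le_add ?_ ?_)
    · exact G_le_K hC hK t s hs
    · exact ENNReal.sum_le_tsum _
  have h2 : K * G q j 1 t s ≤ ε := by
    calc K * G q j 1 t s ≤ (K + 1) * (ε / (K + 1)) :=
          mul_le_mul' le_self_add hGt.le
      _ ≤ ε := ENNReal.mul_div_le
  calc φ s ≤ K * G q j 1 t s + E := h1
    _ ≤ ε + E := add_le_add_left h2 E
    _ = E + ε := add_comm _ _


section NN

variable {n : ℕ} {π : ℤ → ℝ≥0∞}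

lemma nnTrans_ne_zero {a b : ℤ} {x y : ℤ} (h : nnTrans a b π x y ≠ 0) :
    (x = a ∧ y = a + 1) ∨ (x = b ∧ y = b - 1) ∨
      (a < x ∧ x < b ∧ ((y = x + 1 ∧ π x ≠ 0) ∨ (y = x - 1 ∧ 1 - π x ≠ 0))) := by
  unfold nnTrans at h
  split_ifs at h with h1 h2 h3 h4 h5 h6 h7 <;>
    first
      | (exact Or.inl ⟨h1, h4⟩)
      | (exact Or.inl ⟨h1, h2⟩)
      | (exact Or.inr (Or.inl ⟨h2, h3⟩))
      | (exact Or.inr (Or.inr ⟨h3.1, h3.2, Or.inl ⟨h4, h⟩⟩))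
      | (exact Or.inr (Or.inr ⟨h3.1, h3.2, Or.inr ⟨h5, h⟩⟩))
      | (exact absurd rfl h)
      | (exact absurd h rfl)
      | omega
      | tauto

lemma tsum_q_one (hn : 1 < n) (F : ℤ → ℝ≥0∞) :
    ∑' y : ℤ, nnTrans 1 n π 1 y * F y = F 2 := by
  rw [tsum_eq_single (2 : ℤ) (by intro y hy; simp [nnTrans, hy])]
  simp [nnTrans]

lemma tsum_q_top (hn : 1 < n) (F : ℤ → ℝ≥0∞) :
    ∑' y : ℤ, nnTrans 1 n π (n : ℤ) y * F y = F ((n : ℤ) - 1) := by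
  have hne : (n : ℤ) ≠ 1 := by omega
  rw [tsum_eq_single ((n : ℤ) - 1) (by intro y hy; simp [nnTrans, hne, hy])]
  simp [nnTrans, hne]

lemma q_mid_plus (hn : 1 < n) {x : ℤ} (hx1 : 1 < x) (hxN : x < (n : ℤ)) :
    nnTrans 1 n π x (x + 1) = π x := by
  have hx1' : x ≠ 1 := by omega
  have hxN' : x ≠ (n : ℤ) := by omega
  simp only [nnTrans]
  rw [if_neg hx1', if_neg hxN', if_pos (⟨hx1, hxN⟩ : 1 < x ∧ x < (n:ℤ))]
  simp

lemma q_mid_minus (hn : 1 < n) {x : ℤ} (hx1 : 1 < x) (hxN : x < (n : ℤ)) :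
    nnTrans 1 n π x (x - 1) = 1 - π x := by
  have hx1' : x ≠ 1 := by omega
  have hxN' : x ≠ (n : ℤ) := by omega
  simp only [nnTrans]
  rw [if_neg hx1', if_neg hxN', if_pos (⟨hx1, hxN⟩ : 1 < x ∧ x < (n:ℤ)),
    if_neg (by omega : ¬ x - 1 = x + 1)]
  simp

lemma tsum_q_mid (hn : 1 < n) {x : ℤ} (hx1 : 1 < x) (hxN : x < (n : ℤ)) (F : ℤ → ℝ≥0∞) :
    ∑' y : ℤ, nnTrans 1 n π x y * F y = π x * F (x + 1) + (1 - π x) * F (x - 1) := by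
  have hx1' : x ≠ 1 := by omega
  have hxN' : x ≠ (n : ℤ) := by omega
  rw [tsum_eq_sum (s := ({x + 1, x - 1} : Finset ℤ)) (by
    intro y hy
    simp only [Finset.mem_insert, Finset.mem_singleton] at hy
    push_neg at hy
    simp only [nnTrans]
    rw [if_neg hx1', if_neg hxN', if_pos (⟨hx1, hxN⟩ : 1 < x ∧ x < (n:ℤ)),
      if_neg hy.1, if_neg hy.2, zero_mul])]
  rw [Finset.sum_pair (by omega : x + 1 ≠ x - 1), q_mid_plus hn hx1 hxN,
    q_mid_minus hn hx1 hxN]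

lemma nn_sum_one (hn : 1 < n) (hπ : ∀ i : ℤ, 2 ≤ i → i ≤ (n : ℤ) - 1 → π i ≤ 1)
    {x : ℤ} (hx : x ∈ Set.Icc (1 : ℤ) (n : ℤ)) :
    ∑' y : ℤ, nnTrans 1 n π x y = 1 := by
  have hcongr : ∑' y : ℤ, nnTrans 1 n π x y = ∑' y : ℤ, nnTrans 1 n π x y * (fun _ => 1) y :=
    tsum_congr fun y => (mul_one _).symm
  rcases eq_or_lt_of_le hx.1 with h1 | h1
  · rw [hcongr, ← h1, tsum_q_one hn]
  rcases eq_or_lt_of_le hx.2 with hN | hN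
  · rw [hcongr, hN, tsum_q_top hn]
  · rw [hcongr, tsum_q_mid hn h1 hN]
    simp only [mul_one]
    rw [add_comm]
    exact tsub_add_cancel_of_le (hπ x (by omega) (by omega))

/-- The edge weights of the birth-death chain. -/
def uw (π : ℤ → ℝ≥0∞) : ℕ → ℝ≥0∞
  | 0 => 0
  | 1 => 1
  | (k+2) => uw π (k+1) * (π ((k : ℤ) + 2) / (1 - π ((k : ℤ) + 2)))

lemma uw_succ (m : ℕ) (hm : 2 ≤ m) :
    uw π m = uw π (m - 1) * (π (m : ℤ) / (1 - π (m : ℤ))) := by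
  obtain ⟨k, rfl⟩ : ∃ k, m = k + 2 := ⟨m - 2, by omega⟩
  have hc : ((k + 2 : ℕ) : ℤ) = (k : ℤ) + 2 := by push_cast; ring
  show uw π (k+2) = uw π (k + 2 - 1) * (π ((k+2 : ℕ) : ℤ) / (1 - π ((k+2 : ℕ) : ℤ)))
  rw [uw, hc]
  norm_num

end NN

section Weights

variable {n : ℕ} {π : ℤ → ℝ≥0∞}

lemma sum_Icc_bot {a b : ℕ} (h : a ≤ b) (f : ℕ → ℝ≥0∞) :
    ∑ k ∈ Finset.Icc a b, f k = f a + ∑ k ∈ Finset.Icc (a+1) b, f k := by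
  rw [Finset.Icc_eq_cons_Ioc h, Finset.sum_cons,
    (Finset.Icc_add_one_left_eq_Ioc a b : Finset.Icc (a+1) b = Finset.Ioc a b)]

/-- Hypotheses bundle for the nondegenerate case. -/
structure Good (n : ℕ) (π : ℤ → ℝ≥0∞) : Prop where
  hn : 1 < n
  hle : ∀ i : ℤ, 2 ≤ i → i ≤ (n : ℤ) - 1 → π i ≤ 1
  h0 : ∀ i : ℤ, 2 ≤ i → i ≤ (n : ℤ) - 1 → π i ≠ 0
  h1 : ∀ i : ℤ, 2 ≤ i → i ≤ (n : ℤ) - 1 → π i ≠ 1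

namespace Good

variable (hg : Good n π)
include hg

lemma cast_bounds {m : ℕ} (hm2 : 2 ≤ m) (hmn : m ≤ n - 1) :
    2 ≤ (m : ℤ) ∧ (m : ℤ) ≤ (n : ℤ) - 1 := by
  have := hg.hn; omega

lemma pi_le {m : ℕ} (hm2 : 2 ≤ m) (hmn : m ≤ n - 1) : π (m : ℤ) ≤ 1 :=
  hg.hle _ (hg.cast_bounds hm2 hmn).1 (hg.cast_bounds hm2 hmn).2

lemma pi_ne_top {m : ℕ} (hm2 : 2 ≤ m) (hmn : m ≤ n - 1) : π (m : ℤ) ≠ ⊤ :=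
  ne_top_of_le_ne_top one_ne_top (hg.pi_le hm2 hmn)

lemma one_sub_ne_zero {m : ℕ} (hm2 : 2 ≤ m) (hmn : m ≤ n - 1) : 1 - π (m : ℤ) ≠ 0 := by
  intro h
  rw [tsub_eq_zero_iff_le] at h
  exact hg.h1 _ (hg.cast_bounds hm2 hmn).1 (hg.cast_bounds hm2 hmn).2
    (le_antisymm (hg.pi_le hm2 hmn) h)

lemma one_sub_ne_top {m : ℕ} (hm2 : 2 ≤ m) (hmn : m ≤ n - 1) : 1 - π (m : ℤ) ≠ ⊤ :=
  ne_top_of_le_ne_top one_ne_top tsub_le_self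

lemma hpc {m : ℕ} (hm2 : 2 ≤ m) (hmn : m ≤ n - 1) :
    π (m : ℤ) + (1 - π (m : ℤ)) = 1 := by
  rw [add_comm]
  exact tsub_add_cancel_of_le (hg.pi_le hm2 hmn)

lemma uw_ne : ∀ m : ℕ, 1 ≤ m → m ≤ n - 1 → uw π m ≠ 0 ∧ uw π m ≠ ⊤ := by
  intro m
  induction m with
  | zero => omega
  | succ k ih =>
    intro h1 h2
    rcases Nat.eq_zero_or_pos k with rfl | hk
    · constructor <;> simp [uw]
    · have hm2 : 2 ≤ k + 1 := by omega
      obtain ⟨ih0, iht⟩ := ih hk (by omega)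
      rw [uw_succ (k+1) hm2]
      have hd0 : 1 - π ((k+1 : ℕ) : ℤ) ≠ 0 := hg.one_sub_ne_zero hm2 h2
      have hdt : 1 - π ((k+1 : ℕ) : ℤ) ≠ ⊤ := hg.one_sub_ne_top hm2 h2
      have hp0 : π ((k+1 : ℕ) : ℤ) ≠ 0 := hg.h0 _ (hg.cast_bounds hm2 h2).1 (hg.cast_bounds hm2 h2).2
      have hpt : π ((k+1 : ℕ) : ℤ) ≠ ⊤ := hg.pi_ne_top hm2 h2
      have hr0 : π ((k+1 : ℕ) : ℤ) / (1 - π ((k+1 : ℕ) : ℤ)) ≠ 0 :=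
        ENNReal.div_ne_zero.2 ⟨hp0, hdt⟩
      have hrt : π ((k+1 : ℕ) : ℤ) / (1 - π ((k+1 : ℕ) : ℤ)) ≠ ⊤ := by
        intro h
        rw [ENNReal.div_eq_top] at h
        rcases h with ⟨-, h⟩ | ⟨h, -⟩
        · exact hd0 h
        · exact hpt h
      have hred : k + 1 - 1 = k := by omega
      rw [hred]
      exact ⟨mul_ne_zero ih0 hr0, ENNReal.mul_ne_top iht hrt⟩

lemma uw_rel {m : ℕ} (hm2 : 2 ≤ m) (hmn : m ≤ n - 1) :
    uw π m * (1 - π (m : ℤ)) = uw π (m - 1) * π (m : ℤ) := by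
  rw [uw_succ m hm2, mul_assoc,
    ENNReal.div_mul_cancel (hg.one_sub_ne_zero hm2 hmn) (hg.one_sub_ne_top hm2 hmn)]

end Good

/-- numerator for the upward passage times -/
def Se (π : ℤ → ℝ≥0∞) (i : ℕ) : ℝ≥0∞ :=
  ∑ k ∈ Finset.Icc 1 i, uw π k + ∑ k ∈ Finset.Icc 1 (i-1), uw π k

/-- numerator for the downward passage times -/
def Re (π : ℤ → ℝ≥0∞) (n i : ℕ) : ℝ≥0∞ :=
  ∑ k ∈ Finset.Icc i (n-1), uw π k + ∑ k ∈ Finset.Icc (i+1) (n-1), uw π k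

def ee (π : ℤ → ℝ≥0∞) (i : ℕ) : ℝ≥0∞ := Se π i / uw π i

def ff (π : ℤ → ℝ≥0∞) (n i : ℕ) : ℝ≥0∞ := Re π n i / uw π i

lemma ee_one : ee π 1 = 1 := by
  rw [ee, Se]
  norm_num
  simp [uw]

lemma Good.ff_top (hg : Good n π) : ff π n (n-1) = 1 := by
  have hn := hg.hn
  rw [ff, Re, Finset.Icc_self, Finset.sum_singleton,
    Finset.Icc_eq_empty (by omega : ¬ (n-1+1 ≤ n-1)), Finset.sum_empty, add_zero]
  exact ENNReal.div_self (hg.uw_ne (n-1) (by omega) le_rfl).1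
    (hg.uw_ne (n-1) (by omega) le_rfl).2

end Weights


section Steps

variable {n : ℕ} {π : ℤ → ℝ≥0∞}

lemma Good.Se_rec (hg : Good n π) (k : ℕ) :
    Se π (k+2) = Se π (k+1) + uw π (k+2) + uw π (k+1) := by
  rw [Se, Se]
  norm_num
  rw [Finset.sum_Icc_succ_top (by omega : 1 ≤ k+2) (uw π),
    Finset.sum_Icc_succ_top (by omega : 1 ≤ k+1) (uw π)]
  ring

lemma Good.e_ineq (hg : Good n π) (m : ℕ) (hm2 : 2 ≤ m) (hmn : m ≤ n - 1) :
    ee π m ≤ 1 + (1 - π (m : ℤ)) * ee π (m-1) + (1 - π (m : ℤ)) * ee π m := by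
  obtain ⟨k, rfl⟩ : ∃ k, m = k + 2 := ⟨m - 2, by omega⟩
  have hred : k + 2 - 1 = k + 1 := by omega
  set p := π ((k + 2 : ℕ) : ℤ) with hp
  set c := 1 - p with hc
  set a := uw π (k+1) with ha
  set b := uw π (k+2) with hb
  set S' := Se π (k+1) with hS'
  set S := Se π (k+2) with hS
  obtain ⟨ha0, hat⟩ := hg.uw_ne (k+1) (by omega) (by omega)
  obtain ⟨hb0, hbt⟩ := hg.uw_ne (k+2) (by omega) hmn
  have hrel : b * c = a * p := by
    have := hg.uw_rel (m := k+2) (by omega) hmn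
    rw [hred] at this
    exact this
  have hpc : p + c = 1 := hg.hpc (by omega) hmn
  have hSrec : S = S' + b + a := hg.Se_rec k
  rw [ee, ee, hred, ← ha, ← hb, ← hS', ← hS]
  rw [ENNReal.div_le_iff hb0 hbt]
  have h1 : S' / a * a = S' := ENNReal.div_mul_cancel ha0 hat
  have h2 : S / b * b = S := ENNReal.div_mul_cancel hb0 hbt
  have hleft : (1 + c * (S' / a) + c * (S / b)) * b = b + S' * p + c * S := by
    calc (1 + c * (S' / a) + c * (S / b)) * b
        = b + (S' / a) * (b * c) + c * (S / b * b) := by ring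
      _ = b + (S' / a) * (a * p) + c * S := by rw [hrel, h2]
      _ = b + (S' / a * a) * p + c * S := by ring
      _ = b + S' * p + c * S := by rw [h1]
  rw [hleft, hSrec]
  have key : b + S' * p + c * (S' + b + a) = S' + b + a := by
    have e1 : b + S' * p + c * (S' + b + a) = b + S' * (p + c) + (b * c + c * a) := by ring
    rw [e1, hpc, mul_one, hrel]
    have e2 : a * p + c * a = a * (p + c) := by ring
    rw [e2, hpc, mul_one]
    ring
  rw [key]

lemma Good.Re_rec (hg : Good n π) (k : ℕ) (hkn : k + 2 ≤ n - 1) :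
    Re π n (k+1) = Re π n (k+2) + uw π (k+1) + uw π (k+2) := by
  rw [Re, Re]
  rw [sum_Icc_bot (by omega : k+1 ≤ n-1) (uw π),
    sum_Icc_bot (by omega : k+2 ≤ n-1) (uw π)]
  ring

lemma Good.f_ineq (hg : Good n π) (m : ℕ) (hm2 : 2 ≤ m) (hmn : m ≤ n - 1) :
    (1 - π (m : ℤ)) * ff π n (m-1) ≤ 1 + π (m : ℤ) * ff π n m := by
  obtain ⟨k, rfl⟩ : ∃ k, m = k + 2 := ⟨m - 2, by omega⟩
  have hred : k + 2 - 1 = k + 1 := by omega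
  set p := π ((k + 2 : ℕ) : ℤ) with hp
  set c := 1 - p with hc
  set a := uw π (k+1) with ha
  set b := uw π (k+2) with hb
  set R' := Re π n (k+1) with hR'
  set R := Re π n (k+2) with hR
  obtain ⟨ha0, hat⟩ := hg.uw_ne (k+1) (by omega) (by omega)
  obtain ⟨hb0, hbt⟩ := hg.uw_ne (k+2) (by omega) hmn
  have hrel : b * c = a * p := by
    have := hg.uw_rel (m := k+2) (by omega) hmn
    rw [hred] at this
    exact this
  have hpc : p + c = 1 := hg.hpc (by omega) hmn
  have hRrec : R' = R + a + b := hg.Re_rec k hmn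
  rw [ff, ff, hred, ← ha, ← hb, ← hR', ← hR]
  rw [show c * (R' / a) = (c * R') / a by
    rw [div_eq_mul_inv, div_eq_mul_inv, mul_assoc]]
  rw [ENNReal.div_le_iff ha0 hat]
  have h2 : R / b * b = R := ENNReal.div_mul_cancel hb0 hbt
  have hright : (1 + p * (R / b)) * a = a + R * c := by
    calc (1 + p * (R / b)) * a
        = a + (R / b) * (a * p) := by ring
      _ = a + (R / b) * (b * c) := by rw [← hrel]
      _ = a + (R / b * b) * c := by ring
      _ = a + R * c := by rw [h2]
  rw [hright, hRrec]
  have key : c * (R + a + b) = a + R * c := by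
    have e1 : c * (R + a + b) = R * c + (a * c + b * c) := by ring
    rw [e1, hrel]
    have e2 : a * c + a * p = a * (c + p) := by ring
    rw [e2, add_comm c p, hpc, mul_one]
    ring
  rw [key]

lemma Good.ef_sum (hg : Good n π) (i : ℕ) (hi1 : 1 ≤ i) (hin : i ≤ n - 1) :
    ee π i + ff π n i = (2 * ∑ k ∈ Finset.Icc 1 (n-1), uw π k) / uw π i := by
  obtain ⟨j, rfl⟩ : ∃ j, i = j + 1 := ⟨i - 1, by omega⟩
  rw [ee, ff, ENNReal.div_add_div_same]
  congr 1
  rw [Se, Re]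
  have hIoc : ∀ a b : ℕ, Finset.Icc (a+1) b = Finset.Ioc a b := fun a b => Finset.Icc_add_one_left_eq_Ioc a b
  have hU : Finset.Icc 1 (n-1) = Finset.Ioc 0 (n-1) := hIoc 0 _
  norm_num
  rw [hIoc 0 (j+1), hIoc 0 j, hIoc j (n-1), hIoc (j+1) (n-1), hU]
  have c1 : ∑ k ∈ Finset.Ioc 0 (j+1), uw π k + ∑ k ∈ Finset.Ioc (j+1) (n-1), uw π k
      = ∑ k ∈ Finset.Ioc 0 (n-1), uw π k :=
    Finset.sum_Ioc_consecutive _ (by omega) (by omega)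
  have c2 : ∑ k ∈ Finset.Ioc 0 j, uw π k + ∑ k ∈ Finset.Ioc j (n-1), uw π k
      = ∑ k ∈ Finset.Ioc 0 (n-1), uw π k :=
    Finset.sum_Ioc_consecutive _ (by omega) (by omega)
  calc ∑ k ∈ Finset.Ioc 0 (j+1), uw π k + ∑ k ∈ Finset.Ioc 0 j, uw π k +
        (∑ k ∈ Finset.Ioc j (n-1), uw π k + ∑ k ∈ Finset.Ioc (j+1) (n-1), uw π k)
      = (∑ k ∈ Finset.Ioc 0 (j+1), uw π k + ∑ k ∈ Finset.Ioc (j+1) (n-1), uw π k) +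
        (∑ k ∈ Finset.Ioc 0 j, uw π k + ∑ k ∈ Finset.Ioc j (n-1), uw π k) := by ring
    _ = 2 * ∑ k ∈ Finset.Ioc 0 (n-1), uw π k := by rw [c1, c2]; ring

end Steps


section CS

variable {n : ℕ} {π : ℤ → ℝ≥0∞}

lemma two_le_add_inv {x : ℝ≥0∞} (h0 : x ≠ 0) (ht : x ≠ ⊤) : 2 ≤ x + x⁻¹ := by
  have hinvt : x⁻¹ ≠ ⊤ := by rwa [Ne, ENNReal.inv_eq_top]
  have hpos : 0 < x.toReal := ENNReal.toReal_pos h0 ht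
  have e1 : x = ENNReal.ofReal x.toReal := (ENNReal.ofReal_toReal ht).symm
  have e2 : x⁻¹ = ENNReal.ofReal (x.toReal⁻¹) := by
    rw [← ENNReal.toReal_inv]
    exact (ENNReal.ofReal_toReal hinvt).symm
  have hreal : (2 : ℝ) ≤ x.toReal + x.toReal⁻¹ := by
    set t := x.toReal
    have h3 : 2 * t ≤ (t + t⁻¹) * t := by
      have ha : (t + t⁻¹) * t = t^2 + 1 := by field_simp
      rw [ha]; nlinarith [sq_nonneg (t-1)]
    exact le_of_mul_le_mul_right h3 hpos
  calc (2 : ℝ≥0∞) = ENNReal.ofReal 2 := by norm_num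
    _ ≤ ENNReal.ofReal (x.toReal + x.toReal⁻¹) := ENNReal.ofReal_le_ofReal hreal
    _ = ENNReal.ofReal x.toReal + ENNReal.ofReal (x.toReal⁻¹) :=
        ENNReal.ofReal_add ENNReal.toReal_nonneg (by positivity)
    _ = x + x⁻¹ := by rw [← e1, ← e2]

lemma Good.cs (hg : Good n π) :
    2 * (((n - 1 : ℕ) : ℝ≥0∞)) ^ 2 ≤ ∑ i ∈ Finset.Icc 1 (n-1), (ee π i + ff π n i) := by
  classical
  set U := ∑ k ∈ Finset.Icc 1 (n-1), uw π k with hU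
  have step1 : ∑ i ∈ Finset.Icc 1 (n-1), (ee π i + ff π n i) =
      2 * ∑ i ∈ Finset.Icc 1 (n-1), ∑ k ∈ Finset.Icc 1 (n-1), uw π k * (uw π i)⁻¹ := by
    rw [Finset.mul_sum]
    refine Finset.sum_congr rfl fun i hi => ?_
    rw [Finset.mem_Icc] at hi
    rw [hg.ef_sum i hi.1 hi.2, div_eq_mul_inv, ← hU, mul_assoc, Finset.sum_mul]
  rw [step1]
  have hQ2 : (((n - 1 : ℕ) : ℝ≥0∞)) ^ 2 ≤
      ∑ i ∈ Finset.Icc 1 (n-1), ∑ k ∈ Finset.Icc 1 (n-1), uw π k * (uw π i)⁻¹ := by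
    have h2Q : ∑ i ∈ Finset.Icc 1 (n-1), ∑ k ∈ Finset.Icc 1 (n-1),
        (uw π k * (uw π i)⁻¹ + uw π i * (uw π k)⁻¹) =
        2 * ∑ i ∈ Finset.Icc 1 (n-1), ∑ k ∈ Finset.Icc 1 (n-1), uw π k * (uw π i)⁻¹ := by
      calc ∑ i ∈ Finset.Icc 1 (n-1), ∑ k ∈ Finset.Icc 1 (n-1),
            (uw π k * (uw π i)⁻¹ + uw π i * (uw π k)⁻¹)
          = ∑ i ∈ Finset.Icc 1 (n-1), (∑ k ∈ Finset.Icc 1 (n-1), uw π k * (uw π i)⁻¹ +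
              ∑ k ∈ Finset.Icc 1 (n-1), uw π i * (uw π k)⁻¹) :=
            Finset.sum_congr rfl fun i _ => Finset.sum_add_distrib
        _ = ∑ i ∈ Finset.Icc 1 (n-1), ∑ k ∈ Finset.Icc 1 (n-1), uw π k * (uw π i)⁻¹ +
            ∑ i ∈ Finset.Icc 1 (n-1), ∑ k ∈ Finset.Icc 1 (n-1), uw π i * (uw π k)⁻¹ :=
            Finset.sum_add_distrib
        _ = ∑ i ∈ Finset.Icc 1 (n-1), ∑ k ∈ Finset.Icc 1 (n-1), uw π k * (uw π i)⁻¹ +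
            ∑ i ∈ Finset.Icc 1 (n-1), ∑ k ∈ Finset.Icc 1 (n-1), uw π k * (uw π i)⁻¹ := by
            rw [Finset.sum_comm (s := Finset.Icc 1 (n-1)) (t := Finset.Icc 1 (n-1))
              (f := fun i k => uw π i * (uw π k)⁻¹)]
        _ = 2 * ∑ i ∈ Finset.Icc 1 (n-1), ∑ k ∈ Finset.Icc 1 (n-1), uw π k * (uw π i)⁻¹ :=
            (two_mul _).symm
    have hterm : ∀ i ∈ Finset.Icc 1 (n-1), ∀ k ∈ Finset.Icc 1 (n-1),
        (2 : ℝ≥0∞) ≤ uw π k * (uw π i)⁻¹ + uw π i * (uw π k)⁻¹ := by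
      intro i hi k hk
      rw [Finset.mem_Icc] at hi hk
      obtain ⟨hi0, hit⟩ := hg.uw_ne i hi.1 hi.2
      obtain ⟨hk0, hkt⟩ := hg.uw_ne k hk.1 hk.2
      have hx0 : uw π k * (uw π i)⁻¹ ≠ 0 := mul_ne_zero hk0 (ENNReal.inv_ne_zero.2 hit)
      have hxt : uw π k * (uw π i)⁻¹ ≠ ⊤ :=
        ENNReal.mul_ne_top hkt (by rwa [Ne, ENNReal.inv_eq_top])
      have hxinv : (uw π k * (uw π i)⁻¹)⁻¹ = uw π i * (uw π k)⁻¹ := by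
        rw [ENNReal.mul_inv (Or.inl hk0) (Or.inl hkt), inv_inv, mul_comm]
      calc (2 : ℝ≥0∞) ≤ uw π k * (uw π i)⁻¹ + (uw π k * (uw π i)⁻¹)⁻¹ :=
            two_le_add_inv hx0 hxt
        _ = uw π k * (uw π i)⁻¹ + uw π i * (uw π k)⁻¹ := by rw [hxinv]
    have hsum2 : ∑ i ∈ Finset.Icc 1 (n-1), ∑ k ∈ Finset.Icc 1 (n-1), (2:ℝ≥0∞) ≤
        2 * ∑ i ∈ Finset.Icc 1 (n-1), ∑ k ∈ Finset.Icc 1 (n-1), uw π k * (uw π i)⁻¹ := by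
      rw [← h2Q]
      exact Finset.sum_le_sum fun i hi => Finset.sum_le_sum fun k hk => hterm i hi k hk
    have hcard : (Finset.Icc 1 (n-1)).card = n - 1 := by rw [Nat.card_Icc]; omega
    have hconst : ∑ i ∈ Finset.Icc 1 (n-1), ∑ k ∈ Finset.Icc 1 (n-1), (2:ℝ≥0∞) =
        2 * (((n - 1 : ℕ) : ℝ≥0∞)) ^ 2 := by
      rw [Finset.sum_const, Finset.sum_const, hcard, nsmul_eq_mul, nsmul_eq_mul]
      ring
    rw [hconst] at hsum2
    exact (ENNReal.mul_le_mul_iff_right two_ne_zero ENNReal.ofNat_ne_top).1 hsum2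
  exact mul_le_mul_right hQ2 2

end CS


section Phi

variable {n : ℕ} {π : ℤ → ℝ≥0∞}

/-- Candidate for `x ↦ E_x[T_n]`. -/
def phiF (π : ℤ → ℝ≥0∞) (n : ℕ) : ℤ → ℝ≥0∞ :=
  fun x => ∑ i ∈ Finset.Icc x.toNat (n-1), ee π i

/-- Candidate for `x ↦ E_x[T_1]`. -/
def psiF (π : ℤ → ℝ≥0∞) (n : ℕ) : ℤ → ℝ≥0∞ :=
  fun x => ∑ i ∈ Finset.Icc 1 (x.toNat - 1), ff π n i

lemma Good.Se_ne_top (hg : Good n π) {i : ℕ} (hin : i ≤ n - 1) : Se π i ≠ ⊤ := by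
  rw [Se]
  refine ENNReal.add_ne_top.2 ⟨?_, ?_⟩ <;>
    · refine (ENNReal.sum_lt_top.2 fun k hk => ?_).ne
      rw [Finset.mem_Icc] at hk
      exact lt_top_iff_ne_top.2 (hg.uw_ne k hk.1 (by omega)).2

lemma Good.Re_ne_top (hg : Good n π) {i : ℕ} (hi : 1 ≤ i) : Re π n i ≠ ⊤ := by
  rw [Re]
  refine ENNReal.add_ne_top.2 ⟨?_, ?_⟩ <;>
    · refine (ENNReal.sum_lt_top.2 fun k hk => ?_).ne
      rw [Finset.mem_Icc] at hk
      exact lt_top_iff_ne_top.2 (hg.uw_ne k (by omega) (by omega)).2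

lemma Good.ee_ne_top (hg : Good n π) {i : ℕ} (hi1 : 1 ≤ i) (hin : i ≤ n - 1) :
    ee π i ≠ ⊤ := by
  rw [ee]
  intro h
  rw [ENNReal.div_eq_top] at h
  rcases h with ⟨-, h2⟩ | ⟨h1, -⟩
  · exact (hg.uw_ne i hi1 hin).1 h2
  · exact hg.Se_ne_top hin h1

lemma Good.ff_ne_top (hg : Good n π) {i : ℕ} (hi1 : 1 ≤ i) (hin : i ≤ n - 1) :
    ff π n i ≠ ⊤ := by
  rw [ff]
  intro h
  rw [ENNReal.div_eq_top] at h
  rcases h with ⟨-, h2⟩ | ⟨h1, -⟩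
  · exact (hg.uw_ne i hi1 hin).1 h2
  · exact hg.Re_ne_top hi1 h1

lemma Good.phiF_K (hg : Good n π) : ∀ x ∈ Set.Icc (1:ℤ) (n:ℤ), phiF π n x ≤ phiF π n 1 := by
  intro x hx
  rw [Set.mem_Icc] at hx
  rw [phiF, phiF]
  have h1 : (1:ℤ).toNat = 1 := rfl
  rw [h1]
  exact Finset.sum_le_sum_of_subset (Finset.Icc_subset_Icc (by omega) le_rfl)

lemma Good.phiF_K_ne_top (hg : Good n π) : phiF π n 1 ≠ ⊤ := by
  rw [phiF]
  refine (ENNReal.sum_lt_top.2 fun i hi => ?_).ne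
  rw [Finset.mem_Icc] at hi
  exact lt_top_iff_ne_top.2 (hg.ee_ne_top (by omega : 1 ≤ i) hi.2)

lemma Good.psiF_K (hg : Good n π) : ∀ x ∈ Set.Icc (1:ℤ) (n:ℤ), psiF π n x ≤ psiF π n (n:ℤ) := by
  intro x hx
  rw [Set.mem_Icc] at hx
  have hn := hg.hn
  rw [psiF, psiF]
  have h1 : (n:ℤ).toNat = n := by omega
  rw [h1]
  exact Finset.sum_le_sum_of_subset (Finset.Icc_subset_Icc le_rfl (by omega))

lemma Good.psiF_K_ne_top (hg : Good n π) : psiF π n (n:ℤ) ≠ ⊤ := by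
  rw [psiF]
  refine (ENNReal.sum_lt_top.2 fun i hi => ?_).ne
  rw [Finset.mem_Icc] at hi
  have hn := hg.hn
  have h1 : (n:ℤ).toNat = n := by omega
  rw [h1] at hi
  exact lt_top_iff_ne_top.2 (hg.ff_ne_top hi.1 (by omega))

lemma Good.phiF_j (hg : Good n π) : phiF π n (n:ℤ) = 0 := by
  have hn := hg.hn
  rw [phiF]
  have h1 : (n:ℤ).toNat = n := by omega
  rw [h1, Finset.Icc_eq_empty (by omega : ¬ n ≤ n - 1), Finset.sum_empty]

lemma Good.psiF_j (hg : Good n π) : psiF π n 1 = 0 := by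
  rw [psiF]
  have h1 : (1:ℤ).toNat - 1 = 0 := rfl
  rw [h1, Finset.Icc_eq_empty (by omega : ¬ 1 ≤ 0), Finset.sum_empty]

lemma Good.phiF_super (hg : Good n π) :
    ∀ x ∈ Set.Icc (1:ℤ) (n:ℤ), x ≠ (n:ℤ) →
      phiF π n x ≤ 1 + ∑' y, nnTrans 1 n π x y * phiF π n y := by
  have hn := hg.hn
  intro x hx hxN
  rw [Set.mem_Icc] at hx
  rcases eq_or_lt_of_le hx.1 with h1 | h1
  · -- x = 1
    rw [← h1, tsum_q_one hn (phiF π n)]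
    rw [phiF, phiF]
    have e1 : (1:ℤ).toNat = 1 := rfl
    have e2 : (2:ℤ).toNat = 2 := rfl
    rw [e1, e2, sum_Icc_bot (by omega : 1 ≤ n - 1) (fun i => ee π i), ee_one, add_comm]
  · -- interior
    have hxN' : x < (n:ℤ) := by omega
    rw [tsum_q_mid hn h1 hxN' (phiF π n)]
    obtain ⟨m, rfl⟩ : ∃ m : ℕ, x = (m:ℤ) := ⟨x.toNat, by omega⟩
    have hm2 : 2 ≤ m := by omega
    have hmn : m ≤ n - 1 := by omega
    rw [phiF, phiF, phiF]
    have e0 : ((m:ℤ)).toNat = m := by omega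
    have e1 : ((m:ℤ) + 1).toNat = m + 1 := by omega
    have e2 : ((m:ℤ) - 1).toNat = m - 1 := by omega
    rw [e0, e1, e2]
    set T := ∑ i ∈ Finset.Icc (m+1) (n-1), ee π i with hT
    set p := π ((m:ℕ) : ℤ) with hp
    set c := 1 - p with hc
    have hpc : p + c = 1 := hg.hpc hm2 hmn
    have hx0 : ∑ i ∈ Finset.Icc m (n-1), ee π i = ee π m + T :=
      sum_Icc_bot hmn _
    have hx2 : ∑ i ∈ Finset.Icc (m-1) (n-1), ee π i = ee π (m-1) + (ee π m + T) := by
      rw [sum_Icc_bot (by omega : m - 1 ≤ n - 1), show m - 1 + 1 = m from by omega, hx0]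
    rw [hx0, hx2]
    have hRHS : 1 + (p * T + c * (ee π (m-1) + (ee π m + T))) =
        (1 + c * ee π (m-1) + c * ee π m) + T := by
      have e3 : 1 + (p * T + c * (ee π (m-1) + (ee π m + T))) =
          (1 + c * ee π (m-1) + c * ee π m) + (p + c) * T := by ring
      rw [e3, hpc, one_mul]
    rw [hRHS]
    exact add_le_add_left (hg.e_ineq m hm2 hmn) T

lemma Good.psiF_super (hg : Good n π) :
    ∀ x ∈ Set.Icc (1:ℤ) (n:ℤ), x ≠ 1 →
      psiF π n x ≤ 1 + ∑' y, nnTrans 1 n π x y * psiF π n y := by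
  have hn := hg.hn
  intro x hx hx1
  rw [Set.mem_Icc] at hx
  rcases eq_or_lt_of_le hx.2 with hN | hN
  · -- x = n
    rw [hN, tsum_q_top hn (psiF π n)]
    rw [psiF, psiF]
    have e1 : (n:ℤ).toNat - 1 = n - 1 := by omega
    have e2 : ((n:ℤ) - 1).toNat - 1 = n - 2 := by omega
    rw [e1, e2, show n - 1 = n - 2 + 1 from by omega,
      Finset.sum_Icc_succ_top (by omega : 1 ≤ n - 2 + 1) (fun i => ff π n i),
      show n - 2 + 1 = n - 1 from by omega, hg.ff_top, add_comm]
  · -- interior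
    have h1 : 1 < x := by omega
    rw [tsum_q_mid hn h1 hN (psiF π n)]
    obtain ⟨m, rfl⟩ : ∃ m : ℕ, x = (m:ℤ) := ⟨x.toNat, by omega⟩
    have hm2 : 2 ≤ m := by omega
    have hmn : m ≤ n - 1 := by omega
    rw [psiF, psiF, psiF]
    have e0 : ((m:ℤ)).toNat - 1 = m - 1 := by omega
    have e1 : ((m:ℤ) + 1).toNat - 1 = m := by omega
    have e2 : ((m:ℤ) - 1).toNat - 1 = m - 2 := by omega
    rw [e0, e1, e2]
    set D := ∑ i ∈ Finset.Icc 1 (m-2), ff π n i with hD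
    set p := π ((m:ℕ) : ℤ) with hp
    set c := 1 - p with hc
    have hpc : p + c = 1 := hg.hpc hm2 hmn
    have hx0 : ∑ i ∈ Finset.Icc 1 (m-1), ff π n i = D + ff π n (m-1) := by
      rw [show m - 1 = m - 2 + 1 from by omega,
        Finset.sum_Icc_succ_top (by omega : 1 ≤ m - 2 + 1) (fun i => ff π n i),
        show m - 2 + 1 = m - 1 from by omega, hD]
    have hx1' : ∑ i ∈ Finset.Icc 1 m, ff π n i = D + ff π n (m-1) + ff π n m := by
      rw [show m = m - 1 + 1 from by omega,
        Finset.sum_Icc_succ_top (by omega : 1 ≤ m - 1 + 1) (fun i => ff π n i),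
        show m - 1 + 1 = m from by omega, hx0]
    rw [hx0, hx1']
    have hstep : ff π n (m-1) ≤ 1 + p * ff π n m + p * ff π n (m-1) := by
      calc ff π n (m-1) = (p + c) * ff π n (m-1) := by rw [hpc, one_mul]
        _ = p * ff π n (m-1) + c * ff π n (m-1) := by ring
        _ ≤ p * ff π n (m-1) + (1 + p * ff π n m) :=
            add_le_add_right (hg.f_ineq m hm2 hmn) _
        _ = 1 + p * ff π n m + p * ff π n (m-1) := by ring
    have hRHS : 1 + (p * (D + ff π n (m-1) + ff π n m) + c * D) =
        D + (1 + p * ff π n m + p * ff π n (m-1)) := by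
      have e3 : 1 + (p * (D + ff π n (m-1) + ff π n m) + c * D) =
          1 + (p + c) * D + (p * ff π n m + p * ff π n (m-1)) := by ring
      rw [e3, hpc, one_mul]
      ring
    rw [hRHS]
    exact add_le_add_right hstep D

lemma Good.total (hg : Good n π) :
    2 * ((n : ℝ≥0∞) - 1) ^ 2 ≤ phiF π n 1 + psiF π n (n:ℤ) := by
  have hn := hg.hn
  have hcast : ((n:ℝ≥0∞) - 1) = ((n - 1 : ℕ) : ℝ≥0∞) := by
    have h1 : ((n - 1 : ℕ) : ℝ≥0∞) + 1 = (n : ℝ≥0∞) := by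
      rw [← Nat.cast_one (R := ℝ≥0∞), ← Nat.cast_add]
      congr 1
      omega
    rw [← h1, ENNReal.add_sub_cancel_right one_ne_top]
  rw [hcast, phiF, psiF]
  have e1 : (1:ℤ).toNat = 1 := rfl
  have e2 : (n:ℤ).toNat - 1 = n - 1 := by omega
  rw [e1, e2, ← Finset.sum_add_distrib]
  exact hg.cs

end Phi


/-- For any `n > 1` and any vector of probabilities
`π = (π_2, …, π_{n-1})` with `π i ∈ [0,1]`, the nearest-neighbour Markov chain on
`{1, …, n}` with reflecting barriers and transition probabilities `π` satisfies
`E[T_{1,n}] + E[T_{n,1}] ≥ 2 (n-1)²` (the expectations may be `+∞`). -/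
theorem statement0 (n : ℕ) (hn : 1 < n) (π : ℤ → ℝ≥0∞)
    (hπ : ∀ i : ℤ, 2 ≤ i → i ≤ (n : ℤ) - 1 → π i ≤ 1)
    (μ₁ μₙ : MeasureTheory.Measure (ℕ → ℤ))
    (h₁ : IsMarkovChain (nnTrans 1 n π) 1 μ₁)
    (hₙ : IsMarkovChain (nnTrans 1 n π) n μₙ) :
    2 * ((n : ℝ≥0∞) - 1) ^ 2 ≤ expHit μ₁ (n : ℤ) + expHit μₙ 1 := by
  by_cases hdeg0 : ∃ i : ℤ, 2 ≤ i ∧ i ≤ (n : ℤ) - 1 ∧ π i = 0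
  · -- some upward probability vanishes: E_1[T_n] = ∞
    obtain ⟨i, hi2, hiN, hi0⟩ := hdeg0
    have htop : expHit μ₁ ((n : ℤ)) = ⊤ := by
      refine expHit_eq_top_deg h₁ (C := Set.Icc 1 i) ?_ ?_ ?_ ?_
      · intro x hx y hq
        rw [Set.mem_Icc] at hx ⊢
        rcases nnTrans_ne_zero hq with ⟨hx1, hy⟩ | ⟨hxN, hy⟩ | ⟨h1, h2, hc⟩
        · omega
        · omega
        · rcases hc with ⟨hy, hne0⟩ | ⟨hy, -⟩
          · by_cases hxi : x = i
            · exact absurd (hxi ▸ hi0) hne0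
            · omega
          · omega
      · rw [Set.mem_Icc]; omega
      · rw [Set.mem_Icc]; omega
      · intro x hx
        rw [Set.mem_Icc] at hx
        exact nn_sum_one hn hπ (by rw [Set.mem_Icc]; omega)
    rw [htop, top_add]
    exact le_top
  by_cases hdeg1 : ∃ i : ℤ, 2 ≤ i ∧ i ≤ (n : ℤ) - 1 ∧ π i = 1
  · -- some downward probability vanishes: E_n[T_1] = ∞
    obtain ⟨i, hi2, hiN, hi1⟩ := hdeg1
    have htop : expHit μₙ 1 = ⊤ := by
      refine expHit_eq_top_deg hₙ (C := Set.Icc i (n : ℤ)) ?_ ?_ ?_ ?_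
      · intro x hx y hq
        rw [Set.mem_Icc] at hx ⊢
        rcases nnTrans_ne_zero hq with ⟨hx1, hy⟩ | ⟨hxN, hy⟩ | ⟨h1, h2, hc⟩
        · omega
        · omega
        · rcases hc with ⟨hy, -⟩ | ⟨hy, hne0⟩
          · omega
          · by_cases hxi : x = i
            · refine absurd ?_ hne0
              rw [hxi, hi1]
              exact tsub_self 1
            · omega
      · rw [Set.mem_Icc]; omega
      · rw [Set.mem_Icc]; omega
      · intro x hx
        rw [Set.mem_Icc] at hx
        exact nn_sum_one hn hπ (by rw [Set.mem_Icc]; omega)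
    rw [htop, add_top]
    exact le_top
  -- main case
  push_neg at hdeg0 hdeg1
  have hg : Good n π := ⟨hn, hπ, hdeg0, hdeg1⟩
  have hCmain : ∀ x ∈ Set.Icc (1:ℤ) (n:ℤ), ∀ y, nnTrans 1 n π x y ≠ 0 →
      y ∈ Set.Icc (1:ℤ) (n:ℤ) := by
    intro x hx y hq
    rw [Set.mem_Icc] at hx ⊢
    rcases nnTrans_ne_zero hq with ⟨hx1, hy⟩ | ⟨hxN, hy⟩ | ⟨h1, h2, hc⟩
    · omega
    · omega
    · rcases hc with ⟨hy, -⟩ | ⟨hy, -⟩ <;> omega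
  have hφ : phiF π n 1 ≤ expHit μ₁ ((n : ℤ)) := by
    refine sup_le_expHit h₁ hCmain (by rw [Set.mem_Icc]; omega) hg.phiF_j
      hg.phiF_super hg.phiF_K hg.phiF_K_ne_top
  have hψ : psiF π n (n : ℤ) ≤ expHit μₙ 1 := by
    refine sup_le_expHit hₙ hCmain (by rw [Set.mem_Icc]; omega) hg.psiF_j
      hg.psiF_super hg.psiF_K hg.psiF_K_ne_top
  calc 2 * ((n : ℝ≥0∞) - 1) ^ 2 ≤ phiF π n 1 + psiF π n (n:ℤ) := hg.total
    _ ≤ expHit μ₁ ((n : ℤ)) + expHit μₙ 1 := add_le_add hφ hψ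

end
end

section
/- For the standard random walk on {1,…,n} with reflecting barriers (π_i = 1/2 for all interior states), E[T_{1,n}] + E[T_{n,1}] = 2(n−1)²; hence the lower bound 2(n−1)² on E[T_{1,n}] + E[T_{n,1}] over all nearest-neighbour chains with reflecting barriers is attained by the standard random walk. -/
open MeasureTheory ENNReal Finset

noncomputable section

namespace S3

/-- truncation of a trajectory after time `K`. -/
def tr (K : ℕ) (ω : ℕ → ℤ) : ℕ → ℤ := fun t => if t ≤ K then ω t else 0

/-- point cylinder -/
def cyl (K : ℕ) (v : ℕ → ℤ) : Set (ℕ → ℤ) := {ω | ∀ t ≤ K, ω t = v t}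

lemma tr_eq_of_le {K t : ℕ} (h : t ≤ K) (ω : ℕ → ℤ) : tr K ω t = ω t := if_pos h

lemma tr_eq_zero {K t : ℕ} (h : ¬ t ≤ K) (ω : ℕ → ℤ) : tr K ω t = 0 := if_neg h

lemma measurableSet_cyl (K : ℕ) (v : ℕ → ℤ) : MeasurableSet (cyl K v) := by
  have : cyl K v = ⋂ t ∈ Set.Iic K, (fun ω : ℕ → ℤ => ω t) ⁻¹' {v t} := by
    ext ω; simp [cyl]
  rw [this]
  exact MeasurableSet.biInter (Set.to_countable _)
    fun t _ => (measurable_pi_apply t) (measurableSet_singleton _)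

lemma countable_range_tr (K : ℕ) : (Set.range (tr K)).Countable := by
  have h : Set.range (tr K) ⊆
      Set.range (fun g : Fin (K + 1) → ℤ => fun t : ℕ =>
        if h : t < K + 1 then g ⟨t, h⟩ else 0) := by
    rintro _ ⟨ω, rfl⟩
    exact ⟨fun i => ω i, by funext t; by_cases ht : t ≤ K <;>
      simp [tr, ht, Nat.lt_succ_iff]⟩
  exact (Set.countable_range _).mono h

lemma mem_cyl_tr (K : ℕ) (ω : ℕ → ℤ) : ω ∈ cyl K (tr K ω) :=
  fun t ht => (tr_eq_of_le ht ω).symm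

/-- `E` is determined by coordinates `0..K`. -/
def Det (K : ℕ) (E : Set (ℕ → ℤ)) : Prop :=
  ∀ ω ω', tr K ω = tr K ω' → (ω ∈ E ↔ ω' ∈ E)

lemma tr_eq_of_cyl {K : ℕ} {v : ℕ → ℤ} (hv : v ∈ Set.range (tr K)) {ω : ℕ → ℤ}
    (hω : ω ∈ cyl K v) : tr K ω = v := by
  obtain ⟨u, rfl⟩ := hv
  funext t
  by_cases ht : t ≤ K
  · rw [tr_eq_of_le ht]; exact hω t ht
  · rw [tr_eq_zero ht, tr_eq_zero ht]

lemma det_eq_biUnion {K : ℕ} {E : Set (ℕ → ℤ)} (hE : Det K E) :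
    E = ⋃ v ∈ tr K '' E, cyl K v := by
  ext ω
  constructor
  · intro hω
    exact Set.mem_biUnion ⟨ω, hω, rfl⟩ (mem_cyl_tr K ω)
  · intro hω
    obtain ⟨v, hv, hωv⟩ := Set.mem_iUnion₂.1 hω
    obtain ⟨ω', hω', rfl⟩ := hv
    have : tr K ω = tr K ω' := tr_eq_of_cyl ⟨ω', rfl⟩ hωv
    exact (hE ω ω' this).2 hω'

lemma disjoint_cyl {K : ℕ} {S : Set (ℕ → ℤ)} (hS : S ⊆ Set.range (tr K)) :
    S.PairwiseDisjoint (cyl K) := by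
  intro v hv v' hv' hne
  refine Set.disjoint_left.2 fun ω hω hω' => hne ?_
  rw [← tr_eq_of_cyl (hS hv) hω, ← tr_eq_of_cyl (hS hv') hω']

lemma image_tr_subset_range {K : ℕ} (E : Set (ℕ → ℤ)) :
    tr K '' E ⊆ Set.range (tr K) := Set.image_subset_range _ _

lemma measure_det (μ : Measure (ℕ → ℤ)) {K : ℕ} {E : Set (ℕ → ℤ)} (hE : Det K E) :
    μ E = ∑' v : (tr K '' E), μ (cyl K (v : ℕ → ℤ)) := by
  conv_lhs => rw [det_eq_biUnion hE]
  exact measure_biUnion (((countable_range_tr K).mono (image_tr_subset_range E)))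
    (disjoint_cyl (image_tr_subset_range E)) (fun v _ => measurableSet_cyl K v)

end S3

namespace S3

variable {p : ℤ → ℤ → ℝ≥0∞} {s j : ℤ} {μ : Measure (ℕ → ℤ)}

lemma measure_cyl (hμ : IsMarkovChain p s μ) (K : ℕ) (v : ℕ → ℤ) :
    μ (cyl K v) = (if v 0 = s then 1 else 0) * ∏ t ∈ Finset.range K, p (v t) (v (t + 1)) :=
  hμ.2 K v

/-- The one-step Markov property for events determined by coordinates `0..K`
whose `K`-th coordinate equals `m`. -/
lemma markov_step (hμ : IsMarkovChain p s μ) {K : ℕ} {E : Set (ℕ → ℤ)} (hE : Det K E)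
    {m : ℤ} (hEm : ∀ ω ∈ E, ω K = m) (i : ℤ) :
    μ (E ∩ {ω | ω (K + 1) = i}) = μ E * p m i := by
  classical
  set S := tr K '' E with hS
  have hSr : S ⊆ Set.range (tr K) := image_tr_subset_range E
  -- the decomposition of the intersected event
  have hdecomp : E ∩ {ω | ω (K + 1) = i} =
      ⋃ v ∈ S, cyl (K + 1) (Function.update v (K + 1) i) := by
    ext ω
    constructor
    · rintro ⟨hωE, hωi⟩
      refine Set.mem_biUnion ⟨ω, hωE, rfl⟩ ?_
      intro t ht
      rcases Nat.lt_succ_iff_lt_or_eq.1 (Nat.lt_succ_of_le ht) with h | rfl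
      · have ht' : t ≤ K := Nat.lt_succ_iff.1 h
        rw [Function.update_of_ne (by omega)]
        exact (tr_eq_of_le ht' ω).symm
      · rw [Function.update_self]; exact hωi
    · intro hω
      obtain ⟨v, hv, hωv⟩ := Set.mem_iUnion₂.1 hω
      have hcylK : ω ∈ cyl K v := by
        intro t ht
        have h2 := hωv t (le_trans ht (Nat.le_succ K))
        rwa [Function.update_of_ne (by omega)] at h2
      have hωE : ω ∈ E := by
        rw [det_eq_biUnion hE]
        exact Set.mem_biUnion hv hcylK
      refine ⟨hωE, ?_⟩
      have h3 := hωv (K + 1) le_rfl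
      rwa [Function.update_self] at h3
  -- cylinder subsets
  have hsub : ∀ v : ℕ → ℤ, cyl (K + 1) (Function.update v (K + 1) i) ⊆ cyl K v := by
    intro v ω hω t ht
    have h2 := hω t (le_trans ht (Nat.le_succ K))
    rwa [Function.update_of_ne (by omega)] at h2
  have hdisj : S.PairwiseDisjoint (fun v => cyl (K + 1) (Function.update v (K + 1) i)) := by
    intro v hv v' hv' hne
    exact Disjoint.mono (hsub v) (hsub v') (disjoint_cyl hSr hv hv' hne)
  rw [hdecomp, measure_biUnion ((countable_range_tr K).mono hSr) hdisj
    (fun v _ => measurableSet_cyl _ _), measure_det μ hE, ← ENNReal.tsum_mul_right]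
  refine tsum_congr fun ⟨v, hv⟩ => ?_
  -- key cylinder computation
  obtain ⟨ω', hω'E, rfl⟩ := hv
  have hvK : tr K ω' K = m := by rw [tr_eq_of_le le_rfl]; exact hEm ω' hω'E
  simp only
  rw [measure_cyl hμ, measure_cyl hμ, Finset.prod_range_succ]
  have h0 : Function.update (tr K ω') (K + 1) i 0 = tr K ω' 0 :=
    Function.update_of_ne (by omega) _ _
  have hK1 : Function.update (tr K ω') (K + 1) i (K + 1) = i := Function.update_self _ _ _
  have hle : ∀ t ≤ K, Function.update (tr K ω') (K + 1) i t = tr K ω' t := fun t ht =>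
    Function.update_of_ne (by omega) _ _
  rw [h0, hK1, hle K le_rfl, hvK]
  have hprod : ∏ t ∈ Finset.range K,
      p (Function.update (tr K ω') (K + 1) i t) (Function.update (tr K ω') (K + 1) i (t + 1)) =
      ∏ t ∈ Finset.range K, p (tr K ω' t) (tr K ω' (t + 1)) := by
    refine Finset.prod_congr rfl fun t ht => ?_
    have ht' := Finset.mem_range.1 ht
    rw [hle t (by omega), hle (t + 1) (by omega)]
  rw [hprod]; ring

end S3

namespace S3

variable {p : ℤ → ℤ → ℝ≥0∞} {s j : ℤ} {μ : Measure (ℕ → ℤ)}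

/-- the sub-probability vector of the chain killed at `j`. -/
def fker (p : ℤ → ℤ → ℝ≥0∞) (s j : ℤ) : ℕ → ℤ → ℝ≥0∞
  | 0 => fun i => if i = s then 1 else 0
  | K + 1 => fun i => if i = j then 0 else ∑' m, fker p s j K m * p m i

/-- survival event -/
def surv (j : ℤ) (K : ℕ) : Set (ℕ → ℤ) := {ω | ∀ t, 0 < t → t ≤ K → ω t ≠ j}

def B (j : ℤ) (K : ℕ) (i : ℤ) : Set (ℕ → ℤ) := surv j K ∩ {ω | ω K = i}

lemma det_B (j : ℤ) (K : ℕ) (i : ℤ) : Det K (B j K i) := by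
  have key : ∀ ω ω' : ℕ → ℤ, (∀ t ≤ K, ω t = ω' t) → ω' ∈ B j K i → ω ∈ B j K i := by
    rintro ω ω' he ⟨h1, h2⟩
    refine ⟨fun t ht htK => ?_, ?_⟩
    · rw [he t htK]; exact h1 t ht htK
    · show ω K = i
      rw [he K le_rfl]; exact h2
  intro ω ω' h
  have he : ∀ t ≤ K, ω t = ω' t := by
    intro t ht
    have := congrFun h t
    rwa [tr_eq_of_le ht, tr_eq_of_le ht] at this
  exact ⟨key ω' ω (fun t ht => (he t ht).symm), key ω ω' he⟩

lemma measurableSet_surv (j : ℤ) (K : ℕ) : MeasurableSet (surv j K) := by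
  have h1 : surv j K = ⋂ t ∈ Set.Icc 1 K, (fun ω : ℕ → ℤ => ω t) ⁻¹' ({j}ᶜ) := by
    ext ω
    simp only [surv, Set.mem_setOf_eq, Set.mem_iInter, Set.mem_Icc, Set.mem_preimage,
      Set.mem_compl_iff, Set.mem_singleton_iff, and_imp]
    constructor
    · intro h t h1t htK; exact h t h1t htK
    · intro h t ht htK; exact h t ht htK
  rw [h1]
  exact MeasurableSet.biInter (Set.to_countable _)
    fun t _ => (measurable_pi_apply t) (measurableSet_singleton j).compl

lemma measurableSet_B (j : ℤ) (K : ℕ) (i : ℤ) : MeasurableSet (B j K i) := by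
  have h2 := measurableSet_surv j K
  have h3 : MeasurableSet {ω : ℕ → ℤ | ω K = i} :=
    show MeasurableSet ((fun ω : ℕ → ℤ => ω K) ⁻¹' {i}) from
      (measurable_pi_apply K) (measurableSet_singleton i)
  exact h2.inter h3

lemma measurableSet_inter_coord (j : ℤ) (K : ℕ) (m i : ℤ) :
    MeasurableSet (B j K m ∩ {ω : ℕ → ℤ | ω (K + 1) = i}) :=
  (measurableSet_B j K m).inter
    (show MeasurableSet ((fun ω : ℕ → ℤ => ω (K + 1)) ⁻¹' {i}) from
      (measurable_pi_apply (K + 1)) (measurableSet_singleton i))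

lemma B_K_eq {j : ℤ} {K : ℕ} {i : ℤ} : ∀ ω ∈ B j K i, ω K = i := fun ω hω => hω.2

lemma measure_B (hμ : IsMarkovChain p s μ) (j : ℤ) : ∀ K i, μ (B j K i) = fker p s j K i := by
  intro K
  induction K with
  | zero =>
    intro i
    have h1 : B j 0 i = {ω | ∀ t ≤ 0, ω t = (fun _ => i) t} := by
      ext ω
      simp only [B, surv, Set.mem_inter_iff, Set.mem_setOf_eq, Nat.le_zero]
      constructor
      · rintro ⟨-, h2⟩ t ht; subst ht; exact h2
      · intro h2; exact ⟨fun t ht htK => by omega, h2 0 rfl⟩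
    rw [h1, hμ.2 0 (fun _ => i)]
    simp [fker]
  | succ K ih =>
    intro i
    by_cases hij : i = j
    · have hempty : B j (K + 1) i = ∅ := by
        ext ω
        simp only [B, surv, Set.mem_inter_iff, Set.mem_setOf_eq, Set.mem_empty_iff_false,
          iff_false, not_and]
        intro h1 h2
        exact h1 (K + 1) (Nat.succ_pos K) le_rfl (hij ▸ h2)
      rw [hempty, measure_empty]
      simp [fker, hij]
    · have hunion : B j (K + 1) i = ⋃ m : ℤ, (B j K m ∩ {ω | ω (K + 1) = i}) := by
        ext ω
        simp only [B, surv, Set.mem_iUnion, Set.mem_inter_iff, Set.mem_setOf_eq]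
        constructor
        · rintro ⟨h1, h2⟩
          exact ⟨ω K, ⟨⟨fun t ht htK => h1 t ht (by omega), rfl⟩, h2⟩⟩
        · rintro ⟨m, ⟨⟨h1, h2⟩, h3⟩⟩
          refine ⟨fun t ht htK => ?_, h3⟩
          rcases Nat.lt_succ_iff_lt_or_eq.1 (Nat.lt_succ_of_le htK) with h | rfl
          · exact h1 t ht (by omega)
          · rw [h3]; exact hij
      have hdisj : Pairwise (Function.onFun Disjoint
          fun m => B j K m ∩ {ω : ℕ → ℤ | ω (K + 1) = i}) := by
        intro m m' hmm'
        refine Set.disjoint_left.2 ?_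
        rintro ω ⟨⟨-, h1⟩, -⟩ ⟨⟨-, h2⟩, -⟩
        exact hmm' (h1 ▸ h2 ▸ rfl)
      rw [hunion, measure_iUnion hdisj (fun m => measurableSet_inter_coord j K m i)]
      have hterm : ∀ m : ℤ, μ (B j K m ∩ {ω | ω (K + 1) = i}) = fker p s j K m * p m i := by
        intro m
        rw [markov_step hμ (det_B j K m) (B_K_eq) i, ih m]
      rw [tsum_congr hterm]
      simp only [fker, if_neg hij]

lemma measure_surv (hμ : IsMarkovChain p s μ) (j : ℤ) (K : ℕ) :
    μ (surv j K) = ∑' i, fker p s j K i := by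
  have hunion : surv j K = ⋃ i : ℤ, B j K i := by
    ext ω
    simp only [B, Set.mem_iUnion, Set.mem_inter_iff, Set.mem_setOf_eq]
    exact ⟨fun h => ⟨ω K, h, rfl⟩, fun ⟨i, h, _⟩ => h⟩
  have hdisj : Pairwise (Function.onFun Disjoint fun i => B j K i) := by
    intro m m' hmm'
    refine Set.disjoint_left.2 ?_
    rintro ω ⟨-, h1⟩ ⟨-, h2⟩
    exact hmm' (h1 ▸ h2 ▸ rfl)
  rw [hunion, measure_iUnion hdisj (measurableSet_B j K)]
  exact tsum_congr (measure_B hμ j K)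

end S3

namespace S3

variable {p : ℤ → ℤ → ℝ≥0∞} {s j : ℤ} {μ : Measure (ℕ → ℤ)}

lemma hitTime_eq_tsum (j : ℤ) (ω : ℕ → ℤ) :
    hitTime j ω = ∑' K : ℕ, (surv j K).indicator (fun _ => (1 : ℝ≥0∞)) ω := by
  classical
  have hmem : ∀ K : ℕ, ω ∈ surv j K ↔ ∀ t ≤ K, ¬(0 < t ∧ ω t = j) := by
    intro K
    simp only [surv, Set.mem_setOf_eq, not_and]
    constructor
    · intro h t ht h0; exact h t h0 ht
    · intro h t h0 ht; exact h t ht h0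
  by_cases hex : ∃ t, 0 < t ∧ ω t = j
  · set t₀ := Nat.find hex with ht₀
    have hfind := Nat.find_spec hex
    have hval : hitTime j ω = (t₀ : ℝ≥0∞) := by
      apply le_antisymm
      · exact sInf_le ⟨t₀, hfind, rfl⟩
      · refine le_sInf ?_
        rintro x ⟨t, ht, rfl⟩
        simp only [Nat.cast_le (α := ℝ≥0∞)]
        exact Nat.find_le ht
    have hind : ∀ K : ℕ, (surv j K).indicator (fun _ => (1 : ℝ≥0∞)) ω =
        if K < t₀ then 1 else 0 := by
      intro K
      by_cases hK : K < t₀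
      · rw [if_pos hK, Set.indicator_of_mem]
        rw [hmem]
        exact (Nat.lt_find_iff hex K).1 hK
      · rw [if_neg hK, Set.indicator_of_notMem]
        rw [hmem]
        push_neg
        exact ⟨t₀, by omega, hfind⟩
    rw [hval, tsum_congr hind, tsum_eq_sum (s := Finset.range t₀)
      (fun b hb => if_neg (by simpa using hb))]
    rw [Finset.sum_ite_of_true (fun b hb => Finset.mem_range.1 hb)]
    simp
  · have hval : hitTime j ω = ⊤ := by
      have hempty : {t : ℕ | 0 < t ∧ ω t = j} = ∅ := by
        ext t; simpa using fun h1 h2 => hex ⟨t, h1, h2⟩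
      rw [hitTime, hempty]
      simp
    have hind : ∀ K : ℕ, (surv j K).indicator (fun _ => (1 : ℝ≥0∞)) ω = 1 := by
      intro K
      rw [Set.indicator_of_mem]
      rw [hmem]
      intro t ht hc
      exact hex ⟨t, hc⟩
    rw [hval, tsum_congr hind]
    exact (ENNReal.tsum_const_eq_top_of_ne_zero one_ne_zero).symm

lemma expHit_eq (hμ : IsMarkovChain p s μ) (j : ℤ) :
    expHit μ j = ∑' K : ℕ, ∑' i : ℤ, fker p s j K i := by
  rw [expHit]
  have h1 : ∫⁻ ω, hitTime j ω ∂μ =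
      ∫⁻ ω, ∑' K : ℕ, (surv j K).indicator (fun _ => (1 : ℝ≥0∞)) ω ∂μ :=
    lintegral_congr (hitTime_eq_tsum j)
  rw [h1, lintegral_tsum
    (fun K => (measurable_const.indicator (measurableSet_surv j K)).aemeasurable)]
  refine tsum_congr fun K => ?_
  rw [lintegral_indicator_const (measurableSet_surv j K) 1, one_mul, measure_surv hμ j K]

end S3

namespace S3

open Filter

lemma tsum_fker (p : ℤ → ℤ → ℝ≥0∞) (s j : ℤ) (h : ℤ → ℕ) (C : ℕ) (V : Set ℤ)
    (hs : s ∈ V)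
    (hclosed : ∀ m ∈ V, ∀ i, i ≠ j → p m i ≠ 0 → i ∈ V)
    (hharm : ∀ m ∈ V, (h m : ℝ≥0∞) = 1 + ∑' i, (if i = j then 0 else p m i * h i))
    (hbound : ∀ i, h i ≤ C) :
    ∑' K : ℕ, ∑' i : ℤ, fker p s j K i = h s := by
  classical
  have hsupp : ∀ K i, fker p s j K i ≠ 0 → i ∈ V := by
    intro K
    induction K with
    | zero =>
      intro i hi
      simp only [fker, ne_eq, ite_eq_right_iff, one_ne_zero] at hi
      have : i = s := by by_contra hc; exact hi (fun h' => absurd h' hc)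
      exact this ▸ hs
    | succ K ih =>
      intro i hi
      simp only [fker] at hi
      by_cases hij : i = j
      · rw [if_pos hij] at hi; exact absurd rfl hi
      · rw [if_neg hij] at hi
        obtain ⟨m, hm⟩ : ∃ m, fker p s j K m * p m i ≠ 0 := by
          by_contra hc
          push_neg at hc
          exact hi (by simpa using ENNReal.tsum_eq_zero.2 hc)
        exact hclosed m (ih m fun h0 => hm (by rw [h0, zero_mul])) i hij
          fun h0 => hm (by rw [h0, mul_zero])
  set Φ : ℕ → ℝ≥0∞ := fun K => ∑' i, fker p s j K i * h i with hΦ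
  set S : ℕ → ℝ≥0∞ := fun K => ∑' i, fker p s j K i with hSdef
  have hstep : ∀ K, Φ K = S K + Φ (K + 1) := by
    intro K
    have h1 : ∀ i, fker p s j K i * h i =
        fker p s j K i + ∑' l, fker p s j K i * (if l = j then 0 else p i l * h l) := by
      intro i
      by_cases hi : fker p s j K i = 0
      · simp [hi]
      · rw [hharm i (hsupp K i hi), mul_add, mul_one, ENNReal.tsum_mul_left]
    calc Φ K = ∑' i, (fker p s j K i +
          ∑' l, fker p s j K i * (if l = j then 0 else p i l * h l)) := tsum_congr h1
      _ = S K + ∑' i, ∑' l, fker p s j K i * (if l = j then 0 else p i l * h l) :=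
          ENNReal.tsum_add
      _ = S K + ∑' l, ∑' i, fker p s j K i * (if l = j then 0 else p i l * h l) := by
          rw [ENNReal.tsum_comm]
      _ = S K + Φ (K + 1) := by
          congr 1
          refine tsum_congr fun l => ?_
          by_cases hl : l = j
          · simp [hl, fker]
          · simp only [if_neg hl]
            have h2 : ∀ i, fker p s j K i * (p i l * (h l : ℝ≥0∞)) =
                (fker p s j K i * p i l) * h l := fun i => (mul_assoc _ _ _).symm
            rw [tsum_congr h2, ENNReal.tsum_mul_right]
            have h3 : fker p s j (K + 1) l = ∑' i, fker p s j K i * p i l := by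
              simp [fker, hl]
            rw [h3]
  have hΦ0eq : Φ 0 = h s := by
    have : ∀ i : ℤ, i ≠ s → fker p s j 0 i * (h i : ℝ≥0∞) = 0 := by
      intro i hi; simp [fker, hi]
    show (∑' i : ℤ, fker p s j 0 i * (h i : ℝ≥0∞)) = h s
    rw [tsum_eq_single s this]
    simp [fker]
  have hpart : ∀ N, (∑ K ∈ Finset.range N, S K) + Φ N = h s := by
    intro N
    induction N with
    | zero => simpa using hΦ0eq
    | succ N ihN =>
      rw [Finset.sum_range_succ, add_assoc, ← hstep N, ihN]
  have htsum_le : ∑' K, S K ≤ (h s : ℝ≥0∞) :=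
    ENNReal.tsum_le_of_sum_range_le fun N => le_trans (self_le_add_right _ _) (hpart N).le
  have hSne : ∑' K, S K ≠ ⊤ :=
    fun hc => absurd (hc ▸ htsum_le) (by simp [lt_irrefl])
  have hS0 : Tendsto S atTop (nhds 0) := ENNReal.tendsto_atTop_zero_of_tsum_ne_top hSne
  have hΦle : ∀ N, Φ N ≤ S N * C := by
    intro N
    show (∑' i : ℤ, fker p s j N i * (h i : ℝ≥0∞)) ≤ (∑' i : ℤ, fker p s j N i) * C
    rw [← ENNReal.tsum_mul_right]
    exact Summable.tsum_le_tsum (fun i => mul_le_mul' le_rfl (Nat.cast_le.2 (hbound i)))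
      ENNReal.summable ENNReal.summable
  have hSC : Tendsto (fun N => S N * (C : ℝ≥0∞)) atTop (nhds 0) := by
    have := ENNReal.Tendsto.mul_const hS0 (Or.inr (natCast_ne_top C))
    simpa using this
  have hΦ0 : Tendsto Φ atTop (nhds 0) :=
    tendsto_of_tendsto_of_tendsto_of_le_of_le tendsto_const_nhds hSC
      (fun N => zero_le) hΦle
  have hlim : Tendsto (fun N => (∑ K ∈ Finset.range N, S K) + Φ N) atTop
      (nhds ((∑' K, S K) + 0)) := (ENNReal.tendsto_nat_tsum S).add hΦ0
  have hconst : Tendsto (fun _ : ℕ => (h s : ℝ≥0∞)) atTop (nhds (h s)) := tendsto_const_nhds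
  have : (∑' K, S K) + 0 = h s := by
    refine tendsto_nhds_unique ?_ hconst
    have heq : (fun N => (∑ K ∈ Finset.range N, S K) + Φ N) = fun _ => (h s : ℝ≥0∞) :=
      funext hpart
    rwa [heq] at hlim
  rw [← this, add_zero]

end S3

namespace S3

def h1fun (n : ℕ) : ℤ → ℕ := fun i => ((n - 1 : ℤ) ^ 2 - (i - 1) ^ 2).toNat

def hnfun (n : ℕ) : ℤ → ℕ := fun i => ((n - 1 : ℤ) ^ 2 - ((n : ℤ) - i) ^ 2).toNat

lemma two_cancel {a b : ℝ≥0∞} (h : 2 * a = 2 * b) : a = b :=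
  (ENNReal.mul_left_strictMono two_ne_zero ENNReal.ofNat_ne_top).injective
    (by rwa [mul_comm 2 a, mul_comm 2 b] at h)

lemma two_half : (2 : ℝ≥0∞) * (1 / 2) = 1 := by
  rw [one_div, ENNReal.mul_inv_cancel two_ne_zero ENNReal.ofNat_ne_top]

lemma q_one {n : ℕ} (i : ℤ) :
    nnTrans 1 n (fun _ => 1 / 2) 1 i = if i = 2 then 1 else 0 := by
  simp only [nnTrans, if_pos rfl]
  norm_num

lemma q_top {n : ℕ} (hn : 1 < n) (i : ℤ) :
    nnTrans 1 n (fun _ => 1 / 2) n i = if i = (n : ℤ) - 1 then 1 else 0 := by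
  have h1 : (n : ℤ) ≠ 1 := by exact_mod_cast hn.ne'
  simp only [nnTrans, if_neg h1]
  simp

lemma q_int {n : ℕ} {m : ℤ} (hm1 : 1 < m) (hmn : m < n) (i : ℤ) :
    nnTrans 1 n (fun _ => 1 / 2) m i =
      if i = m + 1 then 1 / 2 else if i = m - 1 then 1 / 2 else 0 := by
  have h1 : m ≠ 1 := hm1.ne'
  have h2 : m ≠ (n : ℤ) := hmn.ne
  have h3 : (1 : ℤ) < m ∧ m < n := ⟨hm1, hmn⟩
  simp only [nnTrans, if_neg h1, if_neg h2, if_pos h3]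
  congr 1
  rw [show (1 : ℝ≥0∞) - 1 / 2 = 1 / 2 by norm_num]

lemma h1cast {n : ℕ} {i : ℤ} (h1 : 1 ≤ i) (h2 : i ≤ n) :
    (h1fun n i : ℤ) = ((n : ℤ) - 1) ^ 2 - (i - 1) ^ 2 := by
  refine Int.toNat_of_nonneg ?_
  nlinarith [mul_nonneg (sub_nonneg.2 h2) (by linarith : (0 : ℤ) ≤ (n : ℤ) - 1 + (i - 1))]

lemma hncast {n : ℕ} {i : ℤ} (h1 : 1 ≤ i) (h2 : i ≤ n) :
    (hnfun n i : ℤ) = ((n : ℤ) - 1) ^ 2 - ((n : ℤ) - i) ^ 2 := by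
  refine Int.toNat_of_nonneg ?_
  nlinarith [mul_nonneg (by linarith : (0 : ℤ) ≤ i - 1)
    (by linarith : (0 : ℤ) ≤ (n : ℤ) - 1 + ((n : ℤ) - i))]

lemma h1fun_top {n : ℕ} : h1fun n n = 0 := by
  simp [h1fun]

lemma hnfun_bot {n : ℕ} : hnfun n 1 = 0 := by
  simp [hnfun]

lemma h1fun_bound {n : ℕ} (hn : 1 ≤ n) (i : ℤ) : h1fun n i ≤ (n - 1) ^ 2 := by
  rw [h1fun]
  refine Int.toNat_le.2 ?_
  push_cast [Nat.cast_sub hn]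
  nlinarith [sq_nonneg (i - 1)]

lemma hnfun_bound {n : ℕ} (hn : 1 ≤ n) (i : ℤ) : hnfun n i ≤ (n - 1) ^ 2 := by
  rw [hnfun]
  refine Int.toNat_le.2 ?_
  push_cast [Nat.cast_sub hn]
  nlinarith [sq_nonneg ((n : ℤ) - i)]

-- Chain 1: start 1, target n
lemma exp1 {n : ℕ} (hn : 1 < n) {μ : Measure (ℕ → ℤ)}
    (hμ : IsMarkovChain (nnTrans 1 n (fun _ => 1 / 2)) 1 μ) :
    expHit μ (n : ℤ) = (h1fun n 1 : ℝ≥0∞) := by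
  have hnZ : (1 : ℤ) < n := by exact_mod_cast hn
  rw [expHit_eq hμ (n : ℤ)]
  refine tsum_fker _ 1 (n : ℤ) (h1fun n) ((n - 1) ^ 2) {i : ℤ | 1 ≤ i ∧ i < n}
    ⟨le_refl 1, hnZ⟩ ?closed ?harm (h1fun_bound hn.le)
  case closed =>
    rintro m ⟨hm1, hmn⟩ i hij hp
    by_cases hm : m = 1
    · subst hm
      rw [q_one] at hp
      by_cases h2 : i = 2
      · subst h2
        refine ⟨by norm_num, ?_⟩
        have : (2 : ℤ) ≤ n := by omega
        omega
      · rw [if_neg h2] at hp; exact absurd rfl hp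
    · have hm1' : 1 < m := lt_of_le_of_ne hm1 (Ne.symm hm)
      rw [q_int hm1' hmn] at hp
      by_cases hp1 : i = m + 1
      · subst hp1; constructor <;> omega
      · rw [if_neg hp1] at hp
        by_cases hp2 : i = m - 1
        · subst hp2; constructor <;> omega
        · rw [if_neg hp2] at hp; exact absurd rfl hp
  case harm =>
    rintro m ⟨hm1, hmn⟩
    by_cases hm : m = 1
    · subst hm
      have hside : ∀ i : ℤ, i ≠ 2 →
          (if i = (n : ℤ) then 0
            else nnTrans 1 n (fun _ => 1 / 2) 1 i * (h1fun n i : ℝ≥0∞)) = 0 := by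
        intro i hi
        by_cases hin : i = (n : ℤ)
        · rw [if_pos hin]
        · rw [if_neg hin, q_one, if_neg hi, zero_mul]
      rw [tsum_eq_single 2 hside]
      have hval : (if (2 : ℤ) = (n : ℤ) then 0
          else nnTrans 1 n (fun _ => 1 / 2) 1 2 * (h1fun n 2 : ℝ≥0∞))
          = (h1fun n 2 : ℝ≥0∞) := by
        by_cases h2n : (2 : ℤ) = (n : ℤ)
        · rw [if_pos h2n, h2n]
          rw [h1fun_top]
          simp
        · rw [if_neg h2n, q_one, if_pos rfl, one_mul]
      rw [hval]
      -- ℕ arithmetic: h1fun n 1 = 1 + h1fun n 2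
      have hnat : h1fun n 1 = 1 + h1fun n 2 := by
        have hsq : 1 ≤ ((n : ℤ) - 1) ^ 2 := by nlinarith
        simp only [h1fun]
        generalize hB : ((n : ℤ) - 1) ^ 2 = B at hsq ⊢
        have e1 : ((1 : ℤ) - 1) ^ 2 = 0 := by norm_num
        have e2 : ((2 : ℤ) - 1) ^ 2 = 1 := by norm_num
        rw [e1, e2]
        omega
      rw [hnat]
      push_cast
      ring
    · have hm1' : 1 < m := lt_of_le_of_ne hm1 (Ne.symm hm)
      have hpt : ∀ i : ℤ,
          (if i = (n : ℤ) then 0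
            else nnTrans 1 n (fun _ => 1 / 2) m i * (h1fun n i : ℝ≥0∞)) =
          nnTrans 1 n (fun _ => 1 / 2) m i * (h1fun n i : ℝ≥0∞) := by
        intro i
        by_cases hin : i = (n : ℤ)
        · rw [if_pos hin, hin, h1fun_top]; simp
        · rw [if_neg hin]
      rw [tsum_congr hpt]
      have hvanish : ∀ b : ℤ, b ∉ ({m - 1, m + 1} : Finset ℤ) →
          nnTrans 1 n (fun _ => 1 / 2) m b * (h1fun n b : ℝ≥0∞) = 0 := by
        intro b hb
        simp only [Finset.mem_insert, Finset.mem_singleton] at hb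
        push_neg at hb
        rw [q_int hm1' hmn, if_neg hb.2, if_neg hb.1, zero_mul]
      rw [tsum_eq_sum hvanish, Finset.sum_pair (by omega : (m - 1 : ℤ) ≠ m + 1)]
      rw [q_int hm1' hmn, q_int hm1' hmn, if_neg (by omega : (m - 1 : ℤ) ≠ m + 1),
        if_pos rfl, if_pos rfl]
      -- now: h m = 1 + (1/2 * h (m-1) + 1/2 * h (m+1))
      have hnat : 2 * h1fun n m = 2 + h1fun n (m - 1) + h1fun n (m + 1) := by
        have c1 := h1cast (n := n) (i := m - 1) (by omega) (by omega)
        have c2 := h1cast (n := n) (i := m) (by omega) (by omega)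
        have c3 := h1cast (n := n) (i := m + 1) (by omega) (by omega)
        have : ((2 * h1fun n m : ℕ) : ℤ) = ((2 + h1fun n (m - 1) + h1fun n (m + 1) : ℕ) : ℤ) := by
          push_cast
          rw [c1, c2, c3]
          ring
        exact_mod_cast this
      apply two_cancel
      rw [mul_add, mul_add, mul_one, ← mul_assoc, ← mul_assoc, two_half, one_mul, one_mul]
      have : (2 : ℝ≥0∞) * (h1fun n m : ℝ≥0∞) =
          ((2 * h1fun n m : ℕ) : ℝ≥0∞) := by push_cast; ring
      rw [this, hnat]
      push_cast
      ring

-- Chain 2: start n, target 1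
lemma expn {n : ℕ} (hn : 1 < n) {μ : Measure (ℕ → ℤ)}
    (hμ : IsMarkovChain (nnTrans 1 n (fun _ => 1 / 2)) n μ) :
    expHit μ (1 : ℤ) = (hnfun n n : ℝ≥0∞) := by
  have hnZ : (1 : ℤ) < n := by exact_mod_cast hn
  rw [expHit_eq hμ (1 : ℤ)]
  refine tsum_fker _ n (1 : ℤ) (hnfun n) ((n - 1) ^ 2) {i : ℤ | 1 < i ∧ i ≤ n}
    ⟨hnZ, le_refl _⟩ ?closed ?harm (hnfun_bound hn.le)
  case closed =>
    rintro m ⟨hm1, hmn⟩ i hij hp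
    by_cases hm : m = (n : ℤ)
    · subst hm
      rw [q_top hn] at hp
      by_cases h2 : i = (n : ℤ) - 1
      · subst h2; constructor <;> omega
      · rw [if_neg h2] at hp; exact absurd rfl hp
    · have hmn' : m < n := lt_of_le_of_ne hmn hm
      rw [q_int hm1 hmn'] at hp
      by_cases hp1 : i = m + 1
      · subst hp1; constructor <;> omega
      · rw [if_neg hp1] at hp
        by_cases hp2 : i = m - 1
        · subst hp2; constructor <;> omega
        · rw [if_neg hp2] at hp; exact absurd rfl hp
  case harm =>
    rintro m ⟨hm1, hmn⟩
    by_cases hm : m = (n : ℤ)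
    · subst hm
      have hside : ∀ i : ℤ, i ≠ (n : ℤ) - 1 →
          (if i = (1 : ℤ) then 0
            else nnTrans 1 n (fun _ => 1 / 2) n i * (hnfun n i : ℝ≥0∞)) = 0 := by
        intro i hi
        by_cases hin : i = (1 : ℤ)
        · rw [if_pos hin]
        · rw [if_neg hin, q_top hn, if_neg hi, zero_mul]
      rw [tsum_eq_single ((n : ℤ) - 1) hside]
      have hval : (if ((n : ℤ) - 1) = (1 : ℤ) then 0
          else nnTrans 1 n (fun _ => 1 / 2) n ((n : ℤ) - 1) * (hnfun n ((n : ℤ) - 1) : ℝ≥0∞))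
          = (hnfun n ((n : ℤ) - 1) : ℝ≥0∞) := by
        by_cases h2n : ((n : ℤ) - 1) = 1
        · rw [if_pos h2n, h2n, hnfun_bot]
          simp
        · rw [if_neg h2n, q_top hn, if_pos rfl, one_mul]
      rw [hval]
      have hnat : hnfun n n = 1 + hnfun n ((n : ℤ) - 1) := by
        have hsq : 1 ≤ ((n : ℤ) - 1) ^ 2 := by nlinarith
        simp only [hnfun]
        generalize hB : ((n : ℤ) - 1) ^ 2 = B at hsq ⊢
        have e1 : ((n : ℤ) - (n : ℤ)) ^ 2 = 0 := by ring
        have e2 : ((n : ℤ) - ((n : ℤ) - 1)) ^ 2 = 1 := by ring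
        rw [e1, e2]
        omega
      rw [hnat]
      push_cast
      ring
    · have hmn' : m < n := lt_of_le_of_ne hmn hm
      have hpt : ∀ i : ℤ,
          (if i = (1 : ℤ) then 0
            else nnTrans 1 n (fun _ => 1 / 2) m i * (hnfun n i : ℝ≥0∞)) =
          nnTrans 1 n (fun _ => 1 / 2) m i * (hnfun n i : ℝ≥0∞) := by
        intro i
        by_cases hin : i = (1 : ℤ)
        · rw [if_pos hin, hin, hnfun_bot]; simp
        · rw [if_neg hin]
      rw [tsum_congr hpt]
      have hvanish : ∀ b : ℤ, b ∉ ({m - 1, m + 1} : Finset ℤ) →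
          nnTrans 1 n (fun _ => 1 / 2) m b * (hnfun n b : ℝ≥0∞) = 0 := by
        intro b hb
        simp only [Finset.mem_insert, Finset.mem_singleton] at hb
        push_neg at hb
        rw [q_int hm1 hmn', if_neg hb.2, if_neg hb.1, zero_mul]
      rw [tsum_eq_sum hvanish, Finset.sum_pair (by omega : (m - 1 : ℤ) ≠ m + 1)]
      rw [q_int hm1 hmn', q_int hm1 hmn', if_neg (by omega : (m - 1 : ℤ) ≠ m + 1),
        if_pos rfl, if_pos rfl]
      have hnat : 2 * hnfun n m = 2 + hnfun n (m - 1) + hnfun n (m + 1) := by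
        have c1 := hncast (n := n) (i := m - 1) (by omega) (by omega)
        have c2 := hncast (n := n) (i := m) (by omega) (by omega)
        have c3 := hncast (n := n) (i := m + 1) (by omega) (by omega)
        have : ((2 * hnfun n m : ℕ) : ℤ) = ((2 + hnfun n (m - 1) + hnfun n (m + 1) : ℕ) : ℤ) := by
          push_cast
          rw [c1, c2, c3]
          ring
        exact_mod_cast this
      apply two_cancel
      rw [mul_add, mul_add, mul_one, ← mul_assoc, ← mul_assoc, two_half, one_mul, one_mul]
      have : (2 : ℝ≥0∞) * (hnfun n m : ℝ≥0∞) =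
          ((2 * hnfun n m : ℕ) : ℝ≥0∞) := by push_cast; ring
      rw [this, hnat]
      push_cast
      ring

end S3

/-- For the standard random walk on `{1, …, n}` with reflecting
barriers (`π i = 1/2` at every interior state), `E[T_{1,n}] + E[T_{n,1}] = 2 (n-1)²`;
hence the lower bound `2 (n-1)²` over all nearest-neighbour chains with reflecting
barriers is attained by the standard random walk. -/
theorem statement3 (n : ℕ) (hn : 1 < n)
    (μ₁ μₙ : MeasureTheory.Measure (ℕ → ℤ))
    (h₁ : IsMarkovChain (nnTrans 1 n (fun _ => 1 / 2)) 1 μ₁)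
    (hₙ : IsMarkovChain (nnTrans 1 n (fun _ => 1 / 2)) n μₙ) :
    expHit μ₁ (n : ℤ) + expHit μₙ 1 = 2 * ((n : ℝ≥0∞) - 1) ^ 2 := by
  rw [S3.exp1 hn h₁, S3.expn hn hₙ]
  have e1 : S3.h1fun n 1 = (n - 1) ^ 2 := by
    simp only [S3.h1fun]
    rw [show ((1 : ℤ) - 1) ^ 2 = 0 by ring, sub_zero,
      show ((n : ℤ) - 1) = ((n - 1 : ℕ) : ℤ) by omega, ← Nat.cast_pow, Int.toNat_natCast]
  have e2 : S3.hnfun n n = (n - 1) ^ 2 := by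
    simp only [S3.hnfun]
    rw [show ((n : ℤ) - (n : ℤ)) ^ 2 = 0 by ring, sub_zero,
      show ((n : ℤ) - 1) = ((n - 1 : ℕ) : ℤ) by omega, ← Nat.cast_pow, Int.toNat_natCast]
  rw [e1, e2, ← two_mul]
  congr 1
  rw [Nat.cast_pow, ENNReal.natCast_sub, Nat.cast_one]
end
end

section
/- Let n > 0, let π be a vector of probabilities in (0,1) for the interior states, and consider the nearest-neighbour Markov chain on {−n,…,n} with reflecting barriers at −n and n and transition probabilities π, started at state 0. Let T_{0,n} and T_{0,−n} be the hitting times of n and of −n, and let E[T_{n,0}] and E[T_{−n,0}] be the expected hitting times of 0 from the two barriers. Then E[max(T_{0,n}, T_{0,−n})] ≥ min( E[T_{n,0}], E[T_{−n,0}] ). -/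
open MeasureTheory ENNReal Finset

noncomputable section

namespace S9
def res (k : ℕ) (ω : ℕ → ℤ) : Fin (k+1) → ℤ := fun i => ω i
def exd (k : ℕ) (w : Fin (k+1) → ℤ) : ℕ → ℤ := fun t => if h : t < k+1 then w ⟨t, h⟩ else 0
def cylP (p : ℤ → ℤ → ℝ≥0∞) (s₀ : ℤ) (k : ℕ) (w : Fin (k+1) → ℤ) : ℝ≥0∞ :=
  (if exd k w 0 = s₀ then 1 else 0) *
    ∏ t ∈ Finset.range k, p (exd k w t) (exd k w (t+1))

lemma meas_res (k : ℕ) : Measurable (res k) :=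
  measurable_pi_lambda _ fun i => measurable_pi_apply _

lemma measSet_res_pre (k : ℕ) (F : Set (Fin (k+1) → ℤ)) : MeasurableSet (res k ⁻¹' F) :=
  (Set.to_countable F).measurableSet.preimage (meas_res k)

lemma res_pre_singleton (k : ℕ) (w : Fin (k+1) → ℤ) :
    res k ⁻¹' {w} = {ω | ∀ t ≤ k, ω t = exd k w t} := by
  ext ω
  simp only [Set.mem_preimage, Set.mem_singleton_iff, Set.mem_setOf_eq, funext_iff]
  constructor
  · intro hw t ht
    have := hw ⟨t, by omega⟩
    simpa [res, exd, Nat.lt_succ_iff.mpr ht] using this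
  · intro hw i
    have := hw i (Nat.lt_succ_iff.mp i.isLt)
    simpa [res, exd, i.isLt] using this

lemma cyl_meas {p : ℤ → ℤ → ℝ≥0∞} {s₀ : ℤ} {μ : Measure (ℕ → ℤ)}
    (h : IsMarkovChain p s₀ μ) (k : ℕ) (w : Fin (k+1) → ℤ) :
    μ (res k ⁻¹' {w}) = cylP p s₀ k w := by
  rw [res_pre_singleton]
  exact h.2 k (exd k w)

lemma meas_pre {p : ℤ → ℤ → ℝ≥0∞} {s₀ : ℤ} {μ : Measure (ℕ → ℤ)}
    (h : IsMarkovChain p s₀ μ) (k : ℕ) (F : Set (Fin (k+1) → ℤ)) :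
    μ (res k ⁻¹' F) = ∑' w : F, cylP p s₀ k w := by
  have hrw : res k ⁻¹' F = ⋃ w : F, res k ⁻¹' {(w : Fin (k+1) → ℤ)} := by
    ext ω
    simp [Set.mem_iUnion]
  rw [hrw, measure_iUnion]
  · exact tsum_congr fun w => cyl_meas h k (w : Fin (k+1) → ℤ)
  · intro w w' hww
    simp only [Function.onFun, Set.disjoint_left]
    intro ω h1 h2
    exact hww (Subtype.ext (h1.symm.trans h2))
  · exact fun w => measSet_res_pre k {(w : Fin (k+1) → ℤ)}

def front (s m : ℕ) (v : Fin (s+m+1) → ℤ) : Fin (s+1) → ℤ :=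
  fun i => v ⟨i.1, by have := i.isLt; omega⟩
def back (s m : ℕ) (v : Fin (s+m+1) → ℤ) : Fin (m+1) → ℤ :=
  fun j => v ⟨s + j.1, by have := j.isLt; omega⟩
def glue (s m : ℕ) (w : Fin (s+1) → ℤ) (u : Fin (m+1) → ℤ) : Fin (s+m+1) → ℤ :=
  fun i => if h : (i : ℕ) < s+1 then w ⟨i.1, h⟩
    else u ⟨(i : ℕ) - s, by have := i.isLt; omega⟩

lemma front_glue (s m : ℕ) (w : Fin (s+1) → ℤ) (u : Fin (m+1) → ℤ) :
    front s m (glue s m w u) = w := by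
  funext i
  simp only [front, glue, i.isLt, dif_pos]

lemma back_glue (s m : ℕ) (w : Fin (s+1) → ℤ) (u : Fin (m+1) → ℤ)
    (hwu : w (Fin.last s) = u 0) : back s m (glue s m w u) = u := by
  funext j
  simp only [back, glue]
  by_cases h : s + j.1 < s + 1
  · have hj : j.1 = 0 := by omega
    have hj0 : j = 0 := by ext; simp [hj]
    rw [dif_pos h]
    have h1 : w ⟨s + j.1, by omega⟩ = w (Fin.last s) := by
      congr 1; ext; simp [Fin.last]; omega
    rw [h1, hwu, hj0]
  · rw [dif_neg h]
    congr 1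
    simp only [Fin.ext_iff, Fin.val_mk]
    omega

lemma glue_front_back (s m : ℕ) (v : Fin (s+m+1) → ℤ) :
    glue s m (front s m v) (back s m v) = v := by
  funext i
  simp only [glue, front, back]
  by_cases h : (i : ℕ) < s + 1
  · rw [dif_pos h]
  · rw [dif_neg h]
    congr 1
    simp only [Fin.ext_iff, Fin.val_mk]
    omega

lemma exd_front (s m : ℕ) (v : Fin (s+m+1) → ℤ) (t : ℕ) (ht : t ≤ s) :
    exd (s+m) v t = exd s (front s m v) t := by
  simp only [exd, front]
  rw [dif_pos (by omega), dif_pos (by omega)]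

lemma exd_back (s m : ℕ) (v : Fin (s+m+1) → ℤ) (t : ℕ) (ht : t ≤ m) :
    exd (s+m) v (s+t) = exd m (back s m v) t := by
  simp only [exd, back]
  rw [dif_pos (by omega), dif_pos (by omega)]

lemma cylP_split (p : ℤ → ℤ → ℝ≥0∞) (s₀ S : ℤ) (s m : ℕ) (v : Fin (s+m+1) → ℤ)
    (h0 : back s m v 0 = S) :
    cylP p s₀ (s+m) v = cylP p s₀ s (front s m v) * cylP p S m (back s m v) := by
  have hb0 : exd m (back s m v) 0 = S := by
    rw [← h0]
    simp only [exd]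
    rw [dif_pos (by omega)]
    congr 1
  simp only [cylP, hb0, if_pos rfl, exd_front s m v 0 (by omega)]
  rw [Finset.prod_range_add]
  have h1 : ∀ t ∈ Finset.range s,
      p (exd (s+m) v t) (exd (s+m) v (t+1)) = p (exd s (front s m v) t) (exd s (front s m v) (t+1)) := by
    intro t ht
    rw [Finset.mem_range] at ht
    rw [exd_front s m v t (by omega), exd_front s m v (t+1) (by omega)]
  have h2 : ∀ t ∈ Finset.range m,
      p (exd (s+m) v (s+t)) (exd (s+m) v (s+t+1)) = p (exd m (back s m v) t) (exd m (back s m v) (t+1)) := by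
    intro t ht
    rw [Finset.mem_range] at ht
    have : s + t + 1 = s + (t+1) := by omega
    rw [exd_back s m v t (by omega), this, exd_back s m v (t+1) (by omega)]
  rw [Finset.prod_congr rfl h1, Finset.prod_congr rfl h2, if_pos trivial, one_mul, mul_assoc]

def eqv (s m : ℕ) (F : Set (Fin (s+1) → ℤ)) (G : Set (Fin (m+1) → ℤ))
    (hF : ∀ w ∈ F, w (Fin.last s) = S) (hG : ∀ u ∈ G, u 0 = S) :
    ↥{v | front s m v ∈ F ∧ back s m v ∈ G} ≃ (↥F × ↥G) where
  toFun v := (⟨front s m v.1, v.2.1⟩, ⟨back s m v.1, v.2.2⟩)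
  invFun x := ⟨glue s m x.1.1 x.2.1, by
    constructor
    · rw [front_glue]; exact x.1.2
    · rw [back_glue s m _ _ ((hF _ x.1.2).trans (hG _ x.2.2).symm)]; exact x.2.2⟩
  left_inv v := by
    ext1
    exact glue_front_back s m v.1
  right_inv x := by
    have h1 : front s m (glue s m x.1.1 x.2.1) = x.1.1 := front_glue s m _ _
    have h2 : back s m (glue s m x.1.1 x.2.1) = x.2.1 :=
      back_glue s m _ _ ((hF _ x.1.2).trans (hG _ x.2.2).symm)
    ext i <;> simp only [h1, h2]



lemma split {p : ℤ → ℤ → ℝ≥0∞} {s₀ S : ℤ} {μ μS : Measure (ℕ → ℤ)}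
    (h : IsMarkovChain p s₀ μ) (hS : IsMarkovChain p S μS)
    (s m : ℕ) (F : Set (Fin (s+1) → ℤ)) (G : Set (Fin (m+1) → ℤ))
    (hF : ∀ w ∈ F, w (Fin.last s) = S) (hG : ∀ u ∈ G, u 0 = S) :
    μ (res s ⁻¹' F ∩ (fun ω => res m (fun i : ℕ => ω (s + i))) ⁻¹' G)
      = μ (res s ⁻¹' F) * μS (res m ⁻¹' G) := by
  have hset : res s ⁻¹' F ∩ (fun ω => res m (fun i : ℕ => ω (s + i))) ⁻¹' G
      = res (s+m) ⁻¹' {v | front s m v ∈ F ∧ back s m v ∈ G} := by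
    ext ω
    have e1 : front s m (res (s+m) ω) = res s ω := rfl
    have e2 : back s m (res (s+m) ω) = res m (fun i : ℕ => ω (s + i)) := rfl
    simp [Set.mem_preimage, Set.mem_setOf_eq, e1, e2]
  rw [hset, meas_pre h (s+m) _, meas_pre h s F, meas_pre hS m G]
  have hstep : ∀ v : ↥{v | front s m v ∈ F ∧ back s m v ∈ G},
      cylP p s₀ (s+m) v.1 = cylP p s₀ s (front s m v.1) * cylP p S m (back s m v.1) :=
    fun v => cylP_split p s₀ S s m v.1 (hG _ v.2.2)
  rw [tsum_congr hstep, ← Equiv.tsum_eq (eqv s m F G hF hG).symm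
    (fun v => cylP p s₀ s (front s m v.1) * cylP p S m (back s m v.1))]
  have heq : ∀ x : ↥F × ↥G,
      cylP p s₀ s (front s m ((eqv s m F G hF hG).symm x).1) *
        cylP p S m (back s m ((eqv s m F G hF hG).symm x).1)
      = cylP p s₀ s x.1.1 * cylP p S m x.2.1 := by
    intro x
    have h1 : front s m ((eqv s m F G hF hG).symm x).1 = x.1.1 := front_glue s m _ _
    have h2 : back s m ((eqv s m F G hF hG).symm x).1 = x.2.1 :=
      back_glue s m _ _ ((hF _ x.1.2).trans (hG _ x.2.2).symm)
    rw [h1, h2]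
  rw [tsum_congr heq,
    ENNReal.tsum_prod (f := fun (w : ↥F) (u : ↥G) => cylP p s₀ s w.1 * cylP p S m u.1)]
  simp_rw [ENNReal.tsum_mul_left]
  rw [ENNReal.tsum_mul_right]


def noHit (j : ℤ) (t : ℕ) : Set (ℕ → ℤ) := {ω | ∀ u, 0 < u → u ≤ t → ω u ≠ j}

lemma tsum_ite_lt (k : ℕ) : (∑' t : ℕ, if t < k then (1 : ℝ≥0∞) else 0) = k := by
  rw [tsum_eq_sum (s := Finset.range k) (by intro t ht; rw [if_neg (by simpa using ht)])]
  rw [Finset.sum_congr rfl (fun t ht => if_pos (Finset.mem_range.mp ht))]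
  simp

lemma hitTime_eq_tsum (j : ℤ) (ω : ℕ → ℤ) :
    hitTime j ω = ∑' t : ℕ, (noHit j t).indicator 1 ω := by
  by_cases hne : ∃ t, 0 < t ∧ ω t = j
  · set k := Nat.find hne with hk
    have hspec := Nat.find_spec hne
    have hmem : ∀ t : ℕ, ω ∈ noHit j t ↔ t < k := by
      intro t
      constructor
      · intro hnh
        by_contra hlt
        exact hnh k hspec.1 (by omega) hspec.2
      · intro hlt u hu hut
        intro hj
        exact Nat.find_min hne (m := u) (by omega) ⟨hu, hj⟩
    have hind : ∀ t : ℕ, (noHit j t).indicator (1 : (ℕ → ℤ) → ℝ≥0∞) ω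
        = if t < k then 1 else 0 := by
      intro t
      classical
      rw [Set.indicator_apply]
      exact if_congr (hmem t) rfl rfl
    rw [tsum_congr hind, tsum_ite_lt]
    apply le_antisymm
    · exact sInf_le ⟨k, ⟨hspec.1, hspec.2⟩, rfl⟩
    · apply le_sInf
      rintro x ⟨t, ht, rfl⟩
      exact_mod_cast Nat.cast_le.mpr (Nat.find_min' hne ht)
  · push_neg at hne
    have h1 : {t | 0 < t ∧ ω t = j} = ∅ := by
      ext t; simp only [Set.mem_setOf_eq, Set.mem_empty_iff_false, iff_false]
      rintro ⟨h1, h2⟩; exact hne t h1 h2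
    have h2 : ∀ t : ℕ, (noHit j t).indicator (1 : (ℕ → ℤ) → ℝ≥0∞) ω = 1 := by
      intro t
      rw [Set.indicator_of_mem]
      · rfl
      · intro u hu _ hj; exact hne u hu hj
    rw [hitTime, h1, tsum_congr h2]
    simp [sInf_empty]


lemma measSet_noHit (j : ℤ) (t : ℕ) : MeasurableSet (noHit j t) := by
  have : noHit j t = res t ⁻¹' {u : Fin (t+1) → ℤ |
      ∀ v : ℕ, 0 < v → (hvt : v ≤ t) → u ⟨v, by omega⟩ ≠ j} := by
    ext ω
    simp only [noHit, Set.mem_setOf_eq, Set.mem_preimage]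
    exact Iff.rfl
  rw [this]
  exact measSet_res_pre t _

lemma shift_meas (s : ℕ) : Measurable (fun (ω : ℕ → ℤ) (i : ℕ) => ω (s + i)) :=
  measurable_pi_lambda _ fun i => measurable_pi_apply _

lemma lintegral_hitTime_shift (ν : Measure (ℕ → ℤ)) (j : ℤ) (s : ℕ) :
    ∫⁻ ω, hitTime j (fun i => ω (s + i)) ∂ν
      = ∑' t : ℕ, ν ((fun (ω : ℕ → ℤ) (i : ℕ) => ω (s + i)) ⁻¹' noHit j t) := by
  have hpt : ∀ ω : ℕ → ℤ, hitTime j (fun i => ω (s + i))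
      = ∑' t : ℕ, ((fun (ω : ℕ → ℤ) (i : ℕ) => ω (s + i)) ⁻¹' noHit j t).indicator 1 ω := by
    intro ω
    rw [hitTime_eq_tsum]
    refine tsum_congr fun t => ?_
    classical
    rw [Set.indicator_apply, Set.indicator_apply]
    rfl
  rw [lintegral_congr hpt, lintegral_tsum (fun t =>
    (measurable_one.indicator ((measSet_noHit j t).preimage (shift_meas s))).aemeasurable)]
  exact tsum_congr fun t =>
    lintegral_indicator_one ((measSet_noHit j t).preimage (shift_meas s))

lemma ae_steps {p : ℤ → ℤ → ℝ≥0∞} {s₀ : ℤ} {μ : Measure (ℕ → ℤ)}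
    (h : IsMarkovChain p s₀ μ) :
    ∀ᵐ ω ∂μ, ∀ t : ℕ, p (ω t) (ω (t+1)) ≠ 0 := by
  rw [MeasureTheory.ae_all_iff]
  intro t
  have hset : {ω : ℕ → ℤ | ¬ p (ω t) (ω (t+1)) ≠ 0}
      = res (t+1) ⁻¹' {w : Fin (t+2) → ℤ | p (w ⟨t, by omega⟩) (w ⟨t+1, by omega⟩) = 0} := by
    ext ω
    simp only [Set.mem_setOf_eq, Set.mem_preimage, not_not]
    exact Iff.rfl
  rw [ae_iff, hset, meas_pre h (t+1) _]
  refine ENNReal.tsum_eq_zero.mpr fun w => ?_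
  have hz : p (exd (t+1) w.1 t) (exd (t+1) w.1 (t+1)) = 0 := by
    have e1 : exd (t+1) w.1 t = w.1 ⟨t, by omega⟩ := by
      simp only [exd]; rw [dif_pos (by omega)]
    have e2 : exd (t+1) w.1 (t+1) = w.1 ⟨t+1, by omega⟩ := by
      simp only [exd]; rw [dif_pos (by omega)]
    rw [e1, e2]
    exact w.2
  rw [cylP, Finset.prod_eq_zero (Finset.self_mem_range_succ t) hz, mul_zero]

lemma nnTrans_step {a b : ℤ} {π : ℤ → ℝ≥0∞} {i j : ℤ}
    (h : nnTrans a b π i j ≠ 0) : j = i + 1 ∨ j = i - 1 := by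
  unfold nnTrans at h
  split_ifs at h with h1 h2 h3 h4 h5 h6 <;>
    first
    | (left; omega)
    | (right; omega)
    | exact absurd rfl h

lemma cross_zero (f : ℕ → ℤ)
    (hstep : ∀ t, f (t+1) = f t + 1 ∨ f (t+1) = f t - 1)
    (s t : ℕ) (hst : s < t) (hs : 0 < f s) (ht : f t < 0) :
    ∃ v, s < v ∧ v < t ∧ f v = 0 := by
  have hne : ∃ u, s < u ∧ f u ≤ 0 := ⟨t, hst, le_of_lt ht⟩
  classical
  obtain ⟨v, ⟨hv1, hv2⟩, hmin⟩ : ∃ v, (s < v ∧ f v ≤ 0) ∧ ∀ u < v, ¬(s < u ∧ f u ≤ 0) :=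
    ⟨Nat.find hne, Nat.find_spec hne, fun u hu => Nat.find_min hne hu⟩
  have hv3 : 0 < v := by omega
  have hprev : 0 < f (v-1) := by
    rcases Nat.lt_or_ge (v-1) (s+1) with hc | hc
    · have hvs : v - 1 = s := by omega
      rw [hvs]; exact hs
    · by_contra hle
      exact hmin (v-1) (by omega) ⟨by omega, by omega⟩
  have hfv : f v = 0 := by
    have hst2 := hstep (v-1)
    have hv4 : v - 1 + 1 = v := by omega
    rw [hv4] at hst2
    omega
  have hvt : v < t := by
    rcases Nat.lt_or_ge v t with hvt | hvt
    · exact hvt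
    · rcases Nat.lt_or_ge t v with hvt2 | hvt2
      · exact absurd ⟨hst, le_of_lt ht⟩ (hmin t hvt2)
      · have hteq : v = t := by omega
        rw [hteq] at hfv; omega
  exact ⟨v, hv1, hvt, hfv⟩


def stS (n : ℕ) (b : Bool) : ℤ := if b then (n:ℤ) else -(n:ℤ)

def AA (n : ℕ) (q : ℕ × Bool) : Set (ℕ → ℤ) :=
  {ω | 0 < q.1 ∧ (∀ u, 0 < u → u < q.1 → ω u ≠ (n:ℤ) ∧ ω u ≠ -(n:ℤ)) ∧ ω q.1 = stS n q.2}

def FF (n : ℕ) (q : ℕ × Bool) : Set (Fin (q.1+1) → ℤ) :=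
  {w | 0 < q.1 ∧ (∀ u : ℕ, 0 < u → (h : u < q.1) → w ⟨u, by omega⟩ ≠ (n:ℤ) ∧ w ⟨u, by omega⟩ ≠ -(n:ℤ))
    ∧ w (Fin.last q.1) = stS n q.2}

lemma AA_eq (n : ℕ) (q : ℕ × Bool) : AA n q = res q.1 ⁻¹' FF n q := by
  ext ω
  exact Iff.rfl

lemma AA_disj (n : ℕ) (hn : 0 < n) : Pairwise (Function.onFun Disjoint (AA n)) := by
  have hne : ((n:ℤ)) ≠ -(n:ℤ) := by omega
  intro q q' hqq
  rw [Function.onFun, Set.disjoint_left]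
  intro ω h1 h2
  obtain ⟨hs1, hno1, hS1⟩ := h1
  obtain ⟨hs2, hno2, hS2⟩ := h2
  have hstS : ∀ b : Bool, stS n b = (n:ℤ) ∨ stS n b = -(n:ℤ) := by
    intro b; cases b
    · exact Or.inr rfl
    · exact Or.inl rfl
  rcases lt_trichotomy q.1 q'.1 with hlt | heq | hlt
  · obtain ⟨ha, hb⟩ := hno2 q.1 hs1 hlt
    rcases hstS q.2 with he | he <;> rw [he] at hS1
    · exact ha hS1
    · exact hb hS1
  · have hbne : q.2 ≠ q'.2 := by
      intro hbe
      exact hqq (Prod.ext heq hbe)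
    have hstS12 : stS n q.2 = stS n q'.2 := by rw [← hS1, heq, hS2]
    cases hb2 : q.2 <;> cases hb2' : q'.2
    · exact hbne (hb2.trans hb2'.symm)
    · rw [hb2, hb2'] at hstS12; simp [stS] at hstS12; omega
    · rw [hb2, hb2'] at hstS12; simp [stS] at hstS12; omega
    · exact hbne (hb2.trans hb2'.symm)
  · obtain ⟨ha, hb⟩ := hno1 q'.1 hs2 hlt
    rcases hstS q'.2 with he | he <;> rw [he] at hS2
    · exact ha hS2
    · exact hb hS2

lemma mem_union_AA (n : ℕ) (ω : ℕ → ℤ) (t : ℕ) (ht : 0 < t)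
    (hω : ω t = (n:ℤ) ∨ ω t = -(n:ℤ)) : ω ∈ ⋃ q, AA n q := by
  classical
  have hne : ∃ u, 0 < u ∧ (ω u = (n:ℤ) ∨ ω u = -(n:ℤ)) := ⟨t, ht, hω⟩
  obtain ⟨k, ⟨hk1, hk2⟩, hmin⟩ :
      ∃ k, (0 < k ∧ (ω k = (n:ℤ) ∨ ω k = -(n:ℤ))) ∧
        ∀ u < k, ¬(0 < u ∧ (ω u = (n:ℤ) ∨ ω u = -(n:ℤ))) :=
    ⟨Nat.find hne, Nat.find_spec hne, fun u hu => Nat.find_min hne hu⟩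
  have hno : ∀ u, 0 < u → u < k → ω u ≠ (n:ℤ) ∧ ω u ≠ -(n:ℤ) := by
    intro u hu huk
    have := hmin u huk
    push_neg at this
    exact this hu
  rcases hk2 with he | he
  · exact Set.mem_iUnion.mpr ⟨(k, true), hk1, hno, he⟩
  · exact Set.mem_iUnion.mpr ⟨(k, false), hk1, hno, he⟩

lemma key_pt (n : ℕ) (hn : 0 < n) (q : ℕ × Bool) (ω : ℕ → ℤ)
    (hω : ω ∈ AA n q)
    (hstep : ∀ t, ω (t+1) = ω t + 1 ∨ ω (t+1) = ω t - 1) :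
    hitTime 0 (fun i => ω (q.1 + i)) ≤ max (hitTime (n:ℤ) ω) (hitTime (-(n:ℤ)) ω) := by
  obtain ⟨hq1, hno, hS⟩ := hω
  have main : ∀ mS : ℤ, (mS = (n:ℤ) ∨ mS = -(n:ℤ)) → mS ≠ stS n q.2 →
      hitTime 0 (fun i => ω (q.1 + i)) ≤ hitTime mS ω := by
    intro mS hmS hne
    apply le_sInf
    rintro x ⟨t, ⟨ht0, htm⟩, rfl⟩
    have htq : q.1 < t := by
      rcases Nat.lt_or_ge q.1 t with hlt | hge
      · exact hlt
      · exfalso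
        rcases Nat.lt_or_ge t q.1 with h2 | h2
        · obtain ⟨ha, hb⟩ := hno t ht0 h2
          rcases hmS with rfl | rfl
          · exact ha htm
          · exact hb htm
        · have hteq : t = q.1 := by omega
          apply hne
          rw [← htm, hteq, hS]
    have hv : ∃ v, q.1 < v ∧ v < t ∧ ω v = 0 := by
      cases hb : q.2
      · -- q.2 = false : started at -n, target n
        rw [hb] at hS
        have hmSn : mS = (n:ℤ) := by
          rcases hmS with he | he
          · exact he
          · exfalso; apply hne; rw [he, hb]; rfl
        have hstep' : ∀ u, -ω (u+1) = -ω u + 1 ∨ -ω (u+1) = -ω u - 1 := by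
          intro u
          rcases hstep u with h | h
          · right; omega
          · left; omega
        obtain ⟨v, hv1, hv2, hv3⟩ := cross_zero (fun i => -ω i) hstep' q.1 t htq
          (by simp [stS] at hS; simp [hS]; omega)
          (by show -ω t < 0; rw [htm, hmSn]; omega)
        exact ⟨v, hv1, hv2, by omega⟩
      · -- q.2 = true : started at n, target -n
        rw [hb] at hS
        have hmSn : mS = -(n:ℤ) := by
          rcases hmS with he | he
          · exfalso; apply hne; rw [he, hb]; rfl
          · exact he
        refine cross_zero ω hstep q.1 t htq ?_ ?_
        · simp [stS] at hS; rw [hS]; omega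
        · rw [htm, hmSn]; omega
    obtain ⟨v, hv1, hv2, hv3⟩ := hv
    refine le_trans (sInf_le ⟨v - q.1, ⟨by omega, ?_⟩, rfl⟩)
      (Nat.cast_le.mpr (show v - q.1 ≤ t by omega))
    show ω (q.1 + (v - q.1)) = 0
    have : q.1 + (v - q.1) = v := by omega
    rw [this]; exact hv3
  cases hb : q.2
  · -- started at -n : bound by hitTime n
    refine le_trans (main (n:ℤ) (Or.inl rfl) ?_) (le_max_left _ _)
    rw [hb]; simp only [stS]; simp; omega
  · refine le_trans (main (-(n:ℤ)) (Or.inr rfl) ?_) (le_max_right _ _)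
    rw [hb]; simp only [stS]; simp; omega

lemma meas_init {p : ℤ → ℤ → ℝ≥0∞} {s₀ : ℤ} {μ : Measure (ℕ → ℤ)}
    (h : IsMarkovChain p s₀ μ) : μ {ω : ℕ → ℤ | ω 0 = s₀} = 1 := by
  have h2 := h.2 0 (fun _ => s₀)
  simpa using h2

lemma meas_init_compl {p : ℤ → ℤ → ℝ≥0∞} {s₀ : ℤ} {μ : Measure (ℕ → ℤ)}
    (h : IsMarkovChain p s₀ μ) : μ {ω : ℕ → ℤ | ω 0 = s₀}ᶜ = 0 := by
  haveI := h.1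
  have hm : MeasurableSet {ω : ℕ → ℤ | ω 0 = s₀} :=
    (measurableSet_singleton s₀).preimage (measurable_pi_apply 0)
  rw [measure_compl hm (measure_ne_top μ _), meas_init h, measure_univ, tsub_self]

end S9

/-- Let `n > 0`, let `π` be a vector of probabilities in `(0,1)` at the
interior states, and consider the nearest-neighbour chain on `{-n, …, n}` with reflecting
barriers at `-n` and `n`. Let `T_{0,n}` and `T_{0,-n}` be the hitting times of `n` and
`-n` for the chain started at `0`, and let `E[T_{n,0}]`, `E[T_{-n,0}]` be the expected
hitting times of `0` from the two barriers. Then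
`E[max (T_{0,n}, T_{0,-n})] ≥ min (E[T_{n,0}], E[T_{-n,0}])`. -/
theorem statement9 (n : ℕ) (hn : 0 < n) (π : ℤ → ℝ≥0∞)
    (hπ : ∀ i : ℤ, -(n : ℤ) < i → i < (n : ℤ) → 0 < π i ∧ π i < 1)
    (μ₀ μₙ νₙ : MeasureTheory.Measure (ℕ → ℤ))
    (h₀ : IsMarkovChain (nnTrans (-(n : ℤ)) (n : ℤ) π) 0 μ₀)
    (hₙ : IsMarkovChain (nnTrans (-(n : ℤ)) (n : ℤ) π) (n : ℤ) μₙ)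
    (hnn : IsMarkovChain (nnTrans (-(n : ℤ)) (n : ℤ) π) (-(n : ℤ)) νₙ) :
    min (expHit μₙ 0) (expHit νₙ 0) ≤
      ∫⁻ ω, max (hitTime (n : ℤ) ω) (hitTime (-(n : ℤ)) ω) ∂μ₀ := by
  classical
  haveI := h₀.1
  set MX : (ℕ → ℤ) → ℝ≥0∞ := fun ω => max (hitTime (n:ℤ) ω) (hitTime (-(n:ℤ)) ω) with hMX
  have hAAm : ∀ q : ℕ × Bool, MeasurableSet (S9.AA n q) := fun q => by
    rw [S9.AA_eq]; exact S9.measSet_res_pre _ _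
  have hUm : MeasurableSet (⋃ q, S9.AA n q) := MeasurableSet.iUnion hAAm
  by_cases hHc : μ₀ (⋃ q, S9.AA n q)ᶜ = 0
  · -- the chain a.s. hits one of the barriers
    have hb : ∀ b : Bool,
        IsMarkovChain (nnTrans (-(n:ℤ)) (n:ℤ) π) (S9.stS n b) (if b then μₙ else νₙ) := by
      intro b; cases b
      · simpa [S9.stS] using hnn
      · simpa [S9.stS] using hₙ
    have hM : ∀ b : Bool,
        min (expHit μₙ 0) (expHit νₙ 0) ≤ expHit (if b then μₙ else νₙ) 0 := by
      intro b; cases b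
      · exact min_le_right _ _
      · exact min_le_left _ _
    have hexp : ∀ b : Bool, expHit (if b then μₙ else νₙ) 0
        = ∑' t : ℕ, (if b then μₙ else νₙ) (S9.noHit 0 t) := by
      intro b
      have h1 : ∀ ω : ℕ → ℤ, hitTime (0:ℤ) ω = hitTime 0 (fun i => ω (0 + i)) := by
        intro ω; congr 1; funext i; rw [zero_add]
      rw [expHit, lintegral_congr h1, S9.lintegral_hitTime_shift]
      refine tsum_congr fun t => ?_
      congr 1
      ext ω
      simp only [Set.mem_preimage, S9.noHit, Set.mem_setOf_eq, zero_add]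
    have hpiece : ∀ q : ℕ × Bool,
        min (expHit μₙ 0) (expHit νₙ 0) * μ₀ (S9.AA n q)
          ≤ ∫⁻ ω in S9.AA n q, MX ω ∂μ₀ := by
      intro q
      have haes : ∀ᵐ ω ∂μ₀, ∀ t, ω (t+1) = ω t + 1 ∨ ω (t+1) = ω t - 1 :=
        (S9.ae_steps h₀).mono (fun ω h t => S9.nnTrans_step (h t))
      have h1 : ∫⁻ ω in S9.AA n q, hitTime 0 (fun i => ω (q.1 + i)) ∂μ₀
          ≤ ∫⁻ ω in S9.AA n q, MX ω ∂μ₀ := by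
        refine lintegral_mono_ae ?_
        filter_upwards [ae_restrict_of_ae haes, ae_restrict_mem (hAAm q)] with ω hs hm
        exact S9.key_pt n hn q ω hm hs
      refine le_trans ?_ h1
      rw [show ∫⁻ ω in S9.AA n q, hitTime 0 (fun i => ω (q.1 + i)) ∂μ₀
          = ∫⁻ ω, hitTime 0 (fun i => ω (q.1 + i)) ∂(μ₀.restrict (S9.AA n q)) from rfl,
        S9.lintegral_hitTime_shift (μ₀.restrict (S9.AA n q)) 0 q.1]
      have h2 : ∀ t : ℕ,
          (μ₀.restrict (S9.AA n q)) ((fun (ω : ℕ→ℤ) (i:ℕ) => ω (q.1+i)) ⁻¹' S9.noHit 0 t)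
          = μ₀ (S9.AA n q) * (if q.2 then μₙ else νₙ) (S9.noHit 0 t) := by
        intro t
        rw [Measure.restrict_apply ((S9.measSet_noHit 0 t).preimage (S9.shift_meas q.1))]
        set GG : Set (Fin (t+1) → ℤ) := {u | u 0 = S9.stS n q.2 ∧
          ∀ v : ℕ, 0 < v → (h : v ≤ t) → u ⟨v, by omega⟩ ≠ 0} with hGG
        have hset : (fun (ω : ℕ→ℤ) (i:ℕ) => ω (q.1+i)) ⁻¹' S9.noHit 0 t ∩ S9.AA n q
            = S9.res q.1 ⁻¹' S9.FF n q ∩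
              (fun ω => S9.res t (fun i : ℕ => ω (q.1 + i))) ⁻¹' GG := by
          ext ω
          simp only [Set.mem_inter_iff, Set.mem_preimage, ← S9.AA_eq]
          constructor
          · rintro ⟨hnh, hA⟩
            refine ⟨hA, ?_, ?_⟩
            · show (fun i : ℕ => ω (q.1 + i)) 0 = S9.stS n q.2
              show ω (q.1 + 0) = S9.stS n q.2
              rw [Nat.add_zero]
              exact hA.2.2
            · intro v hv hvt
              exact hnh v hv hvt
          · rintro ⟨hA, _, hno⟩
            exact ⟨fun u hu hut => hno u hu hut, hA⟩
        rw [hset, S9.split h₀ (hb q.2) q.1 t (S9.FF n q) GG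
          (fun w hw => hw.2.2) (fun u hu => hu.1), ← S9.AA_eq]
        congr 1
        have hGset : S9.res t ⁻¹' GG
            = S9.noHit 0 t ∩ {ω : ℕ → ℤ | ω 0 = S9.stS n q.2} := by
          ext ω
          simp only [Set.mem_preimage, Set.mem_inter_iff, Set.mem_setOf_eq, hGG,
            S9.noHit]
          constructor
          · rintro ⟨hz, hno⟩
            exact ⟨fun u hu hut => hno u hu hut, hz⟩
          · rintro ⟨hno, hz⟩
            exact ⟨hz, fun v hv hvt => hno v hv hvt⟩
        rw [hGset, measure_inter_conull (S9.meas_init_compl (hb q.2))]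
      rw [tsum_congr h2, ENNReal.tsum_mul_left, ← hexp q.2, mul_comm]
      exact mul_le_mul_right (hM q.2) _
    have hμU : μ₀ (⋃ q, S9.AA n q) = 1 := by
      have h2 := measure_compl hUm (measure_ne_top μ₀ _)
      rw [measure_univ] at h2
      rw [h2, tsub_eq_zero_iff_le] at hHc
      exact le_antisymm prob_le_one hHc
    calc min (expHit μₙ 0) (expHit νₙ 0)
        = min (expHit μₙ 0) (expHit νₙ 0) * μ₀ (⋃ q, S9.AA n q) := by
          rw [hμU, mul_one]
      _ = min (expHit μₙ 0) (expHit νₙ 0) * ∑' q : ℕ × Bool, μ₀ (S9.AA n q) := by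
          rw [measure_iUnion (S9.AA_disj n hn) hAAm]
      _ = ∑' q : ℕ × Bool, min (expHit μₙ 0) (expHit νₙ 0) * μ₀ (S9.AA n q) :=
          ENNReal.tsum_mul_left.symm
      _ ≤ ∑' q : ℕ × Bool, ∫⁻ ω in S9.AA n q, MX ω ∂μ₀ := ENNReal.tsum_le_tsum hpiece
      _ = ∫⁻ ω in ⋃ q, S9.AA n q, MX ω ∂μ₀ :=
          (lintegral_iUnion hAAm (S9.AA_disj n hn) _).symm
      _ ≤ ∫⁻ ω, MX ω ∂μ₀ := lintegral_mono' Measure.restrict_le_self le_rfl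
  · -- the chain avoids the barriers with positive probability : integral is infinite
    have h1 : ∀ ω ∈ (⋃ q, S9.AA n q)ᶜ, (⊤:ℝ≥0∞) = MX ω := by
      intro ω hω
      have hem : {t : ℕ | 0 < t ∧ ω t = (n:ℤ)} = ∅ := by
        ext t
        simp only [Set.mem_setOf_eq, Set.mem_empty_iff_false, iff_false, not_and]
        intro ht he
        exact hω (S9.mem_union_AA n ω t ht (Or.inl he))
      have htop : hitTime (n:ℤ) ω = ⊤ := by
        rw [hitTime, hem]
        simp
      simp only [hMX, htop, max_eq_left le_top]
    refine le_trans le_top ?_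
    calc (⊤:ℝ≥0∞) = ⊤ * μ₀ (⋃ q, S9.AA n q)ᶜ := (ENNReal.top_mul hHc).symm
      _ = ∫⁻ ω in (⋃ q, S9.AA n q)ᶜ, (⊤:ℝ≥0∞) ∂μ₀ := (setLIntegral_const _ _).symm
      _ = ∫⁻ ω in (⋃ q, S9.AA n q)ᶜ, MX ω ∂μ₀ :=
          setLIntegral_congr_fun hUm.compl h1
      _ ≤ ∫⁻ ω, MX ω ∂μ₀ := lintegral_mono' Measure.restrict_le_self le_rfl
end
end

section
/- Let k ≥ 1 and consider the time-homogeneous Markov chain on states {0, 1, …, k} in which state 0 is absorbing and, from each state i with 1 ≤ i ≤ k, the chain moves to state i−1 with probability 1/2 and to state k with probability 1/2. Then the expected hitting time of state 0 starting from state k equals 2^{k+1} − 2. -/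
open MeasureTheory ENNReal Finset

noncomputable section

/-- Transition probabilities of the Random-Compass chain on `{0, 1, …, k}`: state `0` is
absorbing and, from each state `i` with `1 ≤ i ≤ k`, the chain moves to `i - 1` with
probability `1/2` and to `k` with probability `1/2`. -/
def rcTrans (k : ℕ) : ℕ → ℕ → ℝ≥0∞ := fun i j =>
  if i = 0 then (if j = 0 then 1 else 0)
  else if i ≤ k then (if j = i - 1 then 1 / 2 else 0) + (if j = k then 1 / 2 else 0)
  else 0

/-- The hitting time `min {t ≥ 0 : ω t = j}` of the state `j` along the trajectory `ω`,
viewed in `ℝ≥0∞` (it is `∞` if `j` is never visited). -/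
def hitTimeFrom0 {S : Type*} (j : S) (ω : ℕ → S) : ℝ≥0∞ :=
  sInf ((fun t : ℕ => (t : ℝ≥0∞)) '' {t | ω t = j})

namespace Statement11Aux

/-- killed transition kernel: transitions into `0` are removed. -/
def q (k i j : ℕ) : ℝ≥0∞ := if j = 0 then 0 else rcTrans k i j

/-- `G k n j` : probability of being at `j` at time `n` having avoided `0`. -/
def G (k : ℕ) : ℕ → ℕ → ℝ≥0∞
  | 0 => fun j => if j = k then 1 else 0
  | n + 1 => fun j => ∑' i : ℕ, G k n i * q k i j

def u (k n : ℕ) : ℝ≥0∞ := ∑' j : ℕ, G k n j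

def S (k : ℕ) : ℝ≥0∞ := ∑ m ∈ Finset.range k, (2 : ℝ≥0∞)⁻¹ ^ m

lemma q_zero (k i : ℕ) : q k i 0 = 0 := if_pos rfl

lemma q_eq (k i j : ℕ) (hj : j ≠ 0) : q k i j = rcTrans k i j := if_neg hj

lemma rc_eval (k i j : ℕ) (hi0 : i ≠ 0) (hik : i ≤ k) :
    rcTrans k i j = (if j = i - 1 then 1 / 2 else 0) + (if j = k then 1 / 2 else 0) := by
  simp [rcTrans, hi0, hik]

lemma Gzero (k : ℕ) (hk : 1 ≤ k) : ∀ n j, (j = 0 ∨ k < j) → G k n j = 0 := by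
  intro n
  induction n with
  | zero =>
    intro j hj
    have : j ≠ k := by omega
    simp [G, this]
  | succ n ih =>
    intro j hj
    have hq : ∀ i, q k i j = 0 := by
      intro i
      rcases hj with hj | hj
      · simp [hj, q_zero]
      · rw [q_eq k i j (by omega)]
        by_cases hi0 : i = 0
        · simp [rcTrans, hi0]; omega
        · by_cases hik : i ≤ k
          · rw [rc_eval k i j hi0 hik]
            have h1 : j ≠ i - 1 := by omega
            have h2 : j ≠ k := by omega
            simp [h1, h2]
          · simp [rcTrans, hi0, hik]
    simp only [G]
    simp [hq]

lemma Gshift (k n j : ℕ) (hj1 : 1 ≤ j) (hjk : j < k) :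
    G k (n + 1) j = 2⁻¹ * G k n (j + 1) := by
  show (∑' i : ℕ, G k n i * q k i j) = _
  rw [tsum_eq_single (j + 1) ?_]
  · have : q k (j + 1) j = 2⁻¹ := by
      rw [q_eq k _ j (by omega), rc_eval k (j + 1) j (by omega) (by omega)]
      have h1 : j = j + 1 - 1 := by omega
      have h2 : j ≠ k := by omega
      simp [← h1, h2, one_div]
    rw [this, mul_comm]
  · intro i hi
    have hq : q k i j = 0 := by
      rw [q_eq k i j (by omega)]
      by_cases hi0 : i = 0
      · simp [rcTrans, hi0]; omega
      · by_cases hik : i ≤ k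
        · rw [rc_eval k i j hi0 hik]
          have h1 : j ≠ i - 1 := by omega
          have h2 : j ≠ k := by omega
          simp [h1, h2]
        · simp [rcTrans, hi0, hik]
    rw [hq, mul_zero]

lemma Gtop (k n : ℕ) (hk : 1 ≤ k) : G k (n + 1) k = u k n * 2⁻¹ := by
  show (∑' i : ℕ, G k n i * q k i k) = _
  rw [u, ← ENNReal.tsum_mul_right]
  refine tsum_congr fun i => ?_
  by_cases hi : i = 0 ∨ k < i
  · rw [Gzero k hk n i hi, zero_mul, zero_mul]
  · push_neg at hi
    have hq : q k i k = 2⁻¹ := by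
      rw [q_eq k i k (by omega), rc_eval k i k (by omega) (by omega)]
      have h1 : k ≠ i - 1 := by omega
      simp [h1, one_div]
    rw [hq]


lemma sum_Icc_reflect (k : ℕ) (f : ℕ → ℝ≥0∞) :
    ∑ j ∈ Finset.Icc 1 k, f (k - j) = ∑ m ∈ Finset.range k, f m := by
  have himg : Finset.Icc 1 k = (Finset.range k).image (· + 1) := by
    ext j
    simp only [Finset.mem_Icc, Finset.mem_image, Finset.mem_range]
    constructor
    · rintro ⟨h1, h2⟩; exact ⟨j - 1, by omega, by omega⟩
    · rintro ⟨a, ha, rfl⟩; omega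
  rw [himg, Finset.sum_image (by intro a _ b _ hab; simp only at hab; omega)]
  have : ∀ m ∈ Finset.range k, f (k - (m + 1)) = f (k - 1 - m) := by
    intro m hm; congr 1; omega
  rw [Finset.sum_congr rfl this, Finset.sum_range_reflect]

lemma geom1 (k : ℕ) : S k * 2⁻¹ + 2⁻¹ ^ k = 1 := by
  induction k with
  | zero => simp [S]
  | succ k ih =>
    rw [S, Finset.sum_range_succ, ← S, add_mul, pow_succ, add_assoc]
    have : (2 : ℝ≥0∞)⁻¹ ^ k * 2⁻¹ + 2⁻¹ ^ k * 2⁻¹ = 2⁻¹ ^ k := by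
      rw [← mul_add, ENNReal.inv_two_add_inv_two, mul_one]
    rw [this, ih]

lemma geom2 (k : ℕ) : S k * 2 ^ k + 2 = 2 ^ (k + 1) := by
  induction k with
  | zero => simp [S]
  | succ k ih =>
    have hcan : (2 : ℝ≥0∞)⁻¹ ^ k * 2 ^ k = 1 := by
      rw [← mul_pow, ENNReal.inv_mul_cancel (by norm_num) (by norm_num), one_pow]
    rw [S, Finset.sum_range_succ, ← S, add_mul]
    rw [pow_succ (2 : ℝ≥0∞) k, ← mul_assoc, ← mul_assoc, hcan]
    calc S k * 2 ^ k * 2 + 1 * 2 + 2 = (S k * 2 ^ k + 2) * 2 := by ring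
    _ = 2 ^ (k + 1) * 2 := by rw [ih]
    _ = 2 ^ (k + 2) := by ring

lemma S_ne_top (k : ℕ) : S k * 2⁻¹ ≠ ⊤ :=
  ne_top_of_le_ne_top one_ne_top (le_of_le_of_eq le_self_add (geom1 k))

lemma S_half_lt_one (k : ℕ) (hk : 1 ≤ k) : S k * 2⁻¹ < 1 := by
  conv_rhs => rw [← geom1 k]
  exact ENNReal.lt_add_right (S_ne_top k) (pow_ne_zero _ (ENNReal.inv_ne_zero.mpr (by norm_num)))

def H (k j : ℕ) : ℝ≥0∞ := ∑' n : ℕ, G k n j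

lemma Gdown (k : ℕ) : ∀ m, m < k → ∀ n, G k (n + m) (k - m) = 2⁻¹ ^ m * G k n k := by
  intro m
  induction m with
  | zero => intro _ n; simp
  | succ m ih =>
    intro hm n
    have h1 : n + (m + 1) = (n + m) + 1 := by omega
    rw [h1]
    have hs := Gshift k (n + m) (k - (m + 1)) (by omega) (by omega)
    rw [show k - (m + 1) + 1 = k - m from by omega] at hs
    rw [hs, ih (by omega) n, pow_succ]
    ring

lemma H_top (k : ℕ) (hk : 1 ≤ k) : H k k = 1 + (∑' n, u k n) * 2⁻¹ := by
  rw [H, tsum_eq_zero_add' ENNReal.summable]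
  have h0 : G k 0 k = 1 := by simp [G]
  rw [h0]
  congr 1
  calc (∑' n, G k (n + 1) k) = ∑' n, u k n * 2⁻¹ := tsum_congr fun n => Gtop k n hk
  _ = (∑' n, u k n) * 2⁻¹ := ENNReal.tsum_mul_right

lemma H_shift (k j : ℕ) (hj1 : 1 ≤ j) (hjk : j < k) : H k j = 2⁻¹ * H k (j + 1) := by
  rw [H, tsum_eq_zero_add' ENNReal.summable]
  have h0 : G k 0 j = 0 := by simp [G, show j ≠ k from by omega]
  rw [h0, zero_add]
  calc (∑' n, G k (n + 1) j) = ∑' n, 2⁻¹ * G k n (j + 1) :=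
        tsum_congr fun n => Gshift k n j hj1 hjk
  _ = 2⁻¹ * H k (j + 1) := ENNReal.tsum_mul_left

lemma H_pow (k : ℕ) (hk : 1 ≤ k) : ∀ m, m < k → H k (k - m) = 2⁻¹ ^ m * H k k := by
  intro m
  induction m with
  | zero => intro _; simp
  | succ m ih =>
    intro hm
    have hs := H_shift k (k - (m + 1)) (by omega) (by omega)
    rw [show k - (m + 1) + 1 = k - m from by omega] at hs
    rw [hs, ih (by omega), pow_succ]
    ring

lemma H_vanish (k : ℕ) (hk : 1 ≤ k) (j : ℕ) (hj : j = 0 ∨ k < j) : H k j = 0 := by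
  have : ∀ n, G k n j = 0 := fun n => Gzero k hk n j hj
  simp [H, this]

lemma E_eq (k : ℕ) (hk : 1 ≤ k) :
    (∑' n, u k n) = S k + (S k * 2⁻¹) * (∑' n, u k n) := by
  have h1 : (∑' n, u k n) = ∑' j, H k j := by
    simp only [u, H]
    exact ENNReal.tsum_comm
  have h2 : (∑' j, H k j) = ∑ j ∈ Finset.Icc 1 k, H k j :=
    tsum_eq_sum (fun j hj => H_vanish k hk j (by simp [Finset.mem_Icc] at hj; omega))
  have h3 : (∑ j ∈ Finset.Icc 1 k, H k j) = (∑ j ∈ Finset.Icc 1 k, 2⁻¹ ^ (k - j)) * H k k := by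
    rw [Finset.sum_mul]
    refine Finset.sum_congr rfl fun j hj => ?_
    simp only [Finset.mem_Icc] at hj
    have hp := H_pow k hk (k - j) (by omega)
    rw [show k - (k - j) = j from by omega] at hp
    exact hp
  have h4 : (∑ j ∈ Finset.Icc 1 k, (2 : ℝ≥0∞)⁻¹ ^ (k - j)) = S k :=
    sum_Icc_reflect k (fun m => 2⁻¹ ^ m)
  conv_lhs => rw [h1, h2, h3, h4, H_top k hk]
  rw [mul_add, mul_one]
  congr 1
  ring

lemma contraction (k : ℕ) (hk : 1 ≤ k)
    (hmono : ∀ m n : ℕ, m ≤ n → u k n ≤ u k m) (n : ℕ) :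
    u k (n + k) ≤ (S k * 2⁻¹) * u k n := by
  have hv : u k (n + k) = ∑ j ∈ Finset.Icc 1 k, G k (n + k) j :=
    tsum_eq_sum (fun j hj => Gzero k hk _ j (by simp [Finset.mem_Icc] at hj; omega))
  rw [hv]
  have hbound : ∀ j ∈ Finset.Icc 1 k, G k (n + k) j ≤ 2⁻¹ ^ (k - j) * 2⁻¹ * u k n := by
    intro j hj
    simp only [Finset.mem_Icc] at hj
    have hd := Gdown k (k - j) (by omega) (n + j)
    rw [show k - (k - j) = j from by omega, show n + j + (k - j) = n + k from by omega] at hd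
    rw [hd]
    have ht : G k (n + j) k = u k (n + j - 1) * 2⁻¹ := by
      have := Gtop k (n + j - 1) hk
      rw [show n + j - 1 + 1 = n + j from by omega] at this
      exact this
    rw [ht]
    calc (2:ℝ≥0∞)⁻¹ ^ (k - j) * (u k (n + j - 1) * 2⁻¹)
        ≤ 2⁻¹ ^ (k - j) * (u k n * 2⁻¹) := by
          exact mul_le_mul_right (mul_le_mul_left (hmono n (n + j - 1) (by omega)) _) _
    _ = 2⁻¹ ^ (k - j) * 2⁻¹ * u k n := by ring
  calc (∑ j ∈ Finset.Icc 1 k, G k (n + k) j)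
      ≤ ∑ j ∈ Finset.Icc 1 k, 2⁻¹ ^ (k - j) * 2⁻¹ * u k n := Finset.sum_le_sum hbound
  _ = (∑ j ∈ Finset.Icc 1 k, (2:ℝ≥0∞)⁻¹ ^ (k - j)) * 2⁻¹ * u k n := by
      rw [Finset.sum_mul, Finset.sum_mul]
  _ = S k * 2⁻¹ * u k n := by rw [sum_Icc_reflect k (fun m => 2⁻¹ ^ m)]; rfl

lemma iterate (k : ℕ) (hk : 1 ≤ k)
    (hmono : ∀ m n : ℕ, m ≤ n → u k n ≤ u k m) (hle1 : ∀ n, u k n ≤ 1) :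
    ∀ r s : ℕ, u k (r * k + s) ≤ (S k * 2⁻¹) ^ r := by
  intro r
  induction r with
  | zero => intro s; simpa using hle1 s
  | succ r ih =>
    intro s
    have hix : (r + 1) * k + s = (r * k + s) + k := by ring
    rw [hix]
    calc u k ((r * k + s) + k) ≤ (S k * 2⁻¹) * u k (r * k + s) := contraction k hk hmono _
    _ ≤ (S k * 2⁻¹) * (S k * 2⁻¹) ^ r := mul_le_mul_right (ih s) _
    _ = (S k * 2⁻¹) ^ (r + 1) := by ring

lemma E_ne_top (k : ℕ) (hk : 1 ≤ k)
    (hmono : ∀ m n : ℕ, m ≤ n → u k n ≤ u k m) (hle1 : ∀ n, u k n ≤ 1) :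
    (∑' n, u k n) ≠ ⊤ := by
  haveI : NeZero k := ⟨by omega⟩
  have h1 : (∑' n, u k n) = ∑' p : ℕ × Fin k, u k (p.1 * k + (p.2 : ℕ)) := by
    rw [← Equiv.tsum_eq (Nat.divModEquiv k).symm (fun n => u k n)]
    rfl
  have h2 : (∑' p : ℕ × Fin k, u k (p.1 * k + (p.2 : ℕ)))
      ≤ ∑' p : ℕ × Fin k, (S k * 2⁻¹) ^ p.1 :=
    ENNReal.tsum_le_tsum (fun p => iterate k hk hmono hle1 p.1 p.2)
  have h3 : (∑' p : ℕ × Fin k, (S k * 2⁻¹) ^ p.1) = (k : ℝ≥0∞) * (1 - S k * 2⁻¹)⁻¹ := by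
    rw [ENNReal.tsum_prod']
    have hf : ∀ r : ℕ, (∑' _ : Fin k, (S k * 2⁻¹) ^ r) = (k : ℝ≥0∞) * (S k * 2⁻¹) ^ r := by
      intro r
      rw [tsum_fintype]
      simp [Finset.sum_const, Finset.card_univ, nsmul_eq_mul]
    rw [tsum_congr hf, ENNReal.tsum_mul_left, ENNReal.tsum_geometric]
  have h4 : (k : ℝ≥0∞) * (1 - S k * 2⁻¹)⁻¹ ≠ ⊤ := by
    refine ENNReal.mul_ne_top (natCast_ne_top k) (ENNReal.inv_ne_top.mpr ?_)
    have := S_half_lt_one k hk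
    rw [← pos_iff_ne_zero]
    exact tsub_pos_of_lt this
  exact ne_top_of_le_ne_top h4 (h1 ▸ h2.trans_eq h3)

lemma solve (k : ℕ) (hk : 1 ≤ k) (E : ℝ≥0∞) (hne : E ≠ ⊤)
    (heq : E = S k + (S k * 2⁻¹) * E) : E = 2 ^ (k + 1) - 2 := by
  have hd : (S k * 2⁻¹) * E ≠ ⊤ := ENNReal.mul_ne_top (S_ne_top k) hne
  have h1 : E - (S k * 2⁻¹) * E = S k := ENNReal.sub_eq_of_eq_add hd heq
  have h3 : (2 : ℝ≥0∞)⁻¹ ^ k = 1 - S k * 2⁻¹ :=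
    ENNReal.eq_sub_of_add_eq (S_ne_top k) (by rw [add_comm]; exact geom1 k)
  have h2 : E * 2⁻¹ ^ k = S k := by
    rw [← h1, h3, ENNReal.mul_sub (fun _ _ => hne), mul_one, mul_comm E (S k * 2⁻¹)]
  have hcan : (2 : ℝ≥0∞)⁻¹ ^ k * 2 ^ k = 1 := by
    rw [← mul_pow, ENNReal.inv_mul_cancel (by norm_num) (by norm_num), one_pow]
  have h4 : E = S k * 2 ^ k := by
    calc E = E * (2⁻¹ ^ k * 2 ^ k) := by rw [hcan, mul_one]
    _ = (E * 2⁻¹ ^ k) * 2 ^ k := by ring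
    _ = S k * 2 ^ k := by rw [h2]
  rw [h4]
  exact ENNReal.eq_sub_of_add_eq (by norm_num) (geom2 k)


def A (n : ℕ) : Set (ℕ → ℕ) := {ω | ∀ t ≤ n, ω t ≠ 0}

def Cyl (n : ℕ) (c : ℕ → ℕ) : Set (ℕ → ℕ) := {ω | ∀ t ≤ n, ω t = c t}

def B (n j : ℕ) : Set (ℕ → ℕ) := A n ∩ {ω | ω n = j}

lemma measurable_A (n : ℕ) : MeasurableSet (A n) := by
  have : A n = ⋂ (t : ℕ), ⋂ (_ : t ≤ n), (fun ω : ℕ → ℕ => ω t) ⁻¹' {0}ᶜ := by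
    ext ω; simp [A]
  rw [this]
  exact MeasurableSet.iInter fun t => MeasurableSet.iInter fun _ =>
    (measurable_pi_apply t) (measurableSet_singleton 0).compl

lemma measurable_Cyl (n : ℕ) (c : ℕ → ℕ) : MeasurableSet (Cyl n c) := by
  have : Cyl n c = ⋂ (t : ℕ), ⋂ (_ : t ≤ n), (fun ω : ℕ → ℕ => ω t) ⁻¹' {c t} := by
    ext ω; simp [Cyl]
  rw [this]
  exact MeasurableSet.iInter fun t => MeasurableSet.iInter fun _ =>
    (measurable_pi_apply t) (measurableSet_singleton (c t))

lemma measurable_coord (n j : ℕ) : MeasurableSet {ω : ℕ → ℕ | ω n = j} := by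
  have : {ω : ℕ → ℕ | ω n = j} = (fun ω : ℕ → ℕ => ω n) ⁻¹' {j} := by
    ext ω; simp
  rw [this]
  exact (measurable_pi_apply n) (measurableSet_singleton j)

lemma measurable_B (n j : ℕ) : MeasurableSet (B n j) :=
  (measurable_A n).inter (measurable_coord n j)

def ext (n : ℕ) (x : Fin (n + 1) → ℕ) : ℕ → ℕ := fun t => x ⟨min t n, by omega⟩

lemma ext_le (n : ℕ) (x : Fin (n + 1) → ℕ) (t : ℕ) (ht : t ≤ n) :
    ext n x t = x ⟨t, by omega⟩ := by
  simp [ext, Nat.min_eq_left ht]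

def I (n j : ℕ) := {x : Fin (n + 1) → ℕ // (∀ t, x t ≠ 0) ∧ x (Fin.last n) = j}

instance (n j : ℕ) : Countable (I n j) := by unfold I; infer_instance

lemma B_decomp (n j : ℕ) : B n j = ⋃ x : I n j, Cyl n (ext n x.1) := by
  ext ω
  constructor
  · rintro ⟨hA, hj⟩
    refine Set.mem_iUnion.2 ⟨⟨fun t => ω t.1, fun t => hA t.1 (Nat.lt_succ_iff.mp t.2), hj⟩, ?_⟩
    intro t ht
    rw [ext_le n _ t ht]
  · intro hω
    obtain ⟨x, hx⟩ := Set.mem_iUnion.1 hω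
    refine ⟨fun t ht => ?_, ?_⟩
    · rw [hx t ht, ext_le n _ t ht]; exact x.2.1 _
    · show ω n = j
      rw [hx n le_rfl, ext_le n _ n le_rfl]; exact x.2.2

lemma disj (n j : ℕ) :
    Pairwise (Function.onFun Disjoint fun x : I n j => Cyl n (ext n x.1)) := by
  intro x y hxy
  rw [Function.onFun, Set.disjoint_left]
  intro ω hx hy
  apply hxy
  apply Subtype.ext
  funext t
  have h1 := hx t.1 (Nat.lt_succ_iff.mp t.2)
  have h2 := hy t.1 (Nat.lt_succ_iff.mp t.2)
  rw [ext_le n _ t.1 (Nat.lt_succ_iff.mp t.2)] at h1 h2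
  exact h1.symm.trans h2

variable {k : ℕ} {μ : MeasureTheory.Measure (ℕ → ℕ)}

lemma meas_Cyl (h : IsMarkovChain (rcTrans k) k μ) (n : ℕ) (c : ℕ → ℕ) :
    μ (Cyl n c) =
      (if c 0 = k then 1 else 0) * ∏ t ∈ Finset.range n, rcTrans k (c t) (c (t + 1)) :=
  h.2 n c

lemma Cyl_succ (n : ℕ) (c : ℕ → ℕ) (j : ℕ) :
    Cyl n c ∩ {ω | ω (n + 1) = j} = Cyl (n + 1) (fun t => if t ≤ n then c t else j) := by
  ext ω
  simp only [Cyl, Set.mem_inter_iff, Set.mem_setOf_eq]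
  constructor
  · rintro ⟨h1, h2⟩ t ht
    by_cases htn : t ≤ n
    · simp [htn, h1 t htn]
    · have ht1 : t = n + 1 := by omega
      simp [htn, ht1, h2]
  · intro h1
    constructor
    · intro t ht
      have := h1 t (by omega)
      simpa [ht] using this
    · have := h1 (n + 1) le_rfl
      simpa [show ¬(n + 1 ≤ n) from by omega] using this

lemma meas_Cyl_succ (h : IsMarkovChain (rcTrans k) k μ) (n : ℕ) (c : ℕ → ℕ) (j : ℕ) :
    μ (Cyl n c ∩ {ω | ω (n + 1) = j}) = μ (Cyl n c) * rcTrans k (c n) j := by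
  rw [Cyl_succ, meas_Cyl h, meas_Cyl h]
  have h0 : (if (0 : ℕ) ≤ n then c 0 else j) = c 0 := if_pos (Nat.zero_le n)
  have hprod : (∏ t ∈ Finset.range (n + 1),
        rcTrans k (if t ≤ n then c t else j) (if t + 1 ≤ n then c (t + 1) else j))
      = (∏ t ∈ Finset.range n, rcTrans k (c t) (c (t + 1))) * rcTrans k (c n) j := by
    rw [Finset.prod_range_succ]
    congr 1
    · refine Finset.prod_congr rfl fun t ht => ?_
      simp only [Finset.mem_range] at ht
      have e1 : (if t ≤ n then c t else j) = c t := if_pos (by omega)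
      have e2 : (if t + 1 ≤ n then c (t + 1) else j) = c (t + 1) := if_pos (by omega)
      rw [e1, e2]
    · have e1 : (if n ≤ n then c n else j) = c n := if_pos le_rfl
      have e2 : (if n + 1 ≤ n then c (n + 1) else j) = j := if_neg (by omega)
      rw [e1, e2]
  rw [h0, hprod]
  ring

lemma meas_B_tsum (n j : ℕ) : μ (B n j) = ∑' x : I n j, μ (Cyl n (ext n x.1)) := by
  rw [B_decomp, measure_iUnion (disj n j) (fun x => measurable_Cyl n _)]

lemma meas_B_inter (h : IsMarkovChain (rcTrans k) k μ) (n i j : ℕ) :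
    μ (B n i ∩ {ω | ω (n + 1) = j}) = μ (B n i) * rcTrans k i j := by
  rw [B_decomp, Set.iUnion_inter, measure_iUnion ?_ ?_]
  · calc (∑' x : I n i, μ (Cyl n (ext n x.1) ∩ {ω | ω (n + 1) = j}))
        = ∑' x : I n i, μ (Cyl n (ext n x.1)) * rcTrans k i j := by
          refine tsum_congr fun x => ?_
          rw [meas_Cyl_succ h]
          have he : ext n x.1 n = i := by
            rw [ext_le n _ n le_rfl]; exact x.2.2
          rw [he]
    _ = (∑' x : I n i, μ (Cyl n (ext n x.1))) * rcTrans k i j := ENNReal.tsum_mul_right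
    _ = μ (⋃ x : I n i, Cyl n (ext n x.1)) * rcTrans k i j := by
          rw [measure_iUnion (disj n i) (fun x => measurable_Cyl n _)]
  · intro a b hab
    exact ((disj n i) hab).mono Set.inter_subset_left Set.inter_subset_left
  · exact fun x => (measurable_Cyl n _).inter (measurable_coord (n + 1) j)

lemma meas_B (hk : 1 ≤ k) (h : IsMarkovChain (rcTrans k) k μ) :
    ∀ n j, μ (B n j) = G k n j := by
  intro n
  induction n with
  | zero =>
    intro j
    by_cases hj : j = 0
    · subst hj
      have hB : B 0 0 = ∅ := by
        ext ω
        constructor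
        · rintro ⟨h1, h2⟩; exact absurd h2 (h1 0 le_rfl)
        · intro hf; exact hf.elim
      rw [hB, measure_empty]
      simp [G, show (0 : ℕ) ≠ k from by omega]
    · have hB : B 0 j = Cyl 0 (fun _ => j) := by
        ext ω
        constructor
        · rintro ⟨h1, h2⟩ t ht
          have ht0 : t = 0 := by omega
          rw [ht0]; exact h2
        · intro h1
          exact ⟨fun t ht => by rw [h1 t ht]; exact hj, h1 0 le_rfl⟩
      rw [hB, meas_Cyl h]
      simp [G]
  | succ n ih =>
    intro j
    by_cases hj : j = 0
    · subst hj
      have hB : B (n + 1) 0 = ∅ := by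
        ext ω
        constructor
        · rintro ⟨h1, h2⟩; exact absurd h2 (h1 (n + 1) le_rfl)
        · intro hf; exact hf.elim
      rw [hB, measure_empty]
      have hG : G k (n + 1) 0 = 0 := by
        show (∑' i : ℕ, G k n i * q k i 0) = 0
        simp [q_zero]
      exact hG.symm
    · have hset : B (n + 1) j = ⋃ i : ℕ, (B n i ∩ {ω | ω (n + 1) = j}) := by
        ext ω
        constructor
        · rintro ⟨h1, h2⟩
          exact Set.mem_iUnion.2 ⟨ω n, ⟨⟨fun t ht => h1 t (by omega), rfl⟩, h2⟩⟩
        · intro hω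
          obtain ⟨i, ⟨⟨hA', hn⟩, hj'⟩⟩ := Set.mem_iUnion.1 hω
          refine ⟨fun t ht => ?_, hj'⟩
          by_cases htn : t ≤ n
          · exact hA' t htn
          · have ht1 : t = n + 1 := by omega
            rw [ht1, hj']; exact hj
      rw [hset, measure_iUnion ?_ ?_]
      · calc (∑' i : ℕ, μ (B n i ∩ {ω | ω (n + 1) = j}))
            = ∑' i : ℕ, G k n i * q k i j := by
              refine tsum_congr fun i => ?_
              rw [meas_B_inter h, ih i, q_eq k i j hj]
        _ = G k (n + 1) j := rfl
      · intro a b hab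
        rw [Function.onFun, Set.disjoint_left]
        rintro ω ⟨⟨_, ha⟩, _⟩ ⟨⟨_, hb⟩, _⟩
        exact hab (ha.symm.trans hb)
      · exact fun i => (measurable_B n i).inter (measurable_coord (n + 1) j)

lemma meas_A (hk : 1 ≤ k) (h : IsMarkovChain (rcTrans k) k μ) (n : ℕ) :
    μ (A n) = u k n := by
  have hset : A n = ⋃ j : ℕ, B n j := by
    ext ω
    constructor
    · intro hA'; exact Set.mem_iUnion.2 ⟨ω n, hA', rfl⟩
    · intro hω
      obtain ⟨j, hj, _⟩ := Set.mem_iUnion.1 hω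
      exact hj
  rw [hset, measure_iUnion ?_ (fun j => measurable_B n j)]
  · exact tsum_congr fun j => meas_B hk h n j
  · intro a b hab
    rw [Function.onFun, Set.disjoint_left]
    rintro ω ⟨_, ha⟩ ⟨_, hb⟩
    exact hab (ha.symm.trans hb)

lemma hit_eq (ω : ℕ → ℕ) :
    hitTimeFrom0 0 ω = ∑' n : ℕ, (A n).indicator (fun _ => (1 : ℝ≥0∞)) ω := by
  by_cases hS : ∃ t, ω t = 0
  · set m := Nat.find hS with hm
    have hmem : ∀ n, ω ∈ A n ↔ n < m := by
      intro n
      constructor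
      · intro hA'
        by_contra hlt
        push_neg at hlt
        exact hA' m hlt (Nat.find_spec hS)
      · intro hnm t ht h0
        exact Nat.find_min hS (lt_of_le_of_lt ht hnm) h0
    have h1 : hitTimeFrom0 0 ω = m := by
      apply le_antisymm
      · exact sInf_le ⟨m, Nat.find_spec hS, rfl⟩
      · refine le_sInf ?_
        rintro b ⟨t, ht, rfl⟩
        exact_mod_cast Nat.cast_le.mpr (Nat.find_min' hS ht)
    rw [h1]
    rw [tsum_eq_sum (s := Finset.range m)
      (fun n hn => Set.indicator_of_notMem
        (fun hA' => hn (Finset.mem_range.2 ((hmem n).1 hA'))) _)]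
    rw [Finset.sum_congr rfl
      (fun n hn => Set.indicator_of_mem ((hmem n).2 (Finset.mem_range.1 hn)) _)]
    simp
  · push_neg at hS
    have hempty : {t : ℕ | ω t = 0} = ∅ := by
      ext t; simp [hS t]
    have h1 : hitTimeFrom0 0 ω = ⊤ := by
      rw [hitTimeFrom0, hempty]
      simp
    have h2 : ∀ n : ℕ, (A n).indicator (fun _ => (1 : ℝ≥0∞)) ω = 1 :=
      fun n => Set.indicator_of_mem (show ω ∈ A n from fun t _ => hS t) _
    rw [h1, tsum_congr h2]
    exact (ENNReal.tsum_const_eq_top_of_ne_zero one_ne_zero).symm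

lemma lint (μ : MeasureTheory.Measure (ℕ → ℕ)) :
    (∫⁻ ω, hitTimeFrom0 0 ω ∂μ) = ∑' n : ℕ, μ (A n) := by
  rw [lintegral_congr hit_eq]
  rw [lintegral_tsum (fun n => (measurable_const.indicator (measurable_A n)).aemeasurable)]
  refine tsum_congr fun n => ?_
  exact lintegral_indicator_one (measurable_A n)

end Statement11Aux

open Statement11Aux in
/-- For `k ≥ 1`, the expected hitting time of the absorbing state `0`
starting from state `k` in the Random-Compass chain on `{0, 1, …, k}` equals
`2^(k+1) - 2`. -/
theorem statement11 (k : ℕ) (hk : 1 ≤ k)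
    (μ : MeasureTheory.Measure (ℕ → ℕ))
    (h : IsMarkovChain (rcTrans k) k μ) :
    (∫⁻ ω, hitTimeFrom0 0 ω ∂μ) = 2 ^ (k + 1) - 2 := by
  classical
  haveI := h.1
  have hA : ∀ n, μ (A n) = u k n := meas_A hk h
  have hmono : ∀ m n : ℕ, m ≤ n → u k n ≤ u k m := by
    intro m n hmn
    rw [← hA, ← hA]
    exact measure_mono (fun ω hω t ht => hω t (by omega))
  have hle1 : ∀ n, u k n ≤ 1 := fun n => by rw [← hA]; exact prob_le_one
  have hint : (∫⁻ ω, hitTimeFrom0 0 ω ∂μ) = ∑' n, u k n := by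
    rw [lint μ]; exact tsum_congr hA
  rw [hint]
  exact solve k hk _ (E_ne_top k hk hmono hle1) (E_eq k hk)
end
end

section
/- Let k ≥ 1 and consider the time-homogeneous Markov chain on states {0, 1, …, k} in which state 0 is absorbing and, from each state i with 1 ≤ i ≤ k, the chain moves to state i−1 with probability 1/2 and to state k with probability 1/2. Then for every starting state i with 1 ≤ i ≤ k, the expected hitting time of state 0 satisfies E[T_i] ≥ 2^k. -/
open MeasureTheory ENNReal Finset

noncomputable section

open Finset

namespace RC

/-- Position of the walk started at `k` after `n` steps, driven by choices `b`:
`true` = move down by one, `false` = reset to `k`. -/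
def pos (k : ℕ) (b : ℕ → Bool) : ℕ → ℕ
  | 0 => k
  | n+1 => if b n then pos k b n - 1 else k

@[simp] lemma pos_zero (k : ℕ) (b : ℕ → Bool) : pos k b 0 = k := rfl

lemma pos_succ (k : ℕ) (b : ℕ → Bool) (n : ℕ) :
    pos k b (n+1) = if b n then pos k b n - 1 else k := rfl

lemma pos_le (k : ℕ) (b : ℕ → Bool) : ∀ n, pos k b n ≤ k
  | 0 => le_rfl
  | n+1 => by
    rw [pos_succ]
    split
    · exact le_trans (Nat.sub_le _ _) (pos_le k b n)
    · exact le_rfl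

lemma le_pos_add (k : ℕ) (b : ℕ → Bool) : ∀ n, k ≤ pos k b n + n
  | 0 => by simp
  | n+1 => by
    rw [pos_succ]
    split
    · have := le_pos_add k b n
      omega
    · omega

lemma pos_congr (k : ℕ) {b b' : ℕ → Bool} : ∀ n, (∀ j < n, b j = b' j) →
    pos k b n = pos k b' n
  | 0, _ => rfl
  | n+1, h => by
    rw [pos_succ, pos_succ,
      pos_congr k n (fun j hj => h j (Nat.lt_succ_of_lt hj)), h n (Nat.lt_succ_self n)]

lemma pos_le_succ (k : ℕ) (b : ℕ → Bool) (n : ℕ) : pos k b n ≤ pos k b (n+1) + 1 := by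
  rw [pos_succ]
  split
  · omega
  · have := pos_le k b n; omega

/-- the step backwards: if after step `n+1` the position is strictly below `k`,
the step was a down-move. -/
lemma step_back (k : ℕ) (b : ℕ → Bool) (n : ℕ) (h0 : pos k b n ≠ 0)
    (h : pos k b (n+1) < k) : b n = true ∧ pos k b n = pos k b (n+1) + 1 := by
  rcases hb : b n with _ | _
  · exfalso
    have : pos k b (n+1) = k := by rw [pos_succ, hb]; simp
    omega
  · refine ⟨rfl, ?_⟩
    have : pos k b (n+1) = pos k b n - 1 := by rw [pos_succ, hb]; simp
    omega

/-- extend a finite choice vector by `false`s -/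
def ext {m : ℕ} (c : Fin m → Bool) : ℕ → Bool := fun n => if h : n < m then c ⟨n, h⟩ else false

/-- the set of "good" choice vectors: the walk started at `k` avoids `0` during
the first `m` steps. -/
def Gset (k m : ℕ) : Finset (Fin m → Bool) :=
  Finset.univ.filter (fun c => ∀ s ≤ m, pos k (ext c) s ≠ 0)

def g (k m : ℕ) : ℕ := (Gset k m).card

lemma mem_Gset {k m : ℕ} {c : Fin m → Bool} :
    c ∈ Gset k m ↔ ∀ s ≤ m, pos k (ext c) s ≠ 0 := by
  simp [Gset]

lemma g_le (k m : ℕ) : g k m ≤ 2 ^ m := by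
  have := Finset.card_filter_le (Finset.univ : Finset (Fin m → Bool))
    (fun c => ∀ s ≤ m, pos k (ext c) s ≠ 0)
  simpa [g, Gset, Finset.card_univ] using this

lemma g_of_lt {k m : ℕ} (h : m < k) : g k m = 2 ^ m := by
  have : Gset k m = Finset.univ := by
    ext c
    simp only [mem_Gset, Finset.mem_univ, iff_true]
    intro s hs
    have := le_pos_add k (ext c) s
    omega
  simp [g, this, Finset.card_univ]

end RC

namespace RC

lemma pos_le_add (k : ℕ) (b : ℕ → Bool) (n : ℕ) : ∀ d, pos k b n ≤ pos k b (n+d) + d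
  | 0 => le_rfl
  | d+1 => by
    have h1 := pos_le_add k b n d
    have h2 := pos_le_succ k b (n+d)
    have : n + (d+1) = (n+d) + 1 := by omega
    rw [this]
    omega

lemma pos_alltrue (k : ℕ) (b : ℕ → Bool) : ∀ n, (∀ j < n, b j = true) → pos k b n = k - n
  | 0, _ => by simp
  | n+1, h => by
    rw [pos_succ, h n (Nat.lt_succ_self n), pos_alltrue k b n (fun j hj => h j (Nat.lt_succ_of_lt hj))]
    simp
    omega

lemma g_base (k : ℕ) (hk : 1 ≤ k) : g k k + 1 = 2 ^ k := by
  have : Gset k k = Finset.univ.erase (fun _ => true) := by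
    ext c
    rw [mem_Gset, Finset.mem_erase]
    constructor
    · intro hgood
      refine ⟨?_, Finset.mem_univ _⟩
      intro hc
      have hall : ∀ j < k, ext c j = true := by
        intro j hj
        simp [ext, hj, hc]
      have := pos_alltrue k (ext c) k hall
      exact hgood k le_rfl (by omega)
    · rintro ⟨hc, -⟩
      intro s hs
      by_cases hsk : s < k
      · have := le_pos_add k (ext c) s
        omega
      · rw [show s = k by omega]
        -- there is a false coordinate
        have : ¬ ∀ j : Fin k, c j = true := by
          intro hall
          exact hc (funext fun j => hall j)
        push_neg at this
        obtain ⟨j, hj⟩ := this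
        have hjf : ext c (j : ℕ) = false := by
          simp only [ext, j.isLt, dif_pos]
          simpa using hj
        have hpos : pos k (ext c) ((j : ℕ) + 1) = k := by
          rw [pos_succ, hjf]; simp
        have h1 := pos_le_add k (ext c) ((j:ℕ)+1) (k - ((j:ℕ)+1))
        have hjk : (j:ℕ) + 1 + (k - ((j:ℕ)+1)) = k := by have := j.isLt; omega
        rw [hjk, hpos] at h1
        have := j.isLt
        omega
  rw [g, this, Finset.card_erase_of_mem (Finset.mem_univ _), Finset.card_univ]
  simp
  have : 1 ≤ 2 ^ k := Nat.one_le_two_pow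
  omega

end RC

namespace RC

def B (k m : ℕ) : ℕ := ((Gset k m).filter (fun w => pos k (ext w) m = 1)).card

lemma ext_snoc_lt {m : ℕ} (w : Fin m → Bool) (d : Bool) {n : ℕ} (hn : n < m) :
    ext (Fin.snoc w d) n = ext w n := by
  have hn' : n < m + 1 := by omega
  simp only [ext, dif_pos hn, dif_pos hn']
  have : (⟨n, hn'⟩ : Fin (m+1)) = Fin.castSucc ⟨n, hn⟩ := rfl
  rw [this, Fin.snoc_castSucc]

lemma ext_snoc_self {m : ℕ} (w : Fin m → Bool) (d : Bool) :
    ext (Fin.snoc w d) m = d := by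
  have hm : m < m + 1 := Nat.lt_succ_self m
  simp only [ext, dif_pos hm]
  have : (⟨m, hm⟩ : Fin (m+1)) = Fin.last m := rfl
  rw [this, Fin.snoc_last]

lemma pos_snoc {k m : ℕ} (w : Fin m → Bool) (d : Bool) {s : ℕ} (hs : s ≤ m) :
    pos k (ext (Fin.snoc w d)) s = pos k (ext w) s :=
  pos_congr k s (fun j hj => ext_snoc_lt w d (by omega))

lemma mem_Gset_snoc {k m : ℕ} (hk : 1 ≤ k) (w : Fin m → Bool) (d : Bool) :
    Fin.snoc w d ∈ Gset k (m+1) ↔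
      w ∈ Gset k m ∧ ¬(d = true ∧ pos k (ext w) m = 1) := by
  have hlast : pos k (ext (Fin.snoc w d)) (m+1)
      = if d then pos k (ext w) m - 1 else k := by
    rw [pos_succ, ext_snoc_self, pos_snoc w d le_rfl]
  rw [mem_Gset, mem_Gset]
  constructor
  · intro hgood
    have hw : ∀ s ≤ m, pos k (ext w) s ≠ 0 := by
      intro s hs
      rw [← pos_snoc w d hs]
      exact hgood s (by omega)
    refine ⟨hw, ?_⟩
    rintro ⟨rfl, h1⟩
    have := hgood (m+1) le_rfl
    rw [hlast, h1] at this
    simp at this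
  · rintro ⟨hw, hd⟩
    intro s hs
    rcases Nat.lt_or_ge s (m+1) with hsm | hsm
    · rw [pos_snoc w d (by omega)]
      exact hw s (by omega)
    · have hs' : s = m + 1 := by omega
      rw [hs', hlast]
      cases d with
      | false => simpa using by omega
      | true =>
        simp only [if_true]
        have h0 := hw m le_rfl
        have h1 : pos k (ext w) m ≠ 1 := fun h => hd ⟨rfl, h⟩
        omega

lemma g_succ (k m : ℕ) (hk : 1 ≤ k) : g k (m+1) + B k m = 2 * g k m := by
  classical
  have hmap : ∀ c ∈ Gset k (m+1), Fin.init c ∈ Gset k m := by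
    intro c hc
    rw [mem_Gset] at hc ⊢
    intro s hs
    have : pos k (ext (Fin.init c)) s = pos k (ext c) s := by
      apply pos_congr
      intro j hj
      have hjm : j < m := by omega
      have := ext_snoc_lt (Fin.init c) (c (Fin.last m)) hjm
      rw [Fin.snoc_init_self] at this
      exact this.symm
    rw [this]
    exact hc s (by omega)
  have hcount := Finset.card_eq_sum_card_fiberwise hmap
  have hfiber : ∀ w ∈ Gset k m,
      ((Gset k (m+1)).filter (fun c => Fin.init c = w)).card
        = if pos k (ext w) m = 1 then 1 else 2 := by
    intro w hw
    split_ifs with h1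
    · rw [Finset.card_eq_one]
      refine ⟨Fin.snoc w false, ?_⟩
      ext c
      simp only [Finset.mem_filter, Finset.mem_singleton]
      constructor
      · rintro ⟨hc, rfl⟩
        have hc' := hc
        rw [← Fin.snoc_init_self c, mem_Gset_snoc hk] at hc'
        rcases hcl : c (Fin.last m) with _ | _
        · rw [← hcl]; exact (Fin.snoc_init_self c).symm
        · exact absurd ⟨hcl, h1⟩ hc'.2
      · rintro rfl
        refine ⟨(mem_Gset_snoc hk w false).2 ⟨hw, by simp⟩, by simp [Fin.init_snoc]⟩
    · have : (Gset k (m+1)).filter (fun c => Fin.init c = w)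
          = {Fin.snoc w false, Fin.snoc w true} := by
        ext c
        simp only [Finset.mem_filter, Finset.mem_insert, Finset.mem_singleton]
        constructor
        · rintro ⟨hc, rfl⟩
          rcases hcl : c (Fin.last m) with _ | _
          · left; rw [← hcl]; exact (Fin.snoc_init_self c).symm
          · right; rw [← hcl]; exact (Fin.snoc_init_self c).symm
        · rintro (rfl | rfl)
          · exact ⟨(mem_Gset_snoc hk w false).2 ⟨hw, by simp⟩, by simp [Fin.init_snoc]⟩
          · exact ⟨(mem_Gset_snoc hk w true).2 ⟨hw, by simp [h1]⟩, by simp [Fin.init_snoc]⟩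
      rw [this]
      rw [Finset.card_insert_of_notMem, Finset.card_singleton]
      simp only [Finset.mem_singleton]
      intro hcontra
      have := congr_fun hcontra (Fin.last m)
      simp [Fin.snoc_last] at this
  rw [Finset.sum_congr rfl hfiber] at hcount
  rw [Finset.sum_ite, Finset.sum_const, Finset.sum_const, smul_eq_mul, smul_eq_mul] at hcount
  have hsplit := Finset.card_filter_add_card_filter_not
    (s := Gset k m) (p := fun w => pos k (ext w) m = 1)
  unfold g B
  omega

end RC

namespace RC

def extF (M k : ℕ) (u : Fin M → Bool) : Fin (M+k) → Bool :=
  fun j => if h : (j : ℕ) < M then u ⟨(j : ℕ), h⟩ else decide ((j : ℕ) ≠ M)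

lemma ext_extF_lt {M k : ℕ} (u : Fin M → Bool) {n : ℕ} (hn : n < M) :
    ext (extF M k u) n = ext u n := by
  have hn' : n < M + k := by omega
  simp only [ext, extF, dif_pos hn, dif_pos hn']

lemma ext_extF_M {M k : ℕ} (hk : 1 ≤ k) (u : Fin M → Bool) :
    ext (extF M k u) M = false := by
  have hM : M < M + k := by omega
  simp [ext, extF, hM]

lemma ext_extF_mid {M k : ℕ} (u : Fin M → Bool) {n : ℕ} (h1 : M < n) (h2 : n < M + k) :
    ext (extF M k u) n = true := by
  simp only [ext, dif_pos h2, extF]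
  have : ¬ (n < M) := by omega
  simp only [dif_neg this]
  simp; omega

lemma posF_agree {M k : ℕ} (u : Fin M → Bool) {s : ℕ} (hs : s ≤ M) :
    pos k (ext (extF M k u)) s = pos k (ext u) s :=
  pos_congr k s (fun j hj => ext_extF_lt u (by omega))

lemma posF_high {M k : ℕ} (hk : 1 ≤ k) (u : Fin M → Bool) :
    ∀ j, j < k → pos k (ext (extF M k u)) (M + 1 + j) = k - j
  | 0, _ => by
    rw [pos_succ, ext_extF_M hk u]
    simp
  | j+1, hj => by
    have ih := posF_high hk u j (by omega)
    have harr : M + 1 + (j + 1) = (M + 1 + j) + 1 := by omega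
    rw [harr, pos_succ, ih, ext_extF_mid u (by omega) (by omega)]
    simp
    omega

lemma back_pos {M k : ℕ} (hk : 1 ≤ k) {w : Fin (M+k) → Bool}
    (hw : w ∈ Gset k (M+k)) (h1 : pos k (ext w) (M+k) = 1) :
    ∀ j, j < k → pos k (ext w) (M + k - j) = 1 + j
  | 0, _ => by simpa using h1
  | j+1, hj => by
    have ih := back_pos hk hw h1 j (by omega)
    have hn : M + k - j = (M + k - (j+1)) + 1 := by omega
    rw [hn] at ih
    have h0 : pos k (ext w) (M + k - (j+1)) ≠ 0 :=
      (mem_Gset.1 hw) _ (by omega)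
    have := (step_back k (ext w) (M + k - (j+1)) h0 (by omega)).2
    omega

lemma back_true {M k : ℕ} (hk : 1 ≤ k) {w : Fin (M+k) → Bool}
    (hw : w ∈ Gset k (M+k)) (h1 : pos k (ext w) (M+k) = 1)
    {n : ℕ} (hn1 : M < n) (hn2 : n < M + k) : ext w n = true := by
  set j := M + k - n - 1 with hj
  have hjk : j < k := by omega
  have hp := back_pos hk hw h1 j hjk
  have hn' : M + k - j = n + 1 := by omega
  rw [hn'] at hp
  have h0 : pos k (ext w) n ≠ 0 := (mem_Gset.1 hw) _ (by omega)
  exact (step_back k (ext w) n h0 (by omega)).1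

lemma back_M {M k : ℕ} (hk : 1 ≤ k) {w : Fin (M+k) → Bool}
    (hw : w ∈ Gset k (M+k)) (h1 : pos k (ext w) (M+k) = 1) :
    ext w M = false := by
  have hp := back_pos hk hw h1 (k-1) (by omega)
  have hn' : M + k - (k-1) = M + 1 := by omega
  have hk' : 1 + (k-1) = k := by omega
  rw [hn', hk'] at hp
  rcases hb : ext w M with _ | _
  · rfl
  · exfalso
    rw [pos_succ, hb] at hp
    simp at hp
    have := pos_le k (ext w) M
    omega

lemma B_eq (M k : ℕ) (hk : 1 ≤ k) : B k (M + k) = g k M := by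
  classical
  unfold B g
  symm
  apply Finset.card_bij (fun u _ => extF M k u)
  · -- maps into the filter set
    intro u hu
    have hgood : ∀ s ≤ M + k, pos k (ext (extF M k u)) s ≠ 0 := by
      intro s hs
      rcases Nat.lt_or_ge s (M+1) with hsM | hsM
      · rw [posF_agree u (by omega)]
        exact (mem_Gset.1 hu) s (by omega)
      · have hsj : s = M + 1 + (s - M - 1) := by omega
        rw [hsj, posF_high hk u (s - M - 1) (by omega)]
        omega
    have hone : pos k (ext (extF M k u)) (M + k) = 1 := by
      have hp := posF_high hk u (k-1) (by omega)
      rw [show M + 1 + (k-1) = M + k from by omega] at hp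
      omega
    simp only [Finset.mem_filter]
    exact ⟨mem_Gset.2 hgood, hone⟩
  · -- injective
    intro u hu u' hu' heq
    funext j
    have := congr_fun heq ⟨(j : ℕ), by have := j.isLt; omega⟩
    simpa [extF, j.isLt] using this
  · -- surjective
    intro w hwmem
    rw [Finset.mem_filter] at hwmem
    obtain ⟨hw, h1⟩ := hwmem
    refine ⟨fun j => w ⟨(j : ℕ), by have := j.isLt; omega⟩, ?_, ?_⟩
    · apply mem_Gset.2
      intro s hs
      have hagree : pos k (ext (fun j : Fin M => w ⟨(j : ℕ), by have := j.isLt; omega⟩)) s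
          = pos k (ext w) s := by
        apply pos_congr
        intro n hns
        have hnM : n < M := by omega
        have hnMk : n < M + k := by omega
        simp only [ext, dif_pos hnM, dif_pos hnMk]
      rw [hagree]
      exact (mem_Gset.1 hw) s (by omega)
    · funext j
      rcases Nat.lt_trichotomy (j : ℕ) M with hj | hj | hj
      · simp only [extF, dif_pos hj]
      · have hb := back_M hk hw h1
        have hM : M < M + k := by omega
        have hwj : w j = false := by
          have hext : ext w M = w ⟨M, hM⟩ := by simp only [ext, dif_pos hM]
          rw [hext] at hb
          have hjeq : j = (⟨M, hM⟩ : Fin (M+k)) := Fin.ext (by simpa using hj)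
          rw [hjeq]; exact hb
        simp only [extF, dif_neg (by omega : ¬ ((j:ℕ) < M)), hwj]
        simp [hj]
      · have hb := back_true hk hw h1 hj j.isLt
        have hwj : w j = true := by
          have hext : ext w (j : ℕ) = w j := by simp [ext, j.isLt]
          rw [← hext]; exact hb
        simp only [extF, dif_neg (by omega : ¬ ((j:ℕ) < M)), hwj]
        simp; omega

end RC

namespace RC

lemma nat_id (k : ℕ) (hk : 1 ≤ k) : ∀ M : ℕ,
    (∑ m ∈ Finset.range M, g k m * 2^(M+k-m)) + 2^(k+1) * g k (M+k) + 2 * 2^(M+k)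
      = 2^(k+1) * 2^(M+k)
  | 0 => by
    have h1 := g_base k hk
    simp only [Finset.range_zero, Finset.sum_empty, Nat.zero_add, zero_add]
    zify at h1 ⊢
    linear_combination (2:ℤ)^(k+1) * h1
  | M+1 => by
    have ih := nat_id k hk M
    have hrec := g_succ k (M+k) hk
    rw [B_eq M k hk] at hrec
    have hsum : ∑ m ∈ Finset.range (M+1), g k m * 2^(M+1+k-m)
        = 2 * (∑ m ∈ Finset.range M, g k m * 2^(M+k-m)) + g k M * 2^(k+1) := by
      rw [Finset.sum_range_succ, Finset.mul_sum]
      congr 1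
      · apply Finset.sum_congr rfl
        intro m hm
        rw [Finset.mem_range] at hm
        rw [show M+1+k-m = (M+k-m)+1 from by omega, pow_succ]
        ring
      · congr 2
        omega
    rw [hsum, show M+1+k = (M+k)+1 from by omega, pow_succ,
      show (M+k)+1 = M+k+1 from rfl]
    zify at ih hrec ⊢
    linear_combination 2 * ih + (2:ℤ)^(k+1) * hrec

end RC

namespace RC
open ENNReal

lemma two_mul_inv : (2:ℝ≥0∞) * 2⁻¹ = 1 :=
  ENNReal.mul_inv_cancel (by norm_num) (by norm_num)

lemma enn_id (k : ℕ) (hk : 1 ≤ k) : ∀ M : ℕ,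
    (∑ m ∈ Finset.range M, (g k m : ℝ≥0∞) * 2⁻¹^(m+1)) + (g k (M+k) : ℝ≥0∞) * 2⁻¹^M + 1
      = 2^k
  | 0 => by
    have h1 := g_base k hk
    have h2 : ((g k k : ℕ) : ℝ≥0∞) + 1 = 2^k := by exact_mod_cast h1
    simpa using h2
  | M+1 => by
    have ih := enn_id k hk M
    have hrec := g_succ k (M+k) hk
    rw [B_eq M k hk] at hrec
    have hrec' : ((g k (M+k+1) : ℕ) : ℝ≥0∞) + (g k M : ℝ≥0∞)
        = 2 * (g k (M+k) : ℝ≥0∞) := by exact_mod_cast hrec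
    rw [Finset.sum_range_succ, show M+1+k = M+k+1 from by omega]
    have key : (g k M : ℝ≥0∞) * 2⁻¹^(M+1) + (g k (M+k+1) : ℝ≥0∞) * 2⁻¹^(M+1)
        = (g k (M+k) : ℝ≥0∞) * 2⁻¹^M := by
      rw [← add_mul, add_comm ((g k M : ℝ≥0∞)) _, hrec']
      calc 2 * (g k (M+k) : ℝ≥0∞) * 2⁻¹^(M+1)
          = (2 * 2⁻¹) * ((g k (M+k) : ℝ≥0∞) * 2⁻¹^M) := by rw [pow_succ]; ring
        _ = (g k (M+k) : ℝ≥0∞) * 2⁻¹^M := by rw [two_mul_inv, one_mul]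
    rw [add_assoc (∑ m ∈ Finset.range M, (g k m : ℝ≥0∞) * 2⁻¹^(m+1)), key]
    exact ih

lemma sv_antitone (k : ℕ) (hk : 1 ≤ k) {m n : ℕ} (hmn : m ≤ n) :
    (g k n : ℝ≥0∞) * 2⁻¹^n ≤ (g k m : ℝ≥0∞) * 2⁻¹^m := by
  induction n, hmn using Nat.le_induction with
  | base => exact le_refl _
  | succ n hmn ih =>
    refine le_trans ?_ ih
    have hg : g k (n+1) ≤ 2 * g k n := by
      have := g_succ k n hk
      omega
    calc (g k (n+1) : ℝ≥0∞) * 2⁻¹^(n+1)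
        ≤ (2 * (g k n : ℝ≥0∞)) * 2⁻¹^(n+1) := by
          apply mul_le_mul_left
          exact_mod_cast hg
      _ = (2 * 2⁻¹) * ((g k n : ℝ≥0∞) * 2⁻¹^n) := by rw [pow_succ]; ring
      _ = (g k n : ℝ≥0∞) * 2⁻¹^n := by rw [two_mul_inv, one_mul]

end RC

open MeasureTheory ENNReal

namespace RC

/-- the event that the walk avoids `0` during the first `t` steps -/
def Aset (t : ℕ) : Set (ℕ → ℕ) := {ω | ∀ s ≤ t, ω s ≠ 0}

lemma measurable_Aset (t : ℕ) : MeasurableSet (Aset t) := by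
  have : Aset t = ⋂ s ∈ Set.Iic t, (fun ω : ℕ → ℕ => ω s) ⁻¹' ({0}ᶜ) := by
    ext ω
    simp [Aset, Set.mem_iInter]
  rw [this]
  exact MeasurableSet.biInter (Set.to_countable _)
    (fun s _ => (measurable_pi_apply s) (measurableSet_singleton 0).compl)

lemma measurable_cyl (T : ℕ) (p : ℕ → ℕ) :
    MeasurableSet {ω : ℕ → ℕ | ∀ t ≤ T, ω t = p t} := by
  have : {ω : ℕ → ℕ | ∀ t ≤ T, ω t = p t}
      = ⋂ t ∈ Set.Iic T, (fun ω : ℕ → ℕ => ω t) ⁻¹' {p t} := by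
    ext ω
    simp [Set.mem_iInter]
  rw [this]
  exact MeasurableSet.biInter (Set.to_countable _)
    (fun t _ => (measurable_pi_apply t) (measurableSet_singleton _))

lemma hit_ge {ω : ℕ → ℕ} {t : ℕ} (h : ω ∈ Aset t) :
    ((t : ℝ≥0∞) + 1) ≤ hitTimeFrom0 0 ω := by
  apply le_sInf
  rintro x ⟨u, hu, rfl⟩
  have htu : t + 1 ≤ u := by
    by_contra hle
    exact h u (by omega) hu
  calc (t:ℝ≥0∞) + 1 = ((t+1 : ℕ) : ℝ≥0∞) := by push_cast; ring
    _ ≤ (u : ℝ≥0∞) := Nat.cast_le.2 htu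

lemma sum_ind_le (ω : ℕ → ℕ) : ∀ N : ℕ,
    ∑ t ∈ Finset.range N, (Aset t).indicator (1 : (ℕ → ℕ) → ℝ≥0∞) ω
      ≤ hitTimeFrom0 0 ω
  | 0 => by simp
  | N+1 => by
    by_cases hω : ω ∈ Aset N
    · have hall : ∀ t ∈ Finset.range (N+1),
          (Aset t).indicator (1 : (ℕ → ℕ) → ℝ≥0∞) ω = 1 := by
        intro t ht
        rw [Finset.mem_range] at ht
        have : ω ∈ Aset t := fun s hs => hω s (by omega)
        simp [Set.indicator_of_mem this]
      rw [Finset.sum_congr rfl hall, Finset.sum_const, Finset.card_range,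
        nsmul_eq_mul, mul_one]
      have := hit_ge hω
      calc ((N+1 : ℕ) : ℝ≥0∞) = (N : ℝ≥0∞) + 1 := by push_cast; ring
        _ ≤ hitTimeFrom0 0 ω := this
    · rw [Finset.sum_range_succ, Set.indicator_of_notMem hω, add_zero]
      exact sum_ind_le ω N

lemma sum_measure_le (μ : Measure (ℕ → ℕ)) (N : ℕ) :
    ∑ t ∈ Finset.range N, μ (Aset t) ≤ ∫⁻ ω, hitTimeFrom0 0 ω ∂μ := by
  have h1 : ∀ t : ℕ, μ (Aset t)
      = ∫⁻ ω, (Aset t).indicator (1 : (ℕ → ℕ) → ℝ≥0∞) ω ∂μ := by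
    intro t
    rw [lintegral_indicator_one (measurable_Aset t)]
  calc ∑ t ∈ Finset.range N, μ (Aset t)
      = ∑ t ∈ Finset.range N,
          ∫⁻ ω, (Aset t).indicator (1 : (ℕ → ℕ) → ℝ≥0∞) ω ∂μ :=
        Finset.sum_congr rfl (fun t _ => h1 t)
    _ = ∫⁻ ω, ∑ t ∈ Finset.range N,
          (Aset t).indicator (1 : (ℕ → ℕ) → ℝ≥0∞) ω ∂μ := by
        rw [lintegral_finset_sum]
        intro t _
        exact measurable_const.indicator (measurable_Aset t)
    _ ≤ ∫⁻ ω, hitTimeFrom0 0 ω ∂μ := lintegral_mono (fun ω => sum_ind_le ω N)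

end RC

namespace RC

def rcPath (i k : ℕ) (b : ℕ → Bool) : ℕ → ℕ
  | 0 => i
  | n+1 => pos k b n

lemma rcTrans_half_first {k i : ℕ} (hk : 1 ≤ k) (hi : 1 ≤ i) (hik : i ≤ k) :
    rcTrans k i k = 1/2 := by
  unfold rcTrans
  rw [if_neg (by omega)]
  rw [if_pos hik]
  rw [if_neg (by omega), if_pos rfl, zero_add]

lemma rcTrans_half_step {k : ℕ} (hk : 1 ≤ k) (b : ℕ → Bool) (s : ℕ)
    (h0 : pos k b s ≠ 0) :
    rcTrans k (pos k b s) (pos k b (s+1)) = 1/2 := by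
  have hle := pos_le k b s
  unfold rcTrans
  have h1 : pos k b s - 1 ≠ k := by omega
  have h2 : ¬ (k = pos k b s - 1) := by omega
  rw [if_neg h0, if_pos hle, pos_succ]
  rcases b s with _ | _
  · simp [h2]
  · simp [h1]

lemma choice_inj {k : ℕ} (hk : 1 ≤ k) {b b' : ℕ → Bool} {m : ℕ}
    (h : ∀ s ≤ m, pos k b s = pos k b' s) : ∀ n < m, b n = b' n := by
  intro n
  induction n using Nat.strong_induction_on with
  | _ n ih =>
    intro hn
    have hpos_n : pos k b n = pos k b' n := h n (by omega)
    have hpos_sn : pos k b (n+1) = pos k b' (n+1) := h (n+1) (by omega)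
    rcases hb : b n with _ | _ <;> rcases hb' : b' n with _ | _
    · rfl
    · exfalso
      rw [pos_succ, pos_succ, hb, hb'] at hpos_sn
      simp only [if_neg Bool.false_ne_true, Bool.false_eq_true] at hpos_sn
      have := pos_le k b' n
      simp at hpos_sn
      omega
    · exfalso
      rw [pos_succ, pos_succ, hb, hb'] at hpos_sn
      have := pos_le k b n
      simp at hpos_sn
      omega
    · rfl

/-- the cylinder event of following the path prescribed by choices `c` for `m+1` steps -/
def Cyl (i k m : ℕ) (c : Fin m → Bool) : Set (ℕ → ℕ) :=
  {ω | ∀ t ≤ m + 1, ω t = rcPath i k (ext c) t}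

lemma measure_A_succ_ge {k i : ℕ} (hk : 1 ≤ k) (hi : 1 ≤ i) (hik : i ≤ k)
    (μ : Measure (ℕ → ℕ))
    (hcyl : ∀ (T : ℕ) (path : ℕ → ℕ),
      μ {ω | ∀ t ≤ T, ω t = path t} =
        (if path 0 = i then 1 else 0) * ∏ t ∈ Finset.range T, rcTrans k (path t) (path (t + 1)))
    (m : ℕ) :
    (g k m : ℝ≥0∞) * 2⁻¹^(m+1) ≤ μ (Aset (m+1)) := by
  classical
  -- measure of each good cylinder
  have hCyl : ∀ c ∈ Gset k m, μ (Cyl i k m c) = 2⁻¹^(m+1) := by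
    intro c hc
    have hgood := mem_Gset.1 hc
    have := hcyl (m+1) (rcPath i k (ext c))
    rw [show rcPath i k (ext c) 0 = i from rfl, if_pos rfl, one_mul] at this
    rw [Cyl, this]
    have hfac : ∀ t ∈ Finset.range (m+1),
        rcTrans k (rcPath i k (ext c) t) (rcPath i k (ext c) (t+1)) = 1/2 := by
      intro t ht
      rw [Finset.mem_range] at ht
      match t with
      | 0 =>
        have h1 : rcPath i k (ext c) 1 = pos k (ext c) 0 := rfl
        rw [h1, pos_zero]
        exact rcTrans_half_first hk hi hik
      | Nat.succ s =>
        have h1 : rcPath i k (ext c) (s+1) = pos k (ext c) s := rfl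
        have h2 : rcPath i k (ext c) (s+2) = pos k (ext c) (s+1) := rfl
        rw [h1, h2]
        exact rcTrans_half_step hk (ext c) s (hgood s (by omega))
    rw [Finset.prod_congr rfl hfac, Finset.prod_const, Finset.card_range, one_div]
  -- cylinders are pairwise disjoint
  have hdisj : (↑(Gset k m) : Set (Fin m → Bool)).PairwiseDisjoint (Cyl i k m) := by
    intro c hc c' hc' hne
    rw [Function.onFun, Set.disjoint_left]
    intro ω hω hω'
    apply hne
    have hpos : ∀ s ≤ m, pos k (ext c) s = pos k (ext c') s := by
      intro s hs
      have e1 : rcPath i k (ext c) (s+1) = ω (s+1) := (hω (s+1) (by omega)).symm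
      have e2 : ω (s+1) = rcPath i k (ext c') (s+1) := hω' (s+1) (by omega)
      have : rcPath i k (ext c) (s+1) = rcPath i k (ext c') (s+1) := e1.trans e2
      exact this
    have hext := choice_inj hk hpos
    funext j
    have := hext (j : ℕ) j.isLt
    simpa [ext, j.isLt] using this
  -- cylinders are inside the avoidance event
  have hsub : ∀ c ∈ Gset k m, Cyl i k m c ⊆ Aset (m+1) := by
    intro c hc ω hω s hs
    rw [hω s hs]
    match s with
    | 0 => exact by simpa [rcPath] using (by omega : i ≠ 0)
    | Nat.succ u =>
      have h1 : rcPath i k (ext c) (u+1) = pos k (ext c) u := rfl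
      rw [h1]
      exact (mem_Gset.1 hc) u (by omega)
  calc (g k m : ℝ≥0∞) * 2⁻¹^(m+1)
      = ∑ c ∈ Gset k m, μ (Cyl i k m c) := by
        rw [Finset.sum_congr rfl hCyl, Finset.sum_const, nsmul_eq_mul]
        rfl
    _ = μ (⋃ c ∈ Gset k m, Cyl i k m c) :=
        (measure_biUnion_finset hdisj (fun c _ => measurable_cyl _ _)).symm
    _ ≤ μ (Aset (m+1)) := by
        apply measure_mono
        exact Set.iUnion₂_subset hsub

lemma measure_A_zero_ge {k i : ℕ} (hi : 1 ≤ i)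
    (μ : Measure (ℕ → ℕ))
    (hcyl : ∀ (T : ℕ) (path : ℕ → ℕ),
      μ {ω | ∀ t ≤ T, ω t = path t} =
        (if path 0 = i then 1 else 0) * ∏ t ∈ Finset.range T, rcTrans k (path t) (path (t + 1))) :
    1 ≤ μ (Aset 0) := by
  have h0 := hcyl 0 (fun _ => i)
  simp only [Finset.range_zero, Finset.prod_empty, mul_one, if_pos rfl] at h0
  calc (1:ℝ≥0∞) = μ {ω : ℕ → ℕ | ∀ t ≤ 0, ω t = i} := h0.symm
    _ ≤ μ (Aset 0) := by
        apply measure_mono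
        intro ω hω s hs
        rw [show s = 0 from by omega, hω 0 le_rfl]
        omega

end RC

namespace RC
open NNReal

lemma pow_cancel (e : ℕ) : (2:ℝ≥0∞)^e * 2⁻¹^e = 1 := by
  rw [← mul_pow, two_mul_inv, one_pow]

theorem main (k : ℕ) (hk : 1 ≤ k) (i : ℕ) (hi : 1 ≤ i) (hik : i ≤ k)
    (μ : MeasureTheory.Measure (ℕ → ℕ))
    (hcyl : ∀ (T : ℕ) (path : ℕ → ℕ),
      μ {ω | ∀ t ≤ T, ω t = path t} =
        (if path 0 = i then 1 else 0) * ∏ t ∈ Finset.range T, rcTrans k (path t) (path (t + 1))) :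
    2 ^ k ≤ ∫⁻ ω, hitTimeFrom0 0 ω ∂μ := by
  set E := ∫⁻ ω, hitTimeFrom0 0 ω ∂μ with hE
  have hQ : ∀ M : ℕ,
      (∑ m ∈ Finset.range M, (g k m : ℝ≥0∞) * 2⁻¹^(m+1)) + 1 ≤ E := by
    intro M
    have h1 : ∑ t ∈ Finset.range (M+1), μ (Aset t) ≤ E := sum_measure_le μ (M+1)
    rw [Finset.sum_range_succ'] at h1
    refine le_trans (add_le_add ?_ ?_) h1
    · exact Finset.sum_le_sum (fun m _ => measure_A_succ_ge hk hi hik μ hcyl m)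
    · exact measure_A_zero_ge hi μ hcyl
  apply ENNReal.le_of_forall_pos_le_add
  intro ε hε _
  set n : ℕ := ⌈(ε⁻¹ : ℝ≥0)⌉₊ + 1 with hn
  set M : ℕ := 2^(2*k+1) * n with hM
  have hMpos : 0 < M := by rw [hM]; positivity
  have hM0 : (M:ℝ≥0∞) ≠ 0 := by exact_mod_cast Nat.pos_iff_ne_zero.1 hMpos
  have hMtop : (M:ℝ≥0∞) ≠ ⊤ := ENNReal.natCast_ne_top M
  have hid := enn_id k hk M
  set QM := ∑ m ∈ Finset.range M, (g k m : ℝ≥0∞) * 2⁻¹^(m+1) with hQM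
  set DM := (g k (M+k) : ℝ≥0∞) * 2⁻¹^M with hDM
  -- Q M ≤ 2^k
  have hQle : QM ≤ 2^k := by
    rw [← hid]
    calc QM ≤ QM + DM := le_self_add
      _ ≤ QM + DM + 1 := le_self_add
  -- the svalue sequence
  set sv : ℕ → ℝ≥0∞ := fun m => (g k m : ℝ≥0∞) * 2⁻¹^m with hsv
  have hsum_sv : ∑ m ∈ Finset.range M, sv m = 2 * QM := by
    rw [hQM, Finset.mul_sum]
    apply Finset.sum_congr rfl
    intro m _
    calc sv m = (2 * 2⁻¹) * ((g k m : ℝ≥0∞) * 2⁻¹^m) := by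
          rw [two_mul_inv, one_mul]
      _ = 2 * ((g k m : ℝ≥0∞) * 2⁻¹^(m+1)) := by rw [pow_succ]; ring
  have hMsv : (M:ℝ≥0∞) * sv M ≤ 2^(k+1) := by
    have h1 : (Finset.range M).card • sv M ≤ ∑ m ∈ Finset.range M, sv m := by
      apply Finset.card_nsmul_le_sum
      intro m hm
      rw [Finset.mem_range] at hm
      exact sv_antitone k hk (le_of_lt hm)
    rw [Finset.card_range, nsmul_eq_mul] at h1
    calc (M:ℝ≥0∞) * sv M ≤ 2 * QM := h1.trans hsum_sv.le
      _ ≤ 2 * 2^k := mul_le_mul_right hQle 2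
      _ = 2^(k+1) := by rw [pow_succ]; ring
  -- D M = 2^k * sv (M+k)
  have hDM_eq : DM = 2^k * sv (M+k) := by
    rw [hDM, hsv]
    calc (g k (M+k) : ℝ≥0∞) * 2⁻¹^M
        = (g k (M+k) : ℝ≥0∞) * ((2^k * 2⁻¹^k) * 2⁻¹^M) := by
          rw [pow_cancel, one_mul]
      _ = 2^k * ((g k (M+k) : ℝ≥0∞) * 2⁻¹^(M+k)) := by rw [pow_add]; ring
  have hMD : (M:ℝ≥0∞) * DM ≤ 2^(2*k+1) := by
    calc (M:ℝ≥0∞) * DM = 2^k * ((M:ℝ≥0∞) * sv (M+k)) := by rw [hDM_eq]; ring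
      _ ≤ 2^k * ((M:ℝ≥0∞) * sv M) := by
          apply mul_le_mul_right
          exact mul_le_mul_right (sv_antitone k hk (Nat.le_add_right M k)) _
      _ ≤ 2^k * 2^(k+1) := mul_le_mul_right hMsv _
      _ = 2^(2*k+1) := by rw [← pow_add]; congr 1; omega
  have hMe : (2:ℝ≥0∞)^(2*k+1) ≤ (M:ℝ≥0∞) * ε := by
    have hnB : (1:ℝ≥0) ≤ (n:ℝ≥0) * ε := by
      have h5 : (ε⁻¹ : ℝ≥0) ≤ (n:ℝ≥0) := by
        refine le_trans (Nat.le_ceil _) ?_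
        exact_mod_cast Nat.le_succ ⌈(ε⁻¹ : ℝ≥0)⌉₊
      calc (1:ℝ≥0) = ε⁻¹ * ε := (inv_mul_cancel₀ hε.ne').symm
        _ ≤ (n:ℝ≥0) * ε := mul_le_mul_left h5 ε
    have hnB' : (1:ℝ≥0∞) ≤ (n:ℝ≥0∞) * (ε:ℝ≥0∞) := by
      have h6 := ENNReal.coe_le_coe.2 hnB
      rw [ENNReal.coe_mul, ENNReal.coe_one] at h6
      rwa [ENNReal.coe_natCast] at h6
    have hMcast : (M:ℝ≥0∞) = 2^(2*k+1) * (n:ℝ≥0∞) := by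
      rw [hM]; push_cast; ring
    calc (2:ℝ≥0∞)^(2*k+1) = 2^(2*k+1) * 1 := (mul_one _).symm
      _ ≤ 2^(2*k+1) * ((n:ℝ≥0∞) * ε) := mul_le_mul_right hnB' _
      _ = (M:ℝ≥0∞) * ε := by rw [hMcast]; ring
  have hDle : DM ≤ (ε:ℝ≥0∞) := by
    have := hMD.trans hMe
    exact (ENNReal.mul_le_mul_iff_right hM0 hMtop).1 this
  calc (2:ℝ≥0∞)^k = QM + DM + 1 := hid.symm
    _ ≤ QM + ε + 1 := add_le_add_left (add_le_add_right hDle _) 1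
    _ = (QM + 1) + ε := by ring
    _ ≤ E + ε := add_le_add_left (hQ M) _

end RC

/-- For `k ≥ 1` and every starting state `i` with `1 ≤ i ≤ k`,
the expected hitting time of the absorbing state `0` in the Random-Compass chain on
`{0, 1, …, k}` is at least `2^k`. -/
theorem statement12 (k : ℕ) (hk : 1 ≤ k) (i : ℕ) (hi : 1 ≤ i) (hik : i ≤ k)
    (μ : MeasureTheory.Measure (ℕ → ℕ))
    (h : IsMarkovChain (rcTrans k) i μ) :
    2 ^ k ≤ ∫⁻ ω, hitTimeFrom0 0 ω ∂μ := by
  obtain ⟨hprob, hcyl⟩ := h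
  exact RC.main k hk i hi hik μ hcyl
end
end
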